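/- arXiv:2603.00899 — 7 statements merged into one kernel-verified Lean document; each statement's English description precedes it below -/
import Mathlib

section
/- Let (G,i) be a rooted graph on a finite vertex set V and let k, ℓ ≥ 0 be integers. If there exists a matrix A ∈ S(G) with null(A) = k+1 and null(A(i)) = ℓ+1, then there exists a matrix A' ∈ S(G) with null(A') = k and null(A'(i)) = ℓ. (In fact A' can be taken of the form A + E_{j,j} for a suitable vertex j ≠ i, where E_{j,j} has a single nonzero entry 1 in position (j,j).) -/
open Matrix

variable {V : Type*} [Fintype V] [DecidableEq V]

/-- The nullity of a real matrix: the dimension of its kernel. -/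
noncomputable def nullity (A : Matrix V V ℝ) : ℕ :=
  Module.finrank ℝ (LinearMap.ker A.mulVecLin)

/-- `delRC A i` is the principal submatrix of `A` obtained by deleting row and column `i`. -/
def delRC (A : Matrix V V ℝ) (i : V) : Matrix {j // j ≠ i} {j // j ≠ i} ℝ :=
  A.submatrix Subtype.val Subtype.val

/-- `A ∈ S(G)`: `A` is symmetric and its off-diagonal entries are nonzero precisely at edges. -/
def InS (G : SimpleGraph V) (A : Matrix V V ℝ) : Prop :=
  A.IsSymm ∧ ∀ j k : V, j ≠ k → (A j k ≠ 0 ↔ G.Adj j k)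

/-- The i-strong nullity interlacing property. -/
def HasSNIP (A : Matrix V V ℝ) (i : V) : Prop :=
  ∀ X : Matrix V V ℝ, X.IsSymm → (∀ j k, A j k * X j k = 0) → (∀ j, X j j = 0) →
    (∀ j k, j ≠ i → (A * X) j k = 0) → X = 0

/-- The Strong Arnold Property. -/
def HasSAP (A : Matrix V V ℝ) : Prop :=
  ∀ X : Matrix V V ℝ, X.IsSymm → (∀ j k, A j k * X j k = 0) → (∀ j, X j j = 0) →
    A * X = 0 → X = 0

/-- The parameter ξξ(G,i): the maximum of k+ℓ over pairs k ≤ ℓ such that (G,i)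
allows the nullity pair (k,ℓ) with i-SNIP. -/
noncomputable def xixi (G : SimpleGraph V) (i : V) : ℕ :=
  sSup {s | ∃ k ℓ : ℕ, k ≤ ℓ ∧ s = k + ℓ ∧ ∃ A : Matrix V V ℝ,
    InS G A ∧ HasSNIP A i ∧ nullity A = k ∧ nullity (delRC A i) = ℓ}

/- Auxiliary lemmas -/

lemma stdBasis_symm {W : Type*} [DecidableEq W] (j : W) :
    (Matrix.single j j (1:ℝ))ᵀ = Matrix.single j j 1 := by
  ext a b
  simp [Matrix.single, Matrix.transpose_apply, and_comm]

variable {W : Type*} [Fintype W] [DecidableEq W]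

lemma stdBasis_mulVec (j : W) (x : W → ℝ) :
    (Matrix.single j j (1:ℝ)) *ᵥ x = fun m => if m = j then x j else 0 := by
  ext m
  simp [Matrix.mulVec, dotProduct, Matrix.single, ite_and, eq_comm]

lemma core (B : Matrix W W ℝ) (hB : B.IsSymm) (j : W) (y : W → ℝ)
    (hy : B *ᵥ y = 0) (hyj : y j ≠ 0) :
    nullity (B + Matrix.single j j 1) + 1 = nullity B := by
  classical
  set K := LinearMap.ker B.mulVecLin with hKdef
  set f : (W → ℝ) →ₗ[ℝ] ℝ := LinearMap.proj j with hfdef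
  have hyK : y ∈ K := by simp [hKdef, LinearMap.mem_ker, Matrix.mulVecLin_apply, hy]
  -- kernel of perturbed matrix
  have hker : LinearMap.ker (B + Matrix.single j j 1).mulVecLin = K ⊓ LinearMap.ker f := by
    ext x
    simp only [LinearMap.mem_ker, Matrix.mulVecLin_apply, Submodule.mem_inf, hKdef, hfdef,
      LinearMap.proj_apply]
    constructor
    · intro hx
      have hsym : (B + Matrix.single j j 1) *ᵥ y = fun m => if m = j then y j else 0 := by
        rw [Matrix.add_mulVec, hy, stdBasis_mulVec]; ext m; simp
      have hdot : y ⬝ᵥ ((B + Matrix.single j j 1) *ᵥ x)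
          = ((B + Matrix.single j j 1) *ᵥ y) ⬝ᵥ x := by
        rw [Matrix.dotProduct_mulVec]
        congr 1
        rw [← Matrix.mulVec_transpose]
        congr 1
        rw [Matrix.transpose_add, hB.eq, stdBasis_symm]
      rw [hx] at hdot
      simp only [dotProduct_zero] at hdot
      rw [hsym] at hdot
      have hxj : x j = 0 := by
        have : (0:ℝ) = y j * x j := by
          rw [hdot]
          simp [dotProduct]
        rcases mul_eq_zero.mp this.symm with h | h
        · exact absurd h hyj
        · exact h
      have hE : (Matrix.single j j (1:ℝ)) *ᵥ x = 0 := by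
        rw [stdBasis_mulVec]; ext m; simp [hxj]
      rw [Matrix.add_mulVec, hE, add_zero] at hx
      exact ⟨hx, hxj⟩
    · rintro ⟨hx1, hx2⟩
      rw [Matrix.add_mulVec, hx1, stdBasis_mulVec]
      ext m; simp [hx2]
  have hmap : K ⊓ LinearMap.ker f = Submodule.map K.subtype (LinearMap.ker (f.domRestrict K)) := by
    rw [LinearMap.ker_domRestrict, Submodule.map_comap_subtype]
  have hrange : LinearMap.range (f.domRestrict K) = ⊤ := by
    rw [LinearMap.range_eq_top]
    intro r
    refine ⟨(r / y j) • ⟨y, hyK⟩, ?_⟩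
    simp [hfdef, LinearMap.domRestrict_apply, div_mul_cancel₀, hyj]
  have hrn := LinearMap.finrank_range_add_finrank_ker (f.domRestrict K)
  rw [hrange, finrank_top] at hrn
  have : Module.finrank ℝ ℝ = 1 := Module.finrank_self ℝ
  rw [this] at hrn
  unfold nullity
  rw [hker, hmap, Submodule.finrank_map_subtype_eq, ← hKdef]
  omega

lemma sum_split (i : V) (f : V → ℝ) (hf : f i = 0) :
    ∑ n : V, f n = ∑ n : {v // v ≠ i}, f n.val := by
  rw [← Finset.sum_subtype (Finset.univ \ {i}) (fun x => by simp [eq_comm]) f]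
  rw [Finset.sum_sdiff_eq_sub (by simp)]
  simp [hf]

lemma exists_common (A : Matrix V V ℝ) (hA : A.IsSymm) (i : V)
    (hy : ∃ y : {v // v ≠ i} → ℝ, (delRC A i) *ᵥ y = 0 ∧ y ≠ 0)
    (hx : ∃ x : V → ℝ, A *ᵥ x = 0 ∧ x ≠ 0) :
    ∃ (j : V) (hj : j ≠ i), (∃ x, A *ᵥ x = 0 ∧ x j ≠ 0) ∧
      ∃ y, (delRC A i) *ᵥ y = 0 ∧ y ⟨j, hj⟩ ≠ 0 := by
  classical
  obtain ⟨y, hy0, hyne⟩ := hy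
  set Y : V → ℝ := fun v => if h : v ≠ i then y ⟨v, h⟩ else 0 with hYdef
  have hYi : Y i = 0 := by simp [hYdef]
  have hYval : ∀ (n : {v // v ≠ i}), Y n.val = y n := by
    rintro ⟨n, hn⟩; simp [hYdef, hn]
  have hAY : ∀ m : V, m ≠ i → (A *ᵥ Y) m = 0 := by
    intro m hm
    have : (A *ᵥ Y) m = ((delRC A i) *ᵥ y) ⟨m, hm⟩ := by
      show ∑ n : V, A m n * Y n = _
      rw [sum_split i _ (by simp [hYi])]
      simp only [Matrix.mulVec, dotProduct, delRC, Matrix.submatrix_apply]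
      exact Finset.sum_congr rfl fun n _ => by rw [hYval]
    rw [this, hy0]; rfl
  by_cases hc : (A *ᵥ Y) i = 0
  · -- Y is in the kernel of A
    have hAY0 : A *ᵥ Y = 0 := by
      funext m
      by_cases hm : m = i
      · rw [hm, hc]; rfl
      · rw [hAY m hm]; rfl
    obtain ⟨n, hn⟩ := Function.ne_iff.mp hyne
    refine ⟨n.val, n.prop, ⟨Y, hAY0, by rw [hYval]; simpa using hn⟩,
      ⟨y, hy0, by simpa using hn⟩⟩
  · -- every kernel vector of A vanishes at i
    have hzero : ∀ z : V → ℝ, A *ᵥ z = 0 → z i = 0 := by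
      intro z hz
      have h1 : Y ⬝ᵥ (A *ᵥ z) = (A *ᵥ Y) ⬝ᵥ z := by
        rw [Matrix.dotProduct_mulVec, ← Matrix.mulVec_transpose, hA.eq]
      rw [hz, dotProduct_zero] at h1
      have h2 : (A *ᵥ Y) ⬝ᵥ z = (A *ᵥ Y) i * z i := by
        unfold dotProduct
        rw [Finset.sum_eq_single_of_mem i (Finset.mem_univ i)]
        intro b _ hb
        rw [hAY b hb, zero_mul]
      rw [h2] at h1
      exact (mul_eq_zero.mp h1.symm).resolve_left hc
    obtain ⟨x, hx0, hxne⟩ := hx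
    have hxi : x i = 0 := hzero x hx0
    obtain ⟨j, hj⟩ := Function.ne_iff.mp hxne
    simp only [Pi.zero_apply] at hj
    have hji : j ≠ i := fun h => hj (h ▸ hxi)
    refine ⟨j, hji, ⟨x, hx0, hj⟩, ⟨fun n => x n.val, ?_, hj⟩⟩
    funext m
    show ∑ n : {v // v ≠ i}, A m.val n.val * x n.val = 0
    have hs := sum_split i (fun v => A m.val v * x v) (by simp [hxi])
    rw [← hs]
    have := congrFun hx0 m.val
    simpa [Matrix.mulVec, dotProduct] using this

lemma exists_kervec (B : Matrix V V ℝ) (h : 0 < nullity B) :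
    ∃ v, B *ᵥ v = 0 ∧ v ≠ 0 := by
  unfold nullity at h
  have := Module.finrank_pos_iff.mp h
  obtain ⟨v, hv⟩ := exists_ne (0 : LinearMap.ker B.mulVecLin)
  refine ⟨v.val, ?_, fun h0 => hv (Subtype.ext h0)⟩
  have := v.prop
  rwa [LinearMap.mem_ker, Matrix.mulVecLin_apply] at this

theorem stmt0 (G : SimpleGraph V) (i : V) (k ℓ : ℕ)
    (A : Matrix V V ℝ) (hA : InS G A)
    (h1 : nullity A = k + 1) (h2 : nullity (delRC A i) = ℓ + 1) :
    ∃ j : V, j ≠ i ∧ InS G (A + Matrix.single j j 1) ∧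
      nullity (A + Matrix.single j j 1) = k ∧
      nullity (delRC (A + Matrix.single j j 1) i) = ℓ := by
  classical
  have hx := exists_kervec A (by rw [h1]; exact Nat.succ_pos _)
  have hy := exists_kervec (delRC A i) (by rw [h2]; exact Nat.succ_pos _)
  obtain ⟨j, hj, ⟨x, hx0, hxj⟩, ⟨y, hy0, hyj⟩⟩ := exists_common A hA.1 i hy hx
  have hdel : delRC (A + Matrix.single j j 1) i
      = delRC A i + Matrix.single (⟨j, hj⟩ : {v // v ≠ i}) ⟨j, hj⟩ 1 := by
    ext a b
    simp [delRC, Matrix.single, Matrix.add_apply, Matrix.submatrix_apply,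
      Subtype.ext_iff]
  have hcore1 := core A hA.1 j x hx0 hxj
  have hcore2 := core (delRC A i) (hA.1.submatrix _) ⟨j, hj⟩ y hy0 hyj
  refine ⟨j, hj, ⟨?_, ?_⟩, by omega, by rw [hdel]; omega⟩
  · rw [Matrix.IsSymm, Matrix.transpose_add, hA.1, stdBasis_symm]
  · intro a b hab
    have hE : Matrix.single j j (1:ℝ) a b = 0 := by
      simp only [Matrix.single, Matrix.of_apply, ite_eq_right_iff, and_imp]
      rintro rfl rfl
      exact absurd rfl hab
    rw [Matrix.add_apply, hE, add_zero]
    exact hA.2 a b hab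
end

section
/- (Bifurcation Lemma) Let (G,i) be a rooted graph on a finite vertex set V and let A ∈ S(G) be a matrix with i-SNIP. Then there exists ε > 0 such that for every real symmetric V×V matrix M with |M j k − A j k| < ε for all j,k ∈ V, there exists a matrix A' ∈ S(G) with i-SNIP such that null(A') = null(M) and null(A'(i)) = null(M(i)). -/
open Matrix

variable {V : Type*} [Fintype V] [DecidableEq V]

/-! ### Auxiliary material for the proof of the Bifurcation Lemma -/

set_option linter.unusedSectionVars false

attribute [local instance] Matrix.normedAddCommGroup Matrix.normedSpace

section BifAux

/-- Matrix multiplication as a continuous bilinear map. -/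
noncomputable def mulL : Matrix V V ℝ →L[ℝ] Matrix V V ℝ →L[ℝ] Matrix V V ℝ :=
  LinearMap.toContinuousLinearMap <|
    (LinearMap.toContinuousLinearMap : (Matrix V V ℝ →ₗ[ℝ] Matrix V V ℝ) ≃ₗ[ℝ] _).toLinearMap.comp
      (LinearMap.mul ℝ (Matrix V V ℝ))

@[simp] lemma mulL_apply (A B : Matrix V V ℝ) : mulL A B = A * B := rfl

open Classical in
/-- Symmetrization followed by restriction to the pattern of `G` (edges and diagonal). -/
noncomputable def symMask (G : SimpleGraph V) : Matrix V V ℝ →ₗ[ℝ] Matrix V V ℝ where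
  toFun b := Matrix.of fun j k => if j = k ∨ G.Adj j k then (b j k + b k j)/2 else 0
  map_add' b c := by ext j k; simp only [Matrix.of_apply, Matrix.add_apply]; split <;> ring
  map_smul' r b := by
    ext j k
    simp only [Matrix.of_apply, Matrix.smul_apply, RingHom.id_apply, smul_eq_mul]
    split
    · ring
    · ring

open Classical in
/-- Zeroing out the off-diagonal entries of row `i`. -/
noncomputable def zMask (i : V) : Matrix V V ℝ →ₗ[ℝ] Matrix V V ℝ where
  toFun z := Matrix.of fun p q => if p = i ∧ q ≠ i then 0 else z p q
  map_add' b c := by ext p q; simp only [Matrix.of_apply, Matrix.add_apply]; split <;> simp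
  map_smul' r b := by
    ext p q
    simp only [Matrix.of_apply, Matrix.smul_apply, RingHom.id_apply, smul_eq_mul]
    split
    · simp
    · rfl

def transposeL : Matrix V V ℝ →ₗ[ℝ] Matrix V V ℝ where
  toFun := Matrix.transpose
  map_add' := Matrix.transpose_add
  map_smul' r b := Matrix.transpose_smul r b

@[simp] lemma symMask_zero (G : SimpleGraph V) : symMask G 0 = 0 := map_zero _
@[simp] lemma zMask_zero (i : V) : zMask i 0 = 0 := map_zero _

lemma symMask_isSymm (G : SimpleGraph V) (b : Matrix V V ℝ) : (symMask G b).IsSymm := by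
  classical
  rw [Matrix.IsSymm]
  ext j k
  simp only [Matrix.transpose_apply, symMask, LinearMap.coe_mk, AddHom.coe_mk, Matrix.of_apply]
  by_cases h : j = k ∨ G.Adj j k
  · have h' : k = j ∨ G.Adj k j := by
      rcases h with h | h
      · exact Or.inl h.symm
      · exact Or.inr h.symm
    rw [if_pos h, if_pos h', add_comm]
  · have h' : ¬(k = j ∨ G.Adj k j) := by
      rintro (rfl | hadj)
      · exact h (Or.inl rfl)
      · exact h (Or.inr hadj.symm)
    rw [if_neg h, if_neg h']

lemma symMask_apply_not_adj (G : SimpleGraph V) (b : Matrix V V ℝ) {j k : V}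
    (hjk : j ≠ k) (hadj : ¬ G.Adj j k) : symMask G b j k = 0 := by
  classical
  simp only [symMask, LinearMap.coe_mk, AddHom.coe_mk, Matrix.of_apply]
  rw [if_neg]
  rintro (h | h)
  · exact hjk h
  · exact hadj h

lemma zMask_apply_row (i : V) (z : Matrix V V ℝ) {q : V} (hq : q ≠ i) :
    zMask i z i q = 0 := by
  classical
  simp only [zMask, LinearMap.coe_mk, AddHom.coe_mk, Matrix.of_apply]
  simp [hq]

/-! #### Nullity under congruence -/

lemma nullity_conj (U A : Matrix V V ℝ) (hU : IsUnit U.det) :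
    nullity (Uᵀ * (A * U)) = nullity A := by
  haveI := U.invertibleOfIsUnitDet hU
  haveI : Invertible Uᵀ := U.invertibleTranspose
  have h1 : (Uᵀ * (A * U)).mulVecLin
      = (Uᵀ).mulVecLin.comp (A.mulVecLin.comp U.mulVecLin) := by
    rw [Matrix.mulVecLin_mul, Matrix.mulVecLin_mul]
  have h2 : LinearMap.ker (Uᵀ * (A * U)).mulVecLin
      = LinearMap.ker (A.mulVecLin.comp U.mulVecLin) := by
    rw [h1]
    exact LinearMap.ker_comp_of_ker_eq_bot _
      (LinearMap.ker_eq_bot.mpr (Uᵀ.mulVec_injective_of_invertible))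
  have h3 : LinearMap.ker (A.mulVecLin.comp U.mulVecLin)
      = Submodule.comap U.mulVecLin (LinearMap.ker A.mulVecLin) := LinearMap.ker_comp _ _
  let e : ((V → ℝ) ≃ₗ[ℝ] (V → ℝ)) := U.toLinearEquiv' (by infer_instance)
  have he : (e : (V → ℝ) →ₗ[ℝ] (V → ℝ)) = U.mulVecLin := by
    ext x j
    simp [e, Matrix.toLinearEquiv'_apply]
  have h4 : Submodule.comap U.mulVecLin (LinearMap.ker A.mulVecLin)
      = Submodule.map (e.symm : (V → ℝ) →ₗ[ℝ] (V → ℝ)) (LinearMap.ker A.mulVecLin) := by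
    rw [← he, Submodule.comap_equiv_eq_map_symm]
  rw [nullity, nullity, h2, h3, h4]
  exact LinearEquiv.finrank_map_eq e.symm _

lemma sum_split_s1 (i : V) (f : V → ℝ) :
    ∑ a, f a = f i + ∑ a : {j // j ≠ i}, f a.val := by
  have h : ∑ a ∈ Finset.univ.erase i, f a = ∑ a : {j // j ≠ i}, f a.val := by
    exact Finset.sum_subtype (Finset.univ.erase i) (by simp) f
  rw [← h, Finset.add_sum_erase _ f (Finset.mem_univ i)]

lemma delRC_conj (U A' : Matrix V V ℝ) (i : V) (hU : ∀ q, q ≠ i → U i q = 0) :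
    delRC (Uᵀ * (A' * U)) i = (delRC U i)ᵀ * (delRC A' i * delRC U i) := by
  ext p q
  simp only [delRC, Matrix.submatrix_apply, Matrix.mul_apply, Matrix.transpose_apply]
  rw [sum_split_s1 i]
  rw [hU p.val p.prop, zero_mul, zero_add]
  refine Finset.sum_congr rfl fun a _ => ?_
  congr 1
  rw [sum_split_s1 i]
  rw [hU q.val q.prop, mul_zero, zero_add]

/-! #### Surjectivity from a pairing condition -/

noncomputable abbrev DD (V : Type*) [Fintype V] :=
  Matrix V V ℝ × Matrix V V ℝ × Matrix V V ℝ

noncomputable def toEuc : Matrix V V ℝ ≃ₗ[ℝ] EuclideanSpace ℝ (V × V) :=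
  ((LinearEquiv.curry ℝ ℝ V V).symm.trans
    (WithLp.linearEquiv 2 ℝ ((V × V) → ℝ)).symm :
      (V → V → ℝ) ≃ₗ[ℝ] EuclideanSpace ℝ (V × V))

@[simp] lemma toEuc_apply (B : Matrix V V ℝ) (pq : V × V) : toEuc B pq = B pq.1 pq.2 := rfl
@[simp] lemma toEuc_symm_apply (x : EuclideanSpace ℝ (V × V)) (p q : V) :
    toEuc.symm x p q = x (p, q) := rfl

lemma surj_of_pairing (T : DD V →ₗ[ℝ] Matrix V V ℝ)
    (h : ∀ X : Matrix V V ℝ, (∀ d, ∑ p, ∑ q, T d p q * X p q = 0) → X = 0) :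
    Function.Surjective T := by
  set T' : DD V →ₗ[ℝ] EuclideanSpace ℝ (V × V) := (toEuc.toLinearMap).comp T with hT'
  have hbot : (LinearMap.range T')ᗮ = ⊥ := by
    rw [Submodule.eq_bot_iff]
    intro X' hX'
    have hX : toEuc.symm X' = 0 := by
      refine h (toEuc.symm X') fun d => ?_
      have h0 := (Submodule.mem_orthogonal _ _).mp hX' (T' d) (LinearMap.mem_range_self _ d)
      rw [real_inner_comm, PiLp.inner_apply] at h0
      simp only [RCLike.inner_apply, conj_trivial] at h0
      rw [Fintype.sum_prod_type] at h0
      simpa [hT', mul_comm] using h0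
    have : X' = 0 := by
      have := congrArg (toEuc (V := V)) hX
      simpa using this
    simp [this]
  have htop : LinearMap.range T' = ⊤ := by
    rwa [Submodule.orthogonal_eq_bot_iff] at hbot
  intro Y
  obtain ⟨d, hd⟩ := LinearMap.range_eq_top.mp htop (toEuc Y)
  exact ⟨d, by simpa [hT'] using congrArg (toEuc (V := V)).symm hd⟩

/-! #### The strong property as an open condition -/

section snip
variable (G : SimpleGraph V) (i : V)

def Xspace : Submodule ℝ (Matrix V V ℝ) where
  carrier := {X | X.IsSymm ∧ ∀ p q, (p = q ∨ G.Adj p q) → X p q = 0}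
  add_mem' := by
    rintro X Y ⟨hX1, hX2⟩ ⟨hY1, hY2⟩
    refine ⟨Matrix.IsSymm.add hX1 hY1, fun p q h => ?_⟩
    simp [Matrix.add_apply, hX2 p q h, hY2 p q h]
  zero_mem' := ⟨Matrix.isSymm_zero, by simp⟩
  smul_mem' := by
    rintro r X ⟨hX1, hX2⟩
    refine ⟨by simp [Matrix.IsSymm, Matrix.transpose_smul, hX1.eq], fun p q h => ?_⟩
    simp [Matrix.smul_apply, hX2 p q h]

def SNIPc (C : Matrix V V ℝ) : Prop :=
  ∀ X : Matrix V V ℝ, X.IsSymm → (∀ p q, (p = q ∨ G.Adj p q) → X p q = 0) →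
    (∀ p q, p ≠ i → (C * X) p q = 0) → X = 0

noncomputable def phiC (C : Matrix V V ℝ) : Xspace G →ₗ[ℝ] Matrix V V ℝ where
  toFun X := Matrix.of fun p q => if p = i then 0 else (C * X.val) p q
  map_add' X Y := by
    ext p q
    simp only [Matrix.of_apply, Submodule.coe_add, Matrix.mul_add, Matrix.add_apply]
    split <;> simp
  map_smul' r X := by
    ext p q
    simp only [Matrix.of_apply, SetLike.val_smul, Matrix.mul_smul, Matrix.smul_apply,
      RingHom.id_apply, smul_eq_mul]
    split <;> simp

lemma snipc_iff_inj (C : Matrix V V ℝ) :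
    SNIPc G i C ↔ Function.Injective (phiC G i C) := by
  constructor
  · intro hs
    rw [← LinearMap.ker_eq_bot, LinearMap.ker_eq_bot']
    rintro ⟨X, hX1, hX2⟩ hX0
    have hrows : ∀ p q, p ≠ i → (C * X) p q = 0 := by
      intro p q hp
      have := congrFun (congrFun (congrArg Matrix.of.symm hX0) p) q
      simpa [phiC, if_neg hp] using this
    have := hs X hX1 hX2 hrows
    exact Subtype.ext this
  · intro hinj X hX1 hX2 hrows
    have h0 : phiC G i C ⟨X, hX1, hX2⟩ = 0 := by
      ext p q
      by_cases hp : p = i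
      · simp [phiC, hp]
      · simp [phiC, if_neg hp, hrows p q hp]
    have := hinj (a₂ := 0) (by simpa using h0)
    simpa using congrArg Subtype.val this

lemma isOpen_snipc : IsOpen {C : Matrix V V ℝ | SNIPc G i C} := by
  classical
  set m := Module.finrank ℝ (Xspace G)
  let b : Module.Basis (Fin m) ℝ (Xspace G) := Module.finBasis ℝ (Xspace G)
  have hiff : ∀ C : Matrix V V ℝ,
      Function.Injective (phiC G i C) ↔ LinearIndependent ℝ (fun j => phiC G i C (b j)) := by
    intro C
    constructor
    · intro hinj
      have := b.linearIndependent.map' (phiC G i C) (LinearMap.ker_eq_bot.mpr hinj)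
      exact this
    · intro hli
      rw [← LinearMap.ker_eq_bot, LinearMap.ker_eq_bot']
      intro x hx0
      have hrep := b.linearCombination_repr x
      have happ : Finsupp.linearCombination ℝ (fun j => phiC G i C (b j)) (b.repr x) = 0 := by
        have := congrArg (phiC G i C) hrep
        rw [hx0] at this
        rw [← this, Finsupp.apply_linearCombination]
        rfl
      have hz := linearIndependent_iff.mp hli (b.repr x) happ
      rw [← hrep, hz, map_zero]
  let Phi : Matrix V V ℝ →ₗ[ℝ] (Fin m → Matrix V V ℝ) :=
    LinearMap.pi fun j =>
      { toFun := fun C => Matrix.of fun p q => if p = i then 0 else (C * (b j).val) p q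
        map_add' := by
          intro C C'; ext p q
          simp only [Matrix.of_apply, Matrix.add_mul, Matrix.add_apply]
          split <;> simp
        map_smul' := by
          intro r C; ext p q
          simp only [Matrix.of_apply, Matrix.smul_mul, Matrix.smul_apply, RingHom.id_apply,
            smul_eq_mul]
          split <;> simp }
  have hPhicont : Continuous Phi := Phi.continuous_of_finiteDimensional
  have hset : {C : Matrix V V ℝ | SNIPc G i C}
      = Phi ⁻¹' {g : Fin m → Matrix V V ℝ | LinearIndependent ℝ g} := by
    ext C
    simp only [Set.mem_setOf_eq, Set.mem_preimage, snipc_iff_inj G i C, hiff C]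
    rfl
  rw [hset]
  exact isOpen_setOf_linearIndependent.preimage hPhicont

end snip

/-! #### Sums against standard basis matrices -/

lemma sum2_std (X : Matrix V V ℝ) (a b : V) :
    (∑ p, ∑ q, (Matrix.single a b (1:ℝ)) p q * X p q) = X a b := by
  simp [Matrix.single, Matrix.of_apply, ite_and, ite_mul]

lemma std_mul_apply (a b : V) (A : Matrix V V ℝ) (j k : V) :
    (Matrix.single a b (1:ℝ) * A) j k = if j = a then A b k else 0 := by
  rw [Matrix.mul_apply]
  by_cases hj : j = a
  · subst hj
    rw [Finset.sum_eq_single b]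
    · simp [Matrix.single]
    · intro c _ hc; simp [Matrix.single, hc.symm]
    · simp
  · rw [if_neg hj]
    refine Finset.sum_eq_zero fun c _ => ?_
    simp only [Matrix.single, Matrix.of_apply, ite_mul, one_mul, zero_mul,
      ite_eq_right_iff, and_imp]
    intro h; exact absurd h.symm hj

lemma mul_std_apply (A : Matrix V V ℝ) (a b : V) (j k : V) :
    (A * Matrix.single a b (1:ℝ)) j k = if k = b then A j a else 0 := by
  rw [Matrix.mul_apply]
  by_cases hk : k = b
  · subst hk
    rw [Finset.sum_eq_single a]
    · simp [Matrix.single]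
    · intro c _ hc; simp [Matrix.single, hc.symm]
    · simp
  · rw [if_neg hk]
    refine Finset.sum_eq_zero fun c _ => ?_
    simp only [Matrix.single, Matrix.of_apply, mul_ite, mul_one, mul_zero,
      ite_eq_right_iff, and_imp]
    intro _ h; exact absurd h.symm hk

lemma sum2_mul_left (A X : Matrix V V ℝ) (a b : V) :
    (∑ j, ∑ k, (Matrix.single a b (1:ℝ) * A) j k * X j k) = ∑ k, A b k * X a k := by
  rw [Finset.sum_eq_single a]
  · exact Finset.sum_congr rfl fun k _ => by rw [std_mul_apply, if_pos rfl]
  · intro c _ hc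
    exact Finset.sum_eq_zero fun k _ => by rw [std_mul_apply, if_neg hc, zero_mul]
  · simp

lemma sum2_mul_right (A X : Matrix V V ℝ) (a b : V) :
    (∑ j, ∑ k, (A * Matrix.single a b (1:ℝ)) j k * X j k) = ∑ j, A j a * X j b := by
  rw [Finset.sum_comm]
  rw [Finset.sum_eq_single b]
  · exact Finset.sum_congr rfl fun j _ => by rw [mul_std_apply, if_pos rfl]
  · intro c _ hc
    exact Finset.sum_eq_zero fun j _ => by rw [mul_std_apply, if_neg hc, zero_mul]
  · simp

lemma sum2_add (Y Z X : Matrix V V ℝ) :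
    (∑ p, ∑ q, (Y + Z) p q * X p q)
      = (∑ p, ∑ q, Y p q * X p q) + ∑ p, ∑ q, Z p q * X p q := by
  simp [Matrix.add_apply, add_mul, Finset.sum_add_distrib]

lemma sum2_sub (Y Z X : Matrix V V ℝ) :
    (∑ p, ∑ q, (Y - Z) p q * X p q)
      = (∑ p, ∑ q, Y p q * X p q) - ∑ p, ∑ q, Z p q * X p q := by
  simp [Matrix.sub_apply, sub_mul, Finset.sum_sub_distrib]

lemma symMask_std_diag (G : SimpleGraph V) (a : V) :
    symMask G (Matrix.single a a (1:ℝ)) = Matrix.single a a 1 := by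
  classical
  ext j k
  simp only [symMask, LinearMap.coe_mk, AddHom.coe_mk, Matrix.of_apply, Matrix.single]
  by_cases hj : a = j <;> by_cases hk : a = k
  · subst hj; subst hk; simp
  · subst hj; simp only [hk, and_false, if_false]
    split <;> simp [hk, fun h : a = k => hk h]
  · subst hk; simp only [hj, false_and, if_false]
    split <;> simp [hj]
  · simp only [hj, false_and, if_false]
    split <;> simp [hj, hk]

lemma symMask_std_edge (G : SimpleGraph V) {a b : V} (hab : G.Adj a b) :
    symMask G (Matrix.single a b (1:ℝ) + Matrix.single b a 1)
      = Matrix.single a b 1 + Matrix.single b a 1 := by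
  classical
  have hne : a ≠ b := hab.ne
  ext j k
  simp only [symMask, LinearMap.coe_mk, AddHom.coe_mk, Matrix.of_apply, Matrix.single,
    Matrix.add_apply]
  by_cases h1 : a = j ∧ b = k
  · obtain ⟨rfl, rfl⟩ := h1
    rw [if_pos (Or.inr hab)]
    simp [hne, hne.symm]
  · by_cases h2 : b = j ∧ a = k
    · obtain ⟨rfl, rfl⟩ := h2
      rw [if_pos (Or.inr hab.symm)]
      simp [hne, hne.symm]
    · rw [if_neg h1, if_neg h2]
      split
      · rw [if_neg (fun h : a = k ∧ b = j => h2 ⟨h.2, h.1⟩),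
          if_neg (fun h : b = k ∧ a = j => h1 ⟨h.2, h.1⟩)]
        simp
      · simp

lemma zMask_std (i : V) {p q : V} (h : ¬(p = i ∧ q ≠ i)) :
    zMask i (Matrix.single p q (1:ℝ)) = Matrix.single p q 1 := by
  classical
  ext j k
  simp only [zMask, LinearMap.coe_mk, AddHom.coe_mk, Matrix.of_apply, Matrix.single]
  split
  · rename_i hc
    rw [if_neg]
    rintro ⟨rfl, rfl⟩
    exact h hc
  · rfl

lemma transpose_std (a b : V) : (Matrix.single a b (1:ℝ))ᵀ = Matrix.single b a 1 := by
  ext j k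
  simp only [Matrix.transpose_apply, Matrix.single, Matrix.of_apply]
  simp [and_comm]

/-! #### The perturbation map and its derivative -/

section main
variable (G : SimpleGraph V) (i : V) (A : Matrix V V ℝ)

noncomputable def FF : DD V → Matrix V V ℝ := fun d =>
  (1 + zMask i d.2.1)ᵀ * ((A + symMask G d.1) * (1 + zMask i d.2.1)) + (d.2.2 - d.2.2ᵀ)

noncomputable def c1 : DD V →L[ℝ] Matrix V V ℝ :=
  (LinearMap.toContinuousLinearMap (symMask G)).comp (ContinuousLinearMap.fst ℝ _ _)

noncomputable def c2 : DD V →L[ℝ] Matrix V V ℝ :=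
  (LinearMap.toContinuousLinearMap (zMask i)).comp
    ((ContinuousLinearMap.fst ℝ _ _).comp (ContinuousLinearMap.snd ℝ _ _))

noncomputable def c3 : DD V →L[ℝ] Matrix V V ℝ :=
  (LinearMap.toContinuousLinearMap (LinearMap.id - transposeL)).comp
    ((ContinuousLinearMap.snd ℝ _ _).comp (ContinuousLinearMap.snd ℝ _ _))

noncomputable def trL : Matrix V V ℝ →L[ℝ] Matrix V V ℝ :=
  LinearMap.toContinuousLinearMap transposeL

@[simp] lemma c1_apply (d : DD V) : c1 G d = symMask G d.1 := rfl
@[simp] lemma c2_apply (d : DD V) : c2 i d = zMask i d.2.1 := rfl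
@[simp] lemma c3_apply (d : DD V) : c3 d = d.2.2 - d.2.2ᵀ := rfl
@[simp] lemma trL_apply (B : Matrix V V ℝ) : trL B = Bᵀ := rfl

set_option maxHeartbeats 2000000 in
lemma hasDeriv_FF : ∃ L' : DD V →L[ℝ] Matrix V V ℝ,
    HasStrictFDerivAt (FF G i A) L' 0 ∧
    ∀ d : DD V, L' d =
      symMask G d.1 + ((zMask i d.2.1)ᵀ * A + A * zMask i d.2.1) + (d.2.2 - d.2.2ᵀ) := by
  have hf1 : HasStrictFDerivAt (fun d : DD V => A + symMask G d.1) (c1 G) 0 :=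
    (c1 G).hasStrictFDerivAt.const_add A
  have hf2 : HasStrictFDerivAt (fun d : DD V => (1 : Matrix V V ℝ) + zMask i d.2.1) (c2 i) 0 :=
    (c2 i).hasStrictFDerivAt.const_add 1
  have hf2t : HasStrictFDerivAt (fun d : DD V => ((1 : Matrix V V ℝ) + zMask i d.2.1)ᵀ)
      (trL.comp (c2 i)) 0 :=
    (trL.hasStrictFDerivAt).comp 0 hf2
  have hmul1 := mulL.hasStrictFDerivAt_of_bilinear hf1 hf2
  have hmul2 := mulL.hasStrictFDerivAt_of_bilinear hf2t hmul1
  have hskew : HasStrictFDerivAt (fun d : DD V => d.2.2 - d.2.2ᵀ) c3 0 := by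
    have h := (c3 (V := V)).hasStrictFDerivAt (x := (0 : DD V))
    have he : ⇑(c3 (V := V)) = fun d : DD V => d.2.2 - d.2.2ᵀ := funext fun d => c3_apply d
    rwa [he] at h
  refine ⟨_, hmul2.add hskew, fun d => ?_⟩
  change ((1 : Matrix V V ℝ) + zMask i (0 : DD V).2.1)ᵀ * ((A + symMask G (0 : DD V).1) * zMask i d.2.1
      + symMask G d.1 * (1 + zMask i (0 : DD V).2.1)) + (zMask i d.2.1)ᵀ * ((A + symMask G (0 : DD V).1)
      * (1 + zMask i (0 : DD V).2.1)) + (d.2.2 - d.2.2ᵀ) = _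
  simp only [ContinuousLinearMap.add_apply, ContinuousLinearMap.precompR_apply,
    ContinuousLinearMap.precompL_apply, ContinuousLinearMap.coe_comp', Function.comp_apply,
    mulL_apply, c1_apply, c2_apply, c3_apply, trL_apply, Prod.fst_zero, Prod.snd_zero,
    symMask_zero, zMask_zero, ContinuousLinearMap.compL_apply, ContinuousLinearMap.comp_apply,
    add_zero, zero_add, Matrix.transpose_one, one_mul, mul_one]
  abel

end main

end BifAux

theorem stmt1 (G : SimpleGraph V) (i : V) (A : Matrix V V ℝ)
    (hA : InS G A) (hsnip : HasSNIP A i) :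
    ∃ ε > (0 : ℝ), ∀ M : Matrix V V ℝ, M.IsSymm →
      (∀ j k, |M j k - A j k| < ε) →
      ∃ A' : Matrix V V ℝ, InS G A' ∧ HasSNIP A' i ∧
        nullity A' = nullity M ∧ nullity (delRC A' i) = nullity (delRC M i) := by
  classical
  have hApat : ∀ p q : V, p ≠ q → ¬ G.Adj p q → A p q = 0 := by
    intro p q hpq hadj
    by_contra h
    exact hadj ((hA.2 p q hpq).mp h)
  -- the derivative of the perturbation map
  obtain ⟨L', hL'deriv, hL'eval⟩ := hasDeriv_FF G i A
  -- the derivative is surjective, thanks to SNIP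
  have hsurj : Function.Surjective ⇑L' := by
    have key := surj_of_pairing (L' : DD V →ₗ[ℝ] Matrix V V ℝ) ?_
    · exact key
    intro X hX
    have hXpair : ∀ d : DD V, (∑ p, ∑ q,
        (symMask G d.1 + ((zMask i d.2.1)ᵀ * A + A * zMask i d.2.1) + (d.2.2 - d.2.2ᵀ)) p q
          * X p q) = 0 := by
      intro d
      have hh := hX d
      rwa [show ((L' : DD V →ₗ[ℝ] Matrix V V ℝ) d : Matrix V V ℝ) = L' d from rfl,
        hL'eval d] at hh
    -- X is symmetric
    have hsymX : X.IsSymm := by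
      rw [Matrix.IsSymm]
      ext a b
      rw [Matrix.transpose_apply]
      have h := hXpair (0, 0, Matrix.single b a 1)
      simp only [map_zero, Matrix.transpose_zero, Matrix.zero_mul, Matrix.mul_zero,
        add_zero, zero_add] at h
      rw [transpose_std, sum2_sub, sum2_std, sum2_std] at h
      linarith
    have hsymX' : ∀ a b, X b a = X a b := by
      intro a b
      have := congrFun (congrFun hsymX a) b
      rwa [Matrix.transpose_apply] at this
    -- X vanishes on the diagonal
    have hdiagX : ∀ a, X a a = 0 := by
      intro a
      have h := hXpair (Matrix.single a a 1, 0, 0)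
      simp only [map_zero, Matrix.transpose_zero, Matrix.zero_mul, Matrix.mul_zero,
        add_zero, zero_add, sub_zero] at h
      rwa [symMask_std_diag, sum2_std] at h
    -- X vanishes on edges
    have hedgeX : ∀ a b, G.Adj a b → X a b = 0 := by
      intro a b hab
      have h := hXpair (Matrix.single a b 1 + Matrix.single b a 1, 0, 0)
      simp only [map_zero, Matrix.transpose_zero, Matrix.zero_mul, Matrix.mul_zero,
        add_zero, zero_add, sub_zero] at h
      rw [symMask_std_edge G hab, sum2_add, sum2_std, sum2_std, hsymX' a b] at h
      linarith
    -- the row condition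
    have hrowsX : ∀ p q, ¬(p = i ∧ q ≠ i) → (A * X) p q = 0 := by
      intro p q hcond
      have h := hXpair (0, Matrix.single p q 1, 0)
      simp only [map_zero, Matrix.transpose_zero, Matrix.zero_mul, Matrix.mul_zero,
        add_zero, zero_add, sub_zero, sub_self] at h
      rw [zMask_std i hcond, transpose_std, sum2_add, sum2_mul_left, sum2_mul_right] at h
      have e1 : (∑ k, A p k * X q k) = (A * X) p q := by
        rw [Matrix.mul_apply]
        exact Finset.sum_congr rfl fun k _ => by rw [hsymX' q k]
      have e2 : (∑ j, A j p * X j q) = (A * X) p q := by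
        rw [Matrix.mul_apply]
        refine Finset.sum_congr rfl fun j _ => ?_
        have hAs : A j p = A p j := by
          have := congrFun (congrFun hA.1 p) j
          rwa [Matrix.transpose_apply] at this
        rw [hAs]
      rw [e1, e2] at h
      linarith
    refine hsnip X hsymX (fun j k => ?_) hdiagX (fun j k hj => hrowsX j k (fun hc => hj hc.1))
    by_cases hjk : j = k
    · subst hjk; rw [hdiagX j, mul_zero]
    · by_cases hadj : G.Adj j k
      · rw [hedgeX j k hadj, mul_zero]
      · rw [hApat j k hjk hadj, zero_mul]
  have hrange : LinearMap.range (L' : DD V →ₗ[ℝ] Matrix V V ℝ) = ⊤ := (LinearMap.range_eq_top (f := (L' : DD V →ₗ[ℝ] Matrix V V ℝ))).mpr hsurj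
  have hmap := hL'deriv.map_nhds_eq_of_surj hrange
  have hF0 : FF G i A 0 = A := by simp [FF]
  -- the open set of good parameters
  have hsnipcA : SNIPc G i A := by
    intro X hX1 hvan hrows
    refine hsnip X hX1 (fun j k => ?_) (fun j => hvan j j (Or.inl rfl))
      (fun j k hj => hrows j k hj)
    by_cases hjk : j = k
    · rw [hvan j k (Or.inl hjk), mul_zero]
    · by_cases hadj : G.Adj j k
      · rw [hvan j k (Or.inr hadj), mul_zero]
      · rw [hApat j k hjk hadj, zero_mul]
  set O : Set (DD V) :=
    ((fun d : DD V => A + symMask G d.1) ⁻¹'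
        ({C : Matrix V V ℝ | ∀ p q, G.Adj p q → C p q ≠ 0} ∩ {C | SNIPc G i C})) ∩
      ((fun d : DD V => (1 : Matrix V V ℝ) + zMask i d.2.1) ⁻¹'
        ({U : Matrix V V ℝ | U.det ≠ 0} ∩ {U | (delRC U i).det ≠ 0})) with hOdef
  have hg1 : Continuous (fun d : DD V => A + symMask G d.1) :=
    continuous_const.add (c1 G).continuous
  have hg2 : Continuous (fun d : DD V => (1 : Matrix V V ℝ) + zMask i d.2.1) :=
    continuous_const.add (c2 i).continuous
  have hopen1 : IsOpen {C : Matrix V V ℝ | ∀ p q, G.Adj p q → C p q ≠ 0} := by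
    have hrw : {C : Matrix V V ℝ | ∀ p q, G.Adj p q → C p q ≠ 0}
        = ⋂ p, ⋂ q, {C : Matrix V V ℝ | G.Adj p q → C p q ≠ 0} := by
      ext C; simp [Set.mem_iInter]
    rw [hrw]
    refine isOpen_iInter_of_finite fun p => isOpen_iInter_of_finite fun q => ?_
    by_cases hadj : G.Adj p q
    · have hrw2 : {C : Matrix V V ℝ | G.Adj p q → C p q ≠ 0}
          = (fun C : Matrix V V ℝ => C p q) ⁻¹' {x : ℝ | x ≠ 0} := by
        ext C; simp [hadj]
      rw [hrw2]
      exact isOpen_ne.preimage ((continuous_apply q).comp (continuous_apply p))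
    · have hrw2 : {C : Matrix V V ℝ | G.Adj p q → C p q ≠ 0} = Set.univ := by
        ext C; simp [hadj]
      rw [hrw2]
      exact isOpen_univ
  have hopen3 : IsOpen {U : Matrix V V ℝ | U.det ≠ 0} :=
    isOpen_ne.preimage (continuous_id.matrix_det)
  have hopen4 : IsOpen {U : Matrix V V ℝ | (delRC U i).det ≠ 0} :=
    isOpen_ne.preimage ((continuous_id.matrix_submatrix Subtype.val Subtype.val).matrix_det)
  have hOopen : IsOpen O :=
    (((hopen1.inter (isOpen_snipc G i)).preimage hg1)).inter
      (((hopen3.inter hopen4)).preimage hg2)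
  have hO0 : (0 : DD V) ∈ O := by
    refine ⟨⟨?_, ?_⟩, ?_, ?_⟩
    · intro p q hadj
      simp only [Prod.fst_zero, symMask_zero, add_zero]
      exact (hA.2 p q hadj.ne).mpr hadj
    · show SNIPc G i (A + symMask G (0 : DD V).1)
      simpa using hsnipcA
    · show ((1 : Matrix V V ℝ) + zMask i (0 : DD V).2.1).det ≠ 0
      simp
    · show (delRC ((1 : Matrix V V ℝ) + zMask i (0 : DD V).2.1) i).det ≠ 0
      have : delRC ((1 : Matrix V V ℝ) + zMask i (0 : DD V).2.1) i = 1 := by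
        simp only [Prod.snd_zero, Prod.fst_zero, zMask_zero, add_zero]
        exact Matrix.submatrix_one Subtype.val Subtype.val_injective
      rw [this]
      simp
  -- obtain the ball
  have himg : FF G i A '' O ∈ nhds A := by
    have := Filter.image_mem_map (f := nhds (0 : DD V)) (m := FF G i A) (hOopen.mem_nhds hO0)
    have h2 := Eq.mp (congrArg (fun F => FF G i A '' O ∈ F) hmap) this
    rw [hF0] at h2
    exact h2
  obtain ⟨ε₀, hε₀, hball⟩ := Metric.mem_nhds_iff.mp himg
  refine ⟨ε₀/2, by positivity, fun M hMsym hMclose => ?_⟩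
  have hMball : M ∈ Metric.ball A ε₀ := by
    rw [Metric.mem_ball, dist_eq_norm]
    have hle : ‖M - A‖ ≤ ε₀/2 := by
      refine (Matrix.norm_le_iff (by positivity)).mpr fun p q => ?_
      rw [Matrix.sub_apply, Real.norm_eq_abs]
      exact le_of_lt (hMclose p q)
    linarith
  obtain ⟨d, hdO, hdF⟩ := hball hMball
  obtain ⟨⟨hO1, hO2⟩, hO3, hO4⟩ := hdO
  set B : Matrix V V ℝ := symMask G d.1 with hB
  set Z : Matrix V V ℝ := zMask i d.2.1 with hZ
  set A' : Matrix V V ℝ := A + B with hA'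
  set U : Matrix V V ℝ := (1 : Matrix V V ℝ) + Z with hU
  have hFd : Uᵀ * (A' * U) + (d.2.2 - d.2.2ᵀ) = M := hdF
  -- symmetry facts
  have hA'sym : A'.IsSymm := Matrix.IsSymm.add hA.1 (symMask_isSymm G d.1)
  have hUAUsym : (Uᵀ * (A' * U))ᵀ = Uᵀ * (A' * U) := by
    rw [Matrix.transpose_mul, Matrix.transpose_mul, Matrix.transpose_transpose, hA'sym.eq,
      ← Matrix.mul_assoc]
  -- the skew part vanishes
  have hskew0 : d.2.2 - d.2.2ᵀ = (0 : Matrix V V ℝ) := by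
    have h1 : d.2.2 - d.2.2ᵀ = M - Uᵀ * (A' * U) := eq_sub_of_add_eq' hFd
    have h2 : (d.2.2 - d.2.2ᵀ)ᵀ = -(d.2.2 - d.2.2ᵀ) := by
      rw [Matrix.transpose_sub, Matrix.transpose_transpose, neg_sub]
    have h3 : (d.2.2 - d.2.2ᵀ)ᵀ = d.2.2 - d.2.2ᵀ := by
      rw [h1, Matrix.transpose_sub, hMsym.eq, hUAUsym]
    have h4 : d.2.2 - d.2.2ᵀ = -(d.2.2 - d.2.2ᵀ) := h3.symm.trans h2
    have h5 : (2:ℝ) • (d.2.2 - d.2.2ᵀ) = 0 := by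
      rw [two_smul]
      nth_rewrite 2 [h4]
      exact add_neg_cancel _
    have := smul_eq_zero.mp h5
    rcases this with h | h
    · norm_num at h
    · exact h
  have hM : M = Uᵀ * (A' * U) := by
    rw [← hFd, hskew0, add_zero]
  -- U has the right row structure
  have hUrow : ∀ q, q ≠ i → U i q = 0 := by
    intro q hq
    rw [hU, Matrix.add_apply, Matrix.one_apply_ne (fun h : i = q => hq h.symm),
      hZ, zMask_apply_row i _ hq, add_zero]
  -- A' is in S(G)
  have hInS : InS G A' := by
    refine ⟨hA'sym, fun j k hjk => ⟨fun hne => ?_, fun hadj => hO1 j k hadj⟩⟩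
    by_contra hadj
    apply hne
    rw [hA', Matrix.add_apply, hApat j k hjk hadj, hB, symMask_apply_not_adj G d.1 hjk hadj,
      add_zero]
  -- A' has SNIP
  have hsnip' : HasSNIP A' i := by
    intro X hX1 hprod hdiag hrows
    refine hO2 X hX1 (fun p q hpq => ?_) hrows
    rcases hpq with h | hadj
    · subst h; exact hdiag p
    · have hA'ne : A' p q ≠ 0 := hO1 p q hadj
      exact (mul_eq_zero.mp (hprod p q)).resolve_left hA'ne
  refine ⟨A', hInS, hsnip', ?_, ?_⟩
  · rw [hM]
    exact (nullity_conj U A' (isUnit_iff_ne_zero.mpr hO3)).symm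
  · rw [hM, delRC_conj U A' i hUrow]
    exact (nullity_conj (delRC U i) (delRC A' i) (isUnit_iff_ne_zero.mpr hO4)).symm
end

section
/- Let G be a simple graph on a finite vertex set V, let i ∈ V be a vertex of degree 1 whose unique neighbor is j, and let A ∈ S(G). Set B = A(i). Then i is an upper index of A if and only if j is a downer index of B; that is, null(A(i)) = null(A) + 1 if and only if null(B(j)) = null(B) − 1 (where B(j) is the principal submatrix of A obtained by deleting rows and columns i and j). -/
set_option maxHeartbeats 1000000
set_option synthInstance.maxHeartbeats 400000

open Matrix

variable {V : Type*} [Fintype V] [DecidableEq V]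

section Aux

variable {n : Type*} [Fintype n] [DecidableEq n]

/-- Extension by zero of a vector indexed by `{x // x ≠ k}` to a vector indexed by `n`. -/
def extZero (k : n) : ({x : n // x ≠ k} → ℝ) →ₗ[ℝ] (n → ℝ) where
  toFun y x := if h : x = k then 0 else y ⟨x, h⟩
  map_add' y z := by ext x; by_cases h : x = k <;> simp [h]
  map_smul' c y := by ext x; by_cases h : x = k <;> simp [h]

omit [Fintype n] in
lemma extZero_apply_ne (k : n) (y : {x : n // x ≠ k} → ℝ) {x : n} (h : x ≠ k) :
    extZero k y x = y ⟨x, h⟩ := dif_neg h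

omit [Fintype n] in
lemma extZero_apply_self (k : n) (y : {x : n // x ≠ k} → ℝ) :
    extZero k y k = 0 := dif_pos rfl

lemma mulVec_extZero (M : Matrix n n ℝ) (k : n) (y : {x : n // x ≠ k} → ℝ) (l : n) :
    M.mulVec (extZero k y) l = ∑ m : {x : n // x ≠ k}, M l m.val * y m := by
  show ∑ m, M l m * extZero k y m = _
  rw [Fintype.sum_eq_add_sum_compl k, extZero_apply_self, mul_zero, zero_add,
    Finset.sum_subtype (p := fun x => x ≠ k) ({k}ᶜ : Finset n) (by simp)
      (fun m => M l m * extZero k y m)]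
  exact Finset.sum_congr rfl fun m _ => by simp [extZero_apply_ne k y m.prop]

lemma delRC_mulVec (M : Matrix n n ℝ) (k : n) (y : {x : n // x ≠ k} → ℝ)
    (l : {x : n // x ≠ k}) :
    (delRC M k).mulVec y l = M.mulVec (extZero k y) l.val := by
  rw [mulVec_extZero]
  simp [delRC, Matrix.mulVec, dotProduct]

/-- The space of vectors vanishing at `k` whose image under `M` vanishes away from `k`. -/
noncomputable def Lsub (M : Matrix n n ℝ) (k : n) : Submodule ℝ (n → ℝ) :=
  LinearMap.ker ((LinearMap.proj k : (n → ℝ) →ₗ[ℝ] ℝ).prod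
    ((LinearMap.funLeft ℝ ℝ (Subtype.val : {x : n // x ≠ k} → n)).comp M.mulVecLin))

lemma mem_Lsub {M : Matrix n n ℝ} {k : n} {x : n → ℝ} :
    x ∈ Lsub M k ↔ x k = 0 ∧ ∀ l : {x : n // x ≠ k}, M.mulVec x l.val = 0 := by
  simp only [Lsub, LinearMap.mem_ker, LinearMap.prod_apply, Function.prod, Prod.mk_eq_zero,
    LinearMap.comp_apply, LinearMap.proj_apply, LinearMap.funLeft_apply, mulVecLin_apply,
    funext_iff]
  rfl

lemma mulVec_of_mem_Lsub {M : Matrix n n ℝ} {k : n} {x : n → ℝ} (hx : x ∈ Lsub M k) :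
    M.mulVec x = M.mulVec x k • (Pi.single k 1 : n → ℝ) := by
  funext l
  by_cases h : l = k
  · subst h; simp
  · rw [(mem_Lsub.mp hx).2 ⟨l, h⟩, Pi.smul_apply, Pi.single_eq_of_ne h, smul_zero]

omit [DecidableEq n] in
lemma symm_dot {M : Matrix n n ℝ} (hM : M.IsSymm) (x y : n → ℝ) :
    x ⬝ᵥ M.mulVec y = M.mulVec x ⬝ᵥ y := by
  rw [Matrix.dotProduct_mulVec, ← Matrix.mulVec_transpose, hM.eq]

/-- The kernel of the principal submatrix is isomorphic to `Lsub M k`. -/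
noncomputable def kerDelEquiv (M : Matrix n n ℝ) (k : n) :
    LinearMap.ker (delRC M k).mulVecLin ≃ₗ[ℝ] Lsub M k where
  toFun y := ⟨extZero k y.val, by
    rw [mem_Lsub]
    refine ⟨extZero_apply_self k _, fun l => ?_⟩
    rw [← delRC_mulVec]
    have hy := y.prop
    rw [LinearMap.mem_ker, mulVecLin_apply] at hy
    rw [hy]
    rfl⟩
  map_add' y z := by ext x; simp
  map_smul' c y := by ext x; simp
  invFun x := ⟨fun l => x.val l.val, by
    rw [LinearMap.mem_ker, mulVecLin_apply]
    funext l
    have hx : extZero k (fun l : {x : n // x ≠ k} => x.val l.val) = x.val := by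
      funext m
      by_cases h : m = k
      · subst h; rw [extZero_apply_self, (mem_Lsub.mp x.prop).1]
      · rw [extZero_apply_ne k _ h]
    rw [Pi.zero_apply, delRC_mulVec, hx]
    exact (mem_Lsub.mp x.prop).2 l⟩
  left_inv y := by
    ext l
    exact extZero_apply_ne k y.val l.prop
  right_inv x := by
    ext m
    show extZero k (fun l : {x : n // x ≠ k} => x.val l.val) m = x.val m
    by_cases h : m = k
    · subst h; rw [extZero_apply_self, (mem_Lsub.mp x.prop).1]
    · rw [extZero_apply_ne k _ h]

lemma nullity_delRC_eq (M : Matrix n n ℝ) (k : n) :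
    nullity (delRC M k) = Module.finrank ℝ (Lsub M k) :=
  (kerDelEquiv M k).finrank_eq

lemma ker_le_Lsub {M : Matrix n n ℝ} {k : n} {x : n → ℝ}
    (hx : M.mulVec x = 0) (hxk : x k = 0) : x ∈ Lsub M k :=
  mem_Lsub.mpr ⟨hxk, fun l => by rw [hx]; rfl⟩

/-- Downer direction: a kernel vector not vanishing at `k` forces nullity drop. -/
lemma downer_of_exists {M : Matrix n n ℝ} (hM : M.IsSymm) {k : n}
    {x₀ : n → ℝ} (h0 : M.mulVec x₀ = 0) (hk : x₀ k ≠ 0) :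
    nullity (delRC M k) + 1 = nullity M := by
  classical
  have hLK : ∀ x ∈ Lsub M k, M.mulVec x = 0 := by
    intro x hx
    have h1 := mulVec_of_mem_Lsub hx
    have h2 : x₀ ⬝ᵥ M.mulVec x = 0 := by rw [symm_dot hM, h0, zero_dotProduct]
    rw [h1, dotProduct_smul, dotProduct_single, mul_one, smul_eq_mul] at h2
    have hz : M.mulVec x k = 0 := by
      rcases mul_eq_zero.mp h2 with h | h
      · exact h
      · exact absurd h hk
    rw [h1, hz, zero_smul]
  have hle : Lsub M k ≤ LinearMap.ker M.mulVecLin := fun x hx => by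
    rw [LinearMap.mem_ker, mulVecLin_apply]; exact hLK x hx
  have hx₀K : x₀ ∈ LinearMap.ker M.mulVecLin := by
    rw [LinearMap.mem_ker, mulVecLin_apply]; exact h0
  let φ : LinearMap.ker M.mulVecLin →ₗ[ℝ] ℝ :=
    (LinearMap.proj k).comp (LinearMap.ker M.mulVecLin).subtype
  have hsurj : LinearMap.range φ = ⊤ := by
    rw [LinearMap.range_eq_top]
    intro c
    refine ⟨⟨(c / x₀ k) • x₀, Submodule.smul_mem _ _ hx₀K⟩, ?_⟩
    show ((c / x₀ k) • x₀) k = c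
    rw [Pi.smul_apply, smul_eq_mul]
    exact div_mul_cancel₀ c hk
  have hker : LinearMap.ker φ = (Lsub M k).comap (LinearMap.ker M.mulVecLin).subtype := by
    ext x
    simp only [LinearMap.mem_ker, LinearMap.comp_apply, LinearMap.proj_apply,
      Submodule.mem_comap, Submodule.coe_subtype]
    constructor
    · intro h
      refine mem_Lsub.mpr ⟨h, fun l => ?_⟩
      have hx := x.prop
      rw [LinearMap.mem_ker, mulVecLin_apply] at hx
      rw [hx]
      rfl
    · intro h
      exact (mem_Lsub.mp h).1
  have hrn := LinearMap.finrank_range_add_finrank_ker φ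
  rw [hsurj, finrank_top, Module.finrank_self, hker] at hrn
  have heq : Module.finrank ℝ ((Lsub M k).comap (LinearMap.ker M.mulVecLin).subtype)
      = Module.finrank ℝ (Lsub M k) :=
    (Submodule.comapSubtypeEquivOfLe hle).finrank_eq
  rw [heq] at hrn
  rw [nullity_delRC_eq, nullity]
  omega

lemma downer_iff {M : Matrix n n ℝ} (hM : M.IsSymm) (k : n) :
    nullity (delRC M k) + 1 = nullity M ↔ ∃ x, M.mulVec x = 0 ∧ x k ≠ 0 := by
  constructor
  · intro h
    by_contra hc
    push_neg at hc
    have hKL : LinearMap.ker M.mulVecLin ≤ Lsub M k := fun x hx => by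
      rw [LinearMap.mem_ker, mulVecLin_apply] at hx
      exact ker_le_Lsub hx (hc x hx)
    have hmono := Submodule.finrank_mono hKL
    rw [← nullity, ← nullity_delRC_eq] at hmono
    omega
  · rintro ⟨x₀, h0, hk⟩
    exact downer_of_exists hM h0 hk

lemma upper_iff {M : Matrix n n ℝ} (hM : M.IsSymm) (k : n) :
    nullity (delRC M k) = nullity M + 1 ↔
      ∃ u, M.mulVec u = Pi.single k 1 ∧ u k = 0 := by
  constructor
  · intro h
    have h0 : ∀ x, M.mulVec x = 0 → x k = 0 := by
      by_contra hc
      push_neg at hc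
      obtain ⟨x, hx, hxk⟩ := hc
      have := downer_of_exists hM hx hxk
      omega
    have hnot : ¬(Lsub M k ≤ LinearMap.ker M.mulVecLin) := by
      intro hle
      have hmono := Submodule.finrank_mono hle
      rw [← nullity, ← nullity_delRC_eq] at hmono
      omega
    rw [SetLike.le_def] at hnot
    push_neg at hnot
    obtain ⟨u, huL, huK⟩ := hnot
    have hc : M.mulVec u k ≠ 0 := by
      intro hc
      apply huK
      rw [LinearMap.mem_ker, mulVecLin_apply, mulVec_of_mem_Lsub huL, hc, zero_smul]
    obtain ⟨c, hc0, hcu⟩ : ∃ c, c ≠ 0 ∧ M.mulVec u = c • (Pi.single k 1 : n → ℝ) :=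
      ⟨_, hc, mulVec_of_mem_Lsub huL⟩
    refine ⟨c⁻¹ • u, ?_, ?_⟩
    · rw [mulVec_smul, hcu, smul_smul, inv_mul_cancel₀ hc0, one_smul]
    · show c⁻¹ * u k = 0
      rw [(mem_Lsub.mp huL).1, mul_zero]
  · rintro ⟨u, hu, huk⟩
    have huL : u ∈ Lsub M k := mem_Lsub.mpr ⟨huk, fun l => by
      rw [hu]; exact Pi.single_eq_of_ne l.prop 1⟩
    have hKL : LinearMap.ker M.mulVecLin ≤ Lsub M k := by
      intro x hx
      rw [LinearMap.mem_ker, mulVecLin_apply] at hx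
      refine ker_le_Lsub hx ?_
      have hd : Pi.single k (1:ℝ) ⬝ᵥ x = 0 := by
        rw [← hu, ← symm_dot hM, hx, dotProduct_zero]
      rwa [single_dotProduct, one_mul] at hd
    let ψ : Lsub M k →ₗ[ℝ] ℝ :=
      ((LinearMap.proj k).comp M.mulVecLin).comp (Lsub M k).subtype
    have hsurj : LinearMap.range ψ = ⊤ := by
      rw [LinearMap.range_eq_top]
      intro c
      refine ⟨⟨c • u, Submodule.smul_mem _ c huL⟩, ?_⟩
      show M.mulVec (c • u) k = c
      rw [mulVec_smul, hu, Pi.smul_apply, Pi.single_eq_same, smul_eq_mul, mul_one]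
    have hker : LinearMap.ker ψ = (LinearMap.ker M.mulVecLin).comap (Lsub M k).subtype := by
      ext x
      simp only [LinearMap.mem_ker, LinearMap.comp_apply, LinearMap.proj_apply,
        Submodule.mem_comap, Submodule.coe_subtype, mulVecLin_apply]
      constructor
      · intro h
        have h' : (M.mulVec x.val) k = 0 := h
        rw [mulVec_of_mem_Lsub x.prop, h', zero_smul]
      · intro h
        show (M.mulVec x.val) k = 0
        rw [h]
        rfl
    have hrn := LinearMap.finrank_range_add_finrank_ker ψ
    rw [hsurj, finrank_top, Module.finrank_self, hker] at hrn
    have heq : Module.finrank ℝ ((LinearMap.ker M.mulVecLin).comap (Lsub M k).subtype)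
        = Module.finrank ℝ (LinearMap.ker M.mulVecLin) :=
      (Submodule.comapSubtypeEquivOfLe hKL).finrank_eq
    rw [heq] at hrn
    rw [nullity_delRC_eq, nullity]
    omega

omit [Fintype n] in
lemma delRC_isSymm {M : Matrix n n ℝ} (hM : M.IsSymm) (k : n) :
    (delRC M k).IsSymm := by
  ext l m
  exact hM.apply l.val m.val

end Aux

theorem stmt4 (G : SimpleGraph V) (i j : V) (hij : G.Adj i j)
    (huniq : ∀ x, G.Adj i x → x = j)
    (A : Matrix V V ℝ) (hA : InS G A) :
    nullity (delRC A i) = nullity A + 1 ↔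
      nullity (delRC (delRC A i) ⟨j, hij.ne'⟩) + 1 = nullity (delRC A i) := by
  have hAs : A.IsSymm := hA.1
  have hBs : (delRC A i).IsSymm := delRC_isSymm hAs i
  rw [upper_iff hAs i, downer_iff hBs ⟨j, hij.ne'⟩]
  have hij' : i ≠ j := hij.ne
  have ha : A i j ≠ 0 := (hA.2 i j hij').mpr hij
  have hzero : ∀ m, m ≠ i → m ≠ j → A i m = 0 := by
    intro m hmi hmj
    by_contra hmc
    exact hmj (huniq m ((hA.2 i m (Ne.symm hmi)).mp hmc))
  constructor
  · rintro ⟨u, hu, hui⟩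
    refine ⟨fun l => u l.val, ?_, ?_⟩
    · funext l
      have hext : extZero i (fun l : {x : V // x ≠ i} => u l.val) = u := by
        funext m
        by_cases h : m = i
        · subst h; rw [extZero_apply_self, hui]
        · rw [extZero_apply_ne i _ h]
      rw [Pi.zero_apply, delRC_mulVec, hext, hu]
      exact Pi.single_eq_of_ne l.prop 1
    · show u j ≠ 0
      have h1 : A.mulVec u i = 1 := by rw [hu]; exact Pi.single_eq_same i 1
      have h2 : A.mulVec u i = A i j * u j := by
        show ∑ m, A i m * u m = _
        refine Finset.sum_eq_single j ?_ ?_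
        · intro m _ hmj
          by_cases hmi : m = i
          · subst hmi; rw [hui, mul_zero]
          · rw [hzero m hmi hmj, zero_mul]
        · intro hj; exact absurd (Finset.mem_univ j) hj
      intro hz
      rw [h2, hz, mul_zero] at h1
      exact zero_ne_one h1
  · rintro ⟨y, hy, hyj⟩
    have ha' : A i j * y ⟨j, hij.ne'⟩ ≠ 0 := mul_ne_zero ha hyj
    refine ⟨(A i j * y ⟨j, hij.ne'⟩)⁻¹ • extZero i y, ?_, ?_⟩
    · funext l
      rw [mulVec_smul, Pi.smul_apply]
      by_cases h : l = i
      · rw [h, Pi.single_eq_same]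
        have hv : A.mulVec (extZero i y) i = A i j * y ⟨j, hij.ne'⟩ := by
          rw [mulVec_extZero]
          refine Finset.sum_eq_single (⟨j, hij.ne'⟩ : {x : V // x ≠ i}) ?_ ?_
          · intro m _ hmj
            have hmj' : m.val ≠ j := fun hh => hmj (Subtype.ext hh)
            rw [hzero m.val m.prop hmj', zero_mul]
          · intro hj; exact absurd (Finset.mem_univ _) hj
        rw [hv, smul_eq_mul, inv_mul_cancel₀ ha']
      · rw [Pi.single_eq_of_ne h]
        have hv : A.mulVec (extZero i y) l = 0 := by
          rw [← delRC_mulVec A i y ⟨l, h⟩, hy]; rfl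
        rw [hv, smul_zero]
    · show (A i j * y ⟨j, hij.ne'⟩)⁻¹ • extZero i y i = 0
      rw [extZero_apply_self, smul_zero]
end

section
/- Let G be a simple graph on a finite vertex set V and A ∈ S(G). Suppose α ⊆ V is a set of vertices such that the principal submatrix A[α] is invertible, and let S = A[αᶜ] − A[αᶜ,α] A[α]⁻¹ A[α,αᶜ] be the Schur complement of A[α] in A, indexed by V∖α. Suppose H is a simple graph on V∖α such that S ∈ S(H) and the set N_G(α)∖α = {v ∈ V∖α : v is adjacent in G to some vertex of α} is a clique in H. Then if A has SAP, S has SAP. -/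
open Matrix

variable {V : Type*} [Fintype V] [DecidableEq V]

theorem stmt8 (G : SimpleGraph V) (A : Matrix V V ℝ) (α : Finset V)
    (H : SimpleGraph {x // x ∉ α})
    (hA : InS G A)
    (hinv : IsUnit (A.submatrix (Subtype.val : {x // x ∈ α} → V)
      (Subtype.val : {x // x ∈ α} → V)))
    (S : Matrix {x // x ∉ α} {x // x ∉ α} ℝ)
    (hS : S = A.submatrix (Subtype.val : {x // x ∉ α} → V)
        (Subtype.val : {x // x ∉ α} → V) -
      A.submatrix (Subtype.val : {x // x ∉ α} → V) (Subtype.val : {x // x ∈ α} → V) *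
      (A.submatrix (Subtype.val : {x // x ∈ α} → V) (Subtype.val : {x // x ∈ α} → V))⁻¹ *
      A.submatrix (Subtype.val : {x // x ∈ α} → V) (Subtype.val : {x // x ∉ α} → V))
    (hSH : InS H S)
    (hclique : H.IsClique {v : {x // x ∉ α} | ∃ u ∈ α, G.Adj (v : V) u})
    (hSAP : HasSAP A) : HasSAP S := by

  classical
  intro X hXs hHadX hdiagX hSX
  set B : Matrix {x // x ∈ α} {x // x ∈ α} ℝ :=
    A.submatrix Subtype.val Subtype.val with hBdef
  set Cr : Matrix {x // x ∈ α} {x // x ∉ α} ℝ :=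
    A.submatrix Subtype.val Subtype.val with hCrdef
  set Cl : Matrix {x // x ∉ α} {x // x ∈ α} ℝ :=
    A.submatrix Subtype.val Subtype.val with hCldef
  set D : Matrix {x // x ∉ α} {x // x ∉ α} ℝ :=
    A.submatrix Subtype.val Subtype.val with hDdef
  set P : {x // x ∉ α} → Prop := fun v => ∃ u ∈ α, G.Adj (v : V) u with hPdef
  have hAsymm : ∀ j k : V, A j k = A k j := fun j k => by
    conv_lhs => rw [← hA.1]
    rfl
  have hP1 : ∀ (u : {x // x ∈ α}) (v : {x // x ∉ α}), A (u : V) (v : V) ≠ 0 → P v := by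
    intro u v h
    have hne : (u : V) ≠ (v : V) := fun h' => v.2 (h' ▸ u.2)
    exact ⟨u, u.2, ((hA.2 _ _ hne).1 h).symm⟩
  have hP2 : ∀ (v : {x // x ∉ α}) (u : {x // x ∈ α}), A (v : V) (u : V) ≠ 0 → P v := by
    intro v u h
    have hne : (v : V) ≠ (u : V) := fun h' => v.2 (h' ▸ u.2)
    exact ⟨u, u.2, (hA.2 _ _ hne).1 h⟩
  have hX0 : ∀ v w, P v → P w → X v w = 0 := by
    intro v w hv hw
    by_cases hvw : v = w
    · exact hvw ▸ hdiagX v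
    · by_contra hx
      have hadj : H.Adj v w := hclique hv hw hvw
      have hS0 : S v w ≠ 0 := (hSH.2 v w hvw).2 hadj
      rcases mul_eq_zero.mp (hHadX v w) with h | h
      · exact hS0 h
      · exact hx h
  have hCr0 : ∀ u v, Cr u v ≠ 0 → P v := by
    intro u v h
    rw [hCrdef] at h
    exact hP1 u v h
  have hCl0 : ∀ v u, Cl v u ≠ 0 → P v := by
    intro v u h
    rw [hCldef] at h
    exact hP2 v u h
  have hCrX : ∀ u w, P w → (Cr * X) u w = 0 := by
    intro u w hw
    rw [Matrix.mul_apply]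
    apply Finset.sum_eq_zero
    intro v _
    by_cases h : Cr u v = 0
    · rw [h, zero_mul]
    · rw [hX0 v w (hCr0 u v h) hw, mul_zero]
  have hXCl : ∀ v u, P v → (X * Cl) v u = 0 := by
    intro v u hv
    rw [Matrix.mul_apply]
    apply Finset.sum_eq_zero
    intro w _
    by_cases h : Cl w u = 0
    · rw [h, mul_zero]
    · rw [hX0 v w hv (hCl0 w u h), zero_mul]
  have hCXC : Cr * (X * Cl) = 0 := by
    ext u u'
    rw [Matrix.mul_apply]
    refine Finset.sum_eq_zero fun v _ => ?_
    by_cases h : Cr u v = 0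
    · rw [h, zero_mul]
    · rw [hXCl v u' (hCr0 u v h), mul_zero]
  have hBdetu : IsUnit B.det := (Matrix.isUnit_iff_isUnit_det B).mp hinv
  have hBBinv : B * B⁻¹ = 1 := Matrix.mul_nonsing_inv B hBdetu
  have hDX : D * X = Cl * B⁻¹ * Cr * X := by
    have := hSX
    rw [hS, Matrix.sub_mul, sub_eq_zero] at this
    exact this
  -- the equivalence between the sum of the two subtypes and V
  set e : {x // x ∈ α} ⊕ {x // x ∉ α} ≃ V := Equiv.sumCompl (· ∈ α) with hedef
  have hA' : A.submatrix e e = Matrix.fromBlocks B Cr Cl D := by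
    ext p q
    cases p <;> cases q <;>
      simp [hedef, Matrix.submatrix_apply, hBdef, hCrdef, hCldef, hDdef]
  set Q : Matrix {x // x ∈ α} {x // x ∉ α} ℝ := -(B⁻¹ * (Cr * X)) with hQdef
  set R : Matrix {x // x ∉ α} {x // x ∈ α} ℝ := -((X * Cl) * B⁻¹) with hRdef
  set Y' : Matrix ({x // x ∈ α} ⊕ {x // x ∉ α}) ({x // x ∈ α} ⊕ {x // x ∉ α}) ℝ :=
    Matrix.fromBlocks 0 Q R X with hY'def
  set Y : Matrix V V ℝ := Y'.submatrix e.symm e.symm with hYdef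
  -- symmetry facts
  have hBT : Bᵀ = B := by
    rw [hBdef, Matrix.transpose_submatrix, hA.1]
  have hBinvT : B⁻¹ᵀ = B⁻¹ := by
    rw [Matrix.transpose_nonsing_inv, hBT]
  have hClT : Clᵀ = Cr := by
    rw [hCldef, hCrdef, Matrix.transpose_submatrix, hA.1]
  have hCrT : Crᵀ = Cl := by
    rw [← hClT, Matrix.transpose_transpose]
  have hRT : Rᵀ = Q := by
    rw [hRdef, hQdef, Matrix.transpose_neg, Matrix.transpose_mul, Matrix.transpose_mul,
      hBinvT, hClT, hXs]
  have hQT : Qᵀ = R := by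
    rw [hQdef, hRdef, Matrix.transpose_neg, Matrix.transpose_mul, Matrix.transpose_mul,
      hBinvT, hCrT, hXs]
  have hY'symm : Y'.IsSymm := by
    rw [Matrix.IsSymm, hY'def, Matrix.fromBlocks_transpose, Matrix.transpose_zero,
      hRT, hQT, hXs]
  have hYsymm : Y.IsSymm := by
    rw [Matrix.IsSymm, hYdef, Matrix.transpose_submatrix, hY'symm]
  -- the four blocks of (fromBlocks B Cr Cl D) * Y' vanish
  have h1 : B * (0 : Matrix {x // x ∈ α} {x // x ∈ α} ℝ) + Cr * R = 0 := by
    rw [Matrix.mul_zero, zero_add, hRdef, Matrix.mul_neg, ← Matrix.mul_assoc,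
      hCXC, Matrix.zero_mul, neg_zero]
  have h2 : B * Q + Cr * X = 0 := by
    rw [hQdef, Matrix.mul_neg, ← Matrix.mul_assoc, hBBinv, Matrix.one_mul,
      neg_add_cancel]
  have h3 : Cl * (0 : Matrix {x // x ∈ α} {x // x ∈ α} ℝ) + D * R = 0 := by
    rw [Matrix.mul_zero, zero_add, hRdef, Matrix.mul_neg, ← Matrix.mul_assoc,
      ← Matrix.mul_assoc, hDX]
    rw [Matrix.mul_assoc (Cl * B⁻¹ * Cr) X Cl, Matrix.mul_assoc (Cl * B⁻¹) Cr (X * Cl),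
      hCXC, Matrix.mul_zero, Matrix.zero_mul, neg_zero]
  have h4 : Cl * Q + D * X = 0 := by
    rw [hQdef, Matrix.mul_neg, hDX, ← Matrix.mul_assoc, ← Matrix.mul_assoc,
      neg_add_cancel]
  have hFBY' : Matrix.fromBlocks B Cr Cl D * Y' = 0 := by
    rw [hY'def, Matrix.fromBlocks_multiply, h1, h2, h3, h4]
    exact Matrix.fromBlocks_zero
  -- A * Y = 0
  have hArw : A = (Matrix.fromBlocks B Cr Cl D).submatrix e.symm e.symm := by
    rw [← hA']
    ext j k
    simp [Matrix.submatrix_apply]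
  have hAY : A * Y = 0 := by
    rw [hYdef]
    conv_lhs => rw [hArw]
    rw [Matrix.submatrix_mul_equiv, hFBY']
    ext j k
    simp
  -- Hadamard condition for Y
  have hHadBlock : ∀ p q, Matrix.fromBlocks B Cr Cl D p q * Y' p q = 0 := by
    rintro (u | v) (u' | w)
    · simp [hY'def]
    · -- Cr u w * Q u w
      by_cases h : Cr u w = 0
      · rw [Matrix.fromBlocks_apply₁₂, hY'def, Matrix.fromBlocks_apply₁₂, h, zero_mul]
      · have hw := hCr0 u w h
        have hQ : Q u w = 0 := by
          rw [hQdef, Matrix.neg_apply, Matrix.mul_apply]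
          rw [neg_eq_zero]
          refine Finset.sum_eq_zero fun m _ => ?_
          rw [hCrX m w hw, mul_zero]
        rw [Matrix.fromBlocks_apply₁₂, hY'def, Matrix.fromBlocks_apply₁₂, hQ, mul_zero]
    · -- Cl v u' * R v u'
      by_cases h : Cl v u' = 0
      · rw [Matrix.fromBlocks_apply₂₁, hY'def, Matrix.fromBlocks_apply₂₁, h, zero_mul]
      · have hv := hCl0 v u' h
        have hR : R v u' = 0 := by
          rw [hRdef, Matrix.neg_apply, Matrix.mul_apply]
          rw [neg_eq_zero]
          refine Finset.sum_eq_zero fun m _ => ?_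
          rw [hXCl v m hv, zero_mul]
        rw [Matrix.fromBlocks_apply₂₁, hY'def, Matrix.fromBlocks_apply₂₁, hR, mul_zero]
    · -- D v w * X v w
      rw [Matrix.fromBlocks_apply₂₂, hY'def, Matrix.fromBlocks_apply₂₂]
      by_cases hx : X v w = 0
      · rw [hx, mul_zero]
      · have hvw : v ≠ w := fun h => hx (h ▸ hdiagX v)
        have hSvw : S v w = 0 := by
          rcases mul_eq_zero.mp (hHadX v w) with h | h
          · exact h
          · exact absurd h hx
        have hnb : ¬ (P v ∧ P w) := fun ⟨hv, hw⟩ => hx (hX0 v w hv hw)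
        have hschur : (Cl * B⁻¹ * Cr) v w = 0 := by
          rcases not_and_or.mp hnb with hv | hw
          · rw [Matrix.mul_apply]
            refine Finset.sum_eq_zero fun u _ => ?_
            have : (Cl * B⁻¹) v u = 0 := by
              rw [Matrix.mul_apply]
              refine Finset.sum_eq_zero fun m _ => ?_
              by_cases h : Cl v m = 0
              · rw [h, zero_mul]
              · exact absurd (hCl0 v m h) hv
            rw [this, zero_mul]
          · rw [Matrix.mul_apply]
            refine Finset.sum_eq_zero fun u _ => ?_
            by_cases h : Cr u w = 0
            · rw [h, mul_zero]
            · exact absurd (hCr0 u w h) hw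
        have hD0 : D v w = 0 := by
          have h := hSvw
          rw [hS, Matrix.sub_apply, sub_eq_zero] at h
          exact h.trans hschur
        rw [hD0, zero_mul]
  have hHadY : ∀ j k, A j k * Y j k = 0 := by
    intro j k
    have hAjk : A j k = Matrix.fromBlocks B Cr Cl D (e.symm j) (e.symm k) := by
      rw [hArw, Matrix.submatrix_apply]
    have hYjk : Y j k = Y' (e.symm j) (e.symm k) := rfl
    rw [hAjk, hYjk]
    exact hHadBlock _ _
  have hdiagY : ∀ j, Y j j = 0 := by
    intro j
    have hYjj : Y j j = Y' (e.symm j) (e.symm j) := rfl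
    rw [hYjj]
    rcases h : e.symm j with u | v
    · simp [hY'def]
    · rw [hY'def, Matrix.fromBlocks_apply₂₂]
      exact hdiagX v
  have hY0 : Y = 0 := hSAP Y hYsymm hHadY hdiagY hAY
  ext v w
  have : X v w = Y (e (Sum.inr v)) (e (Sum.inr w)) := by
    rw [hYdef]
    simp [Matrix.submatrix_apply, Equiv.symm_apply_apply, hY'def]
  rw [this, hY0]
  rfl
end

section
/- Let G be a simple graph on a finite vertex set V and A ∈ S(G). Suppose α ⊆ V is a set of vertices such that the principal submatrix A[α] is invertible, and let S = A[αᶜ] − A[αᶜ,α] A[α]⁻¹ A[α,αᶜ] be the Schur complement of A[α] in A, indexed by V∖α. Suppose H is a simple graph on V∖α such that S ∈ S(H) and the set N_G(α)∖α = {v ∈ V∖α : v is adjacent in G to some vertex of α} is a clique in H. Then for any i ∈ V∖α, if A has i-SNIP, S has i-SNIP. -/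
open Matrix

variable {V : Type*} [Fintype V] [DecidableEq V]

theorem stmt9 (G : SimpleGraph V) (A : Matrix V V ℝ) (α : Finset V)
    (H : SimpleGraph {x // x ∉ α})
    (hA : InS G A)
    (hinv : IsUnit (A.submatrix (Subtype.val : {x // x ∈ α} → V)
      (Subtype.val : {x // x ∈ α} → V)))
    (S : Matrix {x // x ∉ α} {x // x ∉ α} ℝ)
    (hS : S = A.submatrix (Subtype.val : {x // x ∉ α} → V)
        (Subtype.val : {x // x ∉ α} → V) -
      A.submatrix (Subtype.val : {x // x ∉ α} → V) (Subtype.val : {x // x ∈ α} → V) *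
      (A.submatrix (Subtype.val : {x // x ∈ α} → V) (Subtype.val : {x // x ∈ α} → V))⁻¹ *
      A.submatrix (Subtype.val : {x // x ∈ α} → V) (Subtype.val : {x // x ∉ α} → V))
    (hSH : InS H S)
    (hclique : H.IsClique {v : {x // x ∉ α} | ∃ u ∈ α, G.Adj (v : V) u})
    (i : {x // x ∉ α})
    (hSNIP : HasSNIP A (i : V)) : HasSNIP S i := by
  classical
  intro X hXsym hHad hdiag hrow
  set A11 := A.submatrix (Subtype.val : {x // x ∈ α} → V)
      (Subtype.val : {x // x ∈ α} → V) with hA11def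
  set B := A.submatrix (Subtype.val : {x // x ∈ α} → V)
      (Subtype.val : {x // x ∉ α} → V) with hBdef
  set D := A.submatrix (Subtype.val : {x // x ∉ α} → V)
      (Subtype.val : {x // x ∈ α} → V) with hDdef
  set C := A.submatrix (Subtype.val : {x // x ∉ α} → V)
      (Subtype.val : {x // x ∉ α} → V) with hCdef
  have hsym : ∀ x y : V, A y x = A x y := fun x y => congrFun (congrFun hA.1 x) y
  -- combinatorial facts
  have hX0 : ∀ j k : {x // x ∉ α}, (∃ u ∈ α, G.Adj (j : V) u) →
      (∃ u ∈ α, G.Adj (k : V) u) → X j k = 0 := by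
    intro j k hj hk
    by_contra hne
    have hjk : j ≠ k := by
      rintro rfl; exact hne (hdiag j)
    have hSjk : S j k = 0 := by
      rcases mul_eq_zero.mp (hHad j k) with h | h
      · exact h
      · exact absurd h hne
    have hadj : H.Adj j k := hclique hj hk hjk
    exact ((hSH.2 j k hjk).mpr hadj) hSjk
  have hNB : ∀ (v : {x // x ∈ α}) (k : {x // x ∉ α}), B v k ≠ 0 →
      ∃ u ∈ α, G.Adj (k : V) u := by
    intro v k h
    have hne : (v : V) ≠ (k : V) := by
      intro hcontra
      exact k.prop (hcontra ▸ v.prop)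
    have hadj : G.Adj (v : V) (k : V) := (hA.2 _ _ hne).mp h
    exact ⟨v, v.prop, hadj.symm⟩
  have hND : ∀ (k : {x // x ∉ α}) (v : {x // x ∈ α}), D k v ≠ 0 →
      ∃ u ∈ α, G.Adj (k : V) u := by
    intro k v h
    have hne : (k : V) ≠ (v : V) := by
      intro hcontra
      exact k.prop (hcontra ▸ v.prop)
    exact ⟨v, v.prop, (hA.2 _ _ hne).mp h⟩
  have hBX : ∀ (v : {x // x ∈ α}) (k : {x // x ∉ α}), (∃ u ∈ α, G.Adj (k : V) u) →
      (B * X) v k = 0 := by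
    intro v k hk
    rw [Matrix.mul_apply]
    refine Finset.sum_eq_zero fun j _ => ?_
    by_cases hb : B v j = 0
    · rw [hb, zero_mul]
    · rw [hX0 j k (hNB v j hb) hk, mul_zero]
  have hBXD : B * X * D = 0 := by
    ext v w
    rw [Matrix.mul_apply]
    refine Finset.sum_eq_zero fun k _ => ?_
    by_cases hd : D k w = 0
    · rw [hd, mul_zero]
    · rw [hBX v k (hND k w hd), zero_mul]
  have hDinvB : ∀ j k : {x // x ∉ α}, X j k ≠ 0 → (D * A11⁻¹ * B) j k = 0 := by
    intro j k hX
    have hnot : ¬ ((∃ u ∈ α, G.Adj (j : V) u) ∧ (∃ u ∈ α, G.Adj (k : V) u)) := by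
      rintro ⟨hj, hk⟩; exact hX (hX0 j k hj hk)
    rcases not_and_or.mp hnot with hj | hk
    · rw [Matrix.mul_assoc, Matrix.mul_apply]
      refine Finset.sum_eq_zero fun w _ => ?_
      have hd : D j w = 0 := by
        by_contra hd
        exact hj (hND j w hd)
      rw [hd, zero_mul]
    · rw [Matrix.mul_apply]
      refine Finset.sum_eq_zero fun w _ => ?_
      have hb : B w k = 0 := by
        by_contra hb
        exact hk (hNB w k hb)
      rw [hb, mul_zero]
  have hCX : ∀ j k : {x // x ∉ α}, C j k * X j k = 0 := by
    intro j k
    by_cases hX : X j k = 0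
    · rw [hX, mul_zero]
    have hSjk : S j k = 0 := by
      rcases mul_eq_zero.mp (hHad j k) with h | h
      · exact h
      · exact absurd h hX
    have h1 : S j k = C j k - (D * A11⁻¹ * B) j k := by
      rw [hS, Matrix.sub_apply]
    have h2 := hDinvB j k hX
    have hC : C j k = 0 := by
      rw [hSjk, h2, sub_zero] at h1
      exact h1.symm
    rw [hC, zero_mul]
  -- transpose facts
  have hDT : Dᵀ = B := by
    ext v k
    exact hsym (v : V) (k : V)
  have hA11T : A11ᵀ = A11 := by
    ext v w
    exact hsym (v : V) (w : V)
  have hA11invT : (A11⁻¹)ᵀ = A11⁻¹ := by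
    rw [Matrix.transpose_nonsing_inv, hA11T]
  have hXT : Xᵀ = X := hXsym
  have hdet : IsUnit A11.det := (Matrix.isUnit_iff_isUnit_det _).mp hinv
  have hA11inv : A11 * A11⁻¹ = 1 := Matrix.mul_nonsing_inv _ hdet
  have hCeq : C = S + D * A11⁻¹ * B := by
    rw [hS]
    ext j k
    simp only [Matrix.add_apply, Matrix.sub_apply]
    ring
  -- the block matrices
  set e : ({x // x ∈ α} ⊕ {x // x ∉ α}) ≃ V := Equiv.sumCompl (fun x => x ∈ α) with he
  set A' : Matrix ({x // x ∈ α} ⊕ {x // x ∉ α}) ({x // x ∈ α} ⊕ {x // x ∉ α}) ℝ :=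
    Matrix.fromBlocks A11 B D C with hA'
  set Y' : Matrix ({x // x ∈ α} ⊕ {x // x ∉ α}) ({x // x ∈ α} ⊕ {x // x ∉ α}) ℝ :=
    Matrix.fromBlocks 0 (-(A11⁻¹ * B * X)) (-(X * D * A11⁻¹)) X with hY'
  set Xh : Matrix V V ℝ := Y'.submatrix ⇑e.symm ⇑e.symm with hXhdef
  have hTR : (X * D * A11⁻¹)ᵀ = A11⁻¹ * B * X := by
    rw [Matrix.transpose_mul, Matrix.transpose_mul, hA11invT, hDT, hXT,
      Matrix.mul_assoc]
  have hA'app : ∀ s t, A' s t = A (e s) (e t) := by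
    rintro (s | s) (t | t) <;> rfl
  have hTR2 : (A11⁻¹ * B * X)ᵀ = X * D * A11⁻¹ := by
    rw [← hTR, Matrix.transpose_transpose]
  have hY'symm : Y'.IsSymm := by
    show Y'ᵀ = Y'
    rw [hY', Matrix.fromBlocks_transpose, Matrix.transpose_zero, Matrix.transpose_neg,
      Matrix.transpose_neg, hTR, hTR2, hXT]
  -- Hadamard-type condition on blocks
  have h12 : ∀ (v : {x // x ∈ α}) (k : {x // x ∉ α}),
      B v k * (A11⁻¹ * B * X) v k = 0 := by
    intro v k
    by_cases hb : B v k = 0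
    · rw [hb, zero_mul]
    · have hk := hNB v k hb
      have hz : (A11⁻¹ * B * X) v k = 0 := by
        rw [Matrix.mul_assoc, Matrix.mul_apply]
        refine Finset.sum_eq_zero fun w _ => ?_
        rw [hBX w k hk, mul_zero]
      rw [hz, mul_zero]
  have hHadBlock : ∀ s t, A' s t * Y' s t = 0 := by
    rintro (s | s) (t | t)
    · show A11 s t * (0 : Matrix {x // x ∈ α} {x // x ∈ α} ℝ) s t = 0
      rw [Matrix.zero_apply, mul_zero]
    · show B s t * (-(A11⁻¹ * B * X)) s t = 0
      rw [Matrix.neg_apply, mul_neg, h12 s t, neg_zero]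
    · show D s t * (-(X * D * A11⁻¹)) s t = 0
      have h1 : D s t = B t s := by rw [← hDT]; rfl
      have h2 : (X * D * A11⁻¹) s t = (A11⁻¹ * B * X) t s := by
        rw [← hTR]; rfl
      rw [Matrix.neg_apply, mul_neg, h1, h2, h12 t s, neg_zero]
    · exact hCX s t
  -- the matrix product
  have hBXD2 : B * (X * (D * A11⁻¹)) = 0 := by
    have : B * (X * (D * A11⁻¹)) = B * X * D * A11⁻¹ := by
      simp only [Matrix.mul_assoc]
    rw [this, hBXD, Matrix.zero_mul]
  have e11 : A11 * (0 : Matrix {x // x ∈ α} {x // x ∈ α} ℝ) +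
      B * -(X * D * A11⁻¹) = 0 := by
    rw [Matrix.mul_zero, zero_add, Matrix.mul_neg]
    have h : B * (X * D * A11⁻¹) = B * X * D * A11⁻¹ := by
      simp only [Matrix.mul_assoc]
    rw [h, hBXD, Matrix.zero_mul, neg_zero]
  have e12 : A11 * -(A11⁻¹ * B * X) + B * X = 0 := by
    rw [Matrix.mul_neg]
    have h : A11 * (A11⁻¹ * B * X) = B * X := by
      rw [show A11⁻¹ * B * X = A11⁻¹ * (B * X) from Matrix.mul_assoc _ _ _,
        ← Matrix.mul_assoc, hA11inv, Matrix.one_mul]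
    rw [h, neg_add_cancel]
  have e21 : D * (0 : Matrix {x // x ∈ α} {x // x ∈ α} ℝ) +
      C * -(X * D * A11⁻¹) = -(S * X * (D * A11⁻¹)) := by
    have hz : D * A11⁻¹ * B * (X * D * A11⁻¹) = 0 := by
      have h : D * A11⁻¹ * B * (X * D * A11⁻¹) =
          D * (A11⁻¹ * (B * (X * (D * A11⁻¹)))) := by
        simp only [Matrix.mul_assoc]
      rw [h, hBXD2, Matrix.mul_zero, Matrix.mul_zero]
    rw [Matrix.mul_zero, zero_add, Matrix.mul_neg, hCeq, Matrix.add_mul, hz, add_zero,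
      show X * D * A11⁻¹ = X * (D * A11⁻¹) from Matrix.mul_assoc _ _ _,
      ← Matrix.mul_assoc]
  have e22 : D * -(A11⁻¹ * B * X) + C * X = S * X := by
    rw [Matrix.mul_neg, hCeq, Matrix.add_mul]
    have h : D * (A11⁻¹ * B * X) = D * A11⁻¹ * B * X := by
      simp only [Matrix.mul_assoc]
    rw [h]
    abel
  have hA'Y' : A' * Y' = Matrix.fromBlocks 0 0 (-(S * X * (D * A11⁻¹))) (S * X) := by
    rw [hA', hY', Matrix.fromBlocks_multiply, e11, e12, e21, e22]
  have hAeq : A'.submatrix ⇑e.symm ⇑e.symm = A := by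
    ext j k
    rw [Matrix.submatrix_apply, hA'app, Equiv.apply_symm_apply, Equiv.apply_symm_apply]
  have hAXh : A * Xh = (A' * Y').submatrix ⇑e.symm ⇑e.symm := by
    rw [hXhdef, ← hAeq]
    exact Matrix.submatrix_mul_equiv A' Y' ⇑e.symm e.symm ⇑e.symm
  -- apply SNIP of A
  have hXh0 : Xh = 0 := by
    refine hSNIP Xh ?_ ?_ ?_ ?_
    · show Xhᵀ = Xh
      rw [hXhdef, Matrix.transpose_submatrix, hY'symm.eq]
    · intro j k
      have hAjk : A j k = A' (e.symm j) (e.symm k) := by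
        rw [hA'app, Equiv.apply_symm_apply, Equiv.apply_symm_apply]
      rw [hAjk, hXhdef, Matrix.submatrix_apply]
      exact hHadBlock _ _
    · intro j
      rw [hXhdef, Matrix.submatrix_apply]
      rcases hj : e.symm j with s | s
      · show (0 : Matrix {x // x ∈ α} {x // x ∈ α} ℝ) s s = 0
        exact Matrix.zero_apply s s
      · exact hdiag s
    · intro j k hj
      rw [hAXh, Matrix.submatrix_apply, hA'Y']
      rcases hjs : e.symm j with s | s
      · rcases e.symm k with t | t
        · exact Matrix.zero_apply s t
        · exact Matrix.zero_apply s t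
      · have hsv : (s : V) = j := by
          have h2 := congrArg e hjs
          rw [Equiv.apply_symm_apply] at h2
          exact h2.symm
        have hsi : s ≠ i := by
          intro hcontra
          exact hj (by rw [← hsv, hcontra])
        rcases e.symm k with t | t
        · show (-(S * X * (D * A11⁻¹))) s t = 0
          rw [Matrix.neg_apply, neg_eq_zero, Matrix.mul_apply]
          refine Finset.sum_eq_zero fun m _ => ?_
          rw [hrow s m hsi, zero_mul]
        · exact hrow s t hsi
  ext j k
  have hj : e.symm (j : V) = Sum.inr j := Equiv.sumCompl_symm_apply_of_neg j.prop
  have hk : e.symm (k : V) = Sum.inr k := Equiv.sumCompl_symm_apply_of_neg k.prop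
  have hz := congrFun (congrFun hXh0 (j : V)) (k : V)
  rw [hXhdef, Matrix.submatrix_apply, hj, hk] at hz
  simpa [hY'] using hz
end

section
/- Let G be a simple graph on a finite vertex set V and let i ∈ V. Suppose V = V₁ ∪ V₂ with V₁ ∩ V₂ = {i}, every edge of G has both endpoints in V₁ or both endpoints in V₂, and the induced subgraphs G₁ = G[V₁] and G₂ = G[V₂] are connected graphs on at least 2 vertices (so G = G₁ ⊕_i G₂ is a vertex sum at i). Then ξξ(G,i) = max{ξξ(G₁,i), ξξ(G₂,i)}. -/
set_option linter.unusedSectionVars false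
set_option linter.unusedVariables false
set_option maxHeartbeats 1600000


open Matrix

variable {V : Type*} [Fintype V] [DecidableEq V]

/-- The set of achievable values `k + ℓ`. -/
def NPSet (G : SimpleGraph V) (i : V) : Set ℕ :=
  {s | ∃ k ℓ : ℕ, k ≤ ℓ ∧ s = k + ℓ ∧ ∃ A : Matrix V V ℝ,
    InS G A ∧ HasSNIP A i ∧ nullity A = k ∧ nullity (delRC A i) = ℓ}

lemma xixi_eq_sSup_SSet (G : SimpleGraph V) (i : V) : xixi G i = sSup (NPSet G i) := rfl
lemma nullity_add_rank (A : Matrix V V ℝ) : nullity A + A.rank = Fintype.card V := by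
  have := LinearMap.finrank_range_add_finrank_ker A.mulVecLin
  rw [Module.finrank_fintype_fun_eq_card] at this
  rw [nullity, Matrix.rank]
  omega

lemma nullity_eq_of_rank_eq {m n : Type*} [Fintype m] [Fintype n] [DecidableEq m] [DecidableEq n]
    {A : Matrix m m ℝ} {B : Matrix n n ℝ} (hc : Fintype.card m = Fintype.card n)
    (h : A.rank = B.rank) : nullity A = nullity B := by
  have h1 := nullity_add_rank A
  have h2 := nullity_add_rank B
  omega

lemma nullity_submatrix_equiv {m n : Type*} [Fintype m] [Fintype n] [DecidableEq m] [DecidableEq n]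
    (A : Matrix n n ℝ) (e : m ≃ n) : nullity (A.submatrix e e) = nullity A := by
  exact nullity_eq_of_rank_eq (Fintype.card_congr e) (Matrix.rank_submatrix A e e)

lemma nullity_eq_zero_of_isUnit_det {A : Matrix V V ℝ} (h : IsUnit A.det) : nullity A = 0 := by
  have hker : LinearMap.ker A.mulVecLin = ⊥ := by
    rw [Matrix.ker_mulVecLin_eq_bot_iff]
    intro v hv
    by_contra h0
    exact h.ne_zero (Matrix.exists_mulVec_eq_zero_iff.mp ⟨v, h0, hv⟩)
  rw [nullity, hker, finrank_bot]

lemma finrank_prod_submodule {M N : Type*} [AddCommGroup M] [AddCommGroup N]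
    [Module ℝ M] [Module ℝ N] [FiniteDimensional ℝ M] [FiniteDimensional ℝ N]
    (p : Submodule ℝ M) (q : Submodule ℝ N) :
    Module.finrank ℝ (p.prod q) = Module.finrank ℝ p + Module.finrank ℝ q := by
  have e : (p.prod q) ≃ₗ[ℝ] p × q :=
    { toFun := fun x => (⟨x.1.1, x.2.1⟩, ⟨x.1.2, x.2.2⟩)
      map_add' := fun a b => rfl
      map_smul' := fun c a => rfl
      invFun := fun y => ⟨(y.1.1, y.2.1), y.1.2, y.2.2⟩
      left_inv := fun a => rfl
      right_inv := fun a => rfl }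
  rw [e.finrank_eq, Module.finrank_prod]

lemma nullity_fromBlocks_diag {m p : Type*} [Fintype m] [Fintype p] [DecidableEq m] [DecidableEq p]
    (B : Matrix m m ℝ) (C : Matrix p p ℝ) :
    nullity (fromBlocks B 0 0 C) = nullity B + nullity C := by
  set T := (fromBlocks B 0 0 C).mulVecLin with hT
  set Pm := (B.mulVecLin).prodMap (C.mulVecLin) with hPm
  set E : ((m ⊕ p) → ℝ) ≃ₗ[ℝ] (m → ℝ) × (p → ℝ) :=
    LinearEquiv.sumArrowLequivProdArrow m p ℝ ℝ with hE
  have hcomm : ∀ x, E (T x) = Pm (E x) := by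
    intro x
    have hx : (Sum.elim (x ∘ Sum.inl) (x ∘ Sum.inr)) = x := Sum.elim_comp_inl_inr x
    have : T x = Sum.elim (B.mulVec (x ∘ Sum.inl)) (C.mulVec (x ∘ Sum.inr)) := by
      rw [hT, Matrix.mulVecLin_apply, ← hx, Matrix.fromBlocks_mulVec]
      simp [hx]
    rw [this]
    ext a
    · simp [hE, LinearEquiv.sumArrowLequivProdArrow, Pm, Equiv.sumArrowEquivProdArrow]
    · simp [hE, LinearEquiv.sumArrowLequivProdArrow, Pm, Equiv.sumArrowEquivProdArrow]
  have hker : LinearMap.ker T = Submodule.comap (E : ((m ⊕ p) → ℝ) →ₗ[ℝ] _) (LinearMap.ker Pm) := by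
    ext x
    simp only [LinearMap.mem_ker, Submodule.mem_comap, LinearEquiv.coe_coe]
    rw [← hcomm x, LinearEquiv.map_eq_zero_iff]
  have h2 : LinearMap.ker Pm = (LinearMap.ker B.mulVecLin).prod (LinearMap.ker C.mulVecLin) :=
    LinearMap.ker_prodMap _ _
  rw [nullity, ← hT, hker, Submodule.comap_equiv_eq_map_symm, LinearEquiv.finrank_map_eq, h2,
    finrank_prod_submodule]
  rfl

lemma nullity_fromBlocks_schur {m p : Type*} [Fintype m] [Fintype p] [DecidableEq m] [DecidableEq p]
    (P : Matrix m m ℝ) (Q : Matrix m p ℝ) (R : Matrix p m ℝ) (S : Matrix p p ℝ)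
    (hS : IsUnit S.det) :
    nullity (fromBlocks P Q R S) = nullity (P - Q * S⁻¹ * R) := by
  letI := S.invertibleOfIsUnitDet hS
  have hfact := Matrix.fromBlocks_eq_of_invertible₂₂ P Q R S
  rw [Matrix.invOf_eq_nonsing_inv] at hfact
  have hU : IsUnit (fromBlocks (1 : Matrix m m ℝ) (Q * S⁻¹) 0 1).det := by
    rw [Matrix.det_fromBlocks_zero₂₁]; simp
  have hL : IsUnit (fromBlocks (1 : Matrix m m ℝ) 0 (S⁻¹ * R) 1).det := by
    rw [Matrix.det_fromBlocks_zero₁₂]; simp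
  have hrank : (fromBlocks P Q R S).rank = (fromBlocks (P - Q * S⁻¹ * R) 0 0 S).rank := by
    rw [hfact, Matrix.rank_mul_eq_left_of_isUnit_det _ _ hL,
      Matrix.rank_mul_eq_right_of_isUnit_det _ _ hU]
  rw [nullity_eq_of_rank_eq rfl hrank, nullity_fromBlocks_diag,
    nullity_eq_zero_of_isUnit_det hS, add_zero]

section Core

variable {m p : Type*} [Fintype m] [Fintype p] [DecidableEq m] [DecidableEq p]
variable {P : Matrix m m ℝ} {Q : Matrix m p ℝ} {R : Matrix p m ℝ} {S : Matrix p p ℝ} {i : m}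

lemma qw_row_zero (hQ : ∀ j b, j ≠ i → Q j b = 0) (W : Matrix p p ℝ) :
    ∀ j b, j ≠ i → (Q * W) j b = 0 := by
  intro j b hj
  rw [Matrix.mul_apply]
  exact Finset.sum_eq_zero fun a _ => by rw [hQ j a hj, zero_mul]

lemma qwr_apply_zero (hQ : ∀ j b, j ≠ i → Q j b = 0) (hR : R = Qᵀ)
    (W : Matrix p p ℝ) : ∀ j k, ¬(j = i ∧ k = i) → (Q * W * R) j k = 0 := by
  intro j k hjk
  by_cases hj : j = i
  · have hk : k ≠ i := fun h => hjk ⟨hj, h⟩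
    rw [Matrix.mul_apply]
    refine Finset.sum_eq_zero fun b _ => ?_
    have : R b k = 0 := by rw [hR, Matrix.transpose_apply]; exact hQ k b hk
    rw [this, mul_zero]
  · rw [Matrix.mul_apply]
    refine Finset.sum_eq_zero fun b _ => ?_
    rw [qw_row_zero hQ W j b hj, zero_mul]

/-- Core lemma: SNIP of the Schur complement implies SNIP of the block matrix. -/
lemma hasSNIP_fromBlocks_of_schur (hR : R = Qᵀ) (hQ : ∀ j b, j ≠ i → Q j b = 0)
    (hS : IsUnit S.det) (h : HasSNIP (P - Q * S⁻¹ * R) i) :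
    HasSNIP (fromBlocks P Q R S) (Sum.inl i) := by
  intro X hXsym hXhad hXdiag hXrows
  set M := fromBlocks P Q R S with hM
  set X11 := Matrix.of fun a b => X (Sum.inl a) (Sum.inl b) with hX11
  set X12 := Matrix.of fun (a : m) (b : p) => X (Sum.inl a) (Sum.inr b) with hX12
  set X21 := Matrix.of fun (a : p) (b : m) => X (Sum.inr a) (Sum.inl b) with hX21
  set X22 := Matrix.of fun (a b : p) => X (Sum.inr a) (Sum.inr b) with hX22
  have hXb : X = fromBlocks X11 X12 X21 X22 := by
    ext x y; cases x <;> cases y <;> rfl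
  have hMX : M * X = fromBlocks (P * X11 + Q * X21) (P * X12 + Q * X22)
      (R * X11 + S * X21) (R * X12 + S * X22) := by
    rw [hXb, hM, Matrix.fromBlocks_multiply]
  have h21 : R * X11 + S * X21 = 0 := by
    ext a b
    have := hXrows (Sum.inr a) (Sum.inl b) (by simp)
    rw [hMX] at this
    simpa using this
  have h22 : R * X12 + S * X22 = 0 := by
    ext a b
    have := hXrows (Sum.inr a) (Sum.inr b) (by simp)
    rw [hMX] at this
    simpa using this
  have hSinv : S⁻¹ * S = 1 := Matrix.nonsing_inv_mul S hS
  have hX21e : X21 = -(S⁻¹ * (R * X11)) := by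
    have h' : S * X21 = -(R * X11) := by rw [add_comm] at h21; exact eq_neg_of_add_eq_zero_left h21
    calc X21 = (S⁻¹ * S) * X21 := by rw [hSinv, Matrix.one_mul]
    _ = S⁻¹ * (S * X21) := by rw [Matrix.mul_assoc]
    _ = -(S⁻¹ * (R * X11)) := by rw [h', Matrix.mul_neg]
  have hX22e : X22 = -(S⁻¹ * (R * X12)) := by
    have h' : S * X22 = -(R * X12) := by rw [add_comm] at h22; exact eq_neg_of_add_eq_zero_left h22
    calc X22 = (S⁻¹ * S) * X22 := by rw [hSinv, Matrix.one_mul]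
    _ = S⁻¹ * (S * X22) := by rw [Matrix.mul_assoc]
    _ = -(S⁻¹ * (R * X12)) := by rw [h', Matrix.mul_neg]
  have hX110 : X11 = 0 := by
    apply h X11
    · ext a b
      have h' := congrFun (congrFun hXsym (Sum.inl b)) (Sum.inl a)
      rw [Matrix.transpose_apply] at h'
      show X (Sum.inl b) (Sum.inl a) = X (Sum.inl a) (Sum.inl b)
      exact h'.symm
    · intro j k
      by_cases hjk : j = i ∧ k = i
      · rw [hjk.1, hjk.2]
        have : X11 i i = 0 := hXdiag (Sum.inl i)
        rw [this, mul_zero]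
      · have hz : (Q * S⁻¹ * R) j k = 0 := qwr_apply_zero hQ hR S⁻¹ j k hjk
        have : (P - Q * S⁻¹ * R) j k = P j k := by
          rw [Matrix.sub_apply, hz, sub_zero]
        rw [this]
        exact hXhad (Sum.inl j) (Sum.inl k)
    · intro j; exact hXdiag (Sum.inl j)
    · intro j k hj
      have hQX21 : (Q * X21) j k = 0 := by
        rw [Matrix.mul_apply]
        exact Finset.sum_eq_zero fun b _ => by rw [hQ j b hj, zero_mul]
      have hPX11 : (P * X11) j k = 0 := by
        have := hXrows (Sum.inl j) (Sum.inl k) (fun hc => hj (Sum.inl.inj hc))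
        rw [hMX] at this
        simp only [Matrix.fromBlocks_apply₁₁, Matrix.add_apply] at this
        rw [hQX21] at this
        linarith
      have hQSR : ((Q * S⁻¹ * R) * X11) j k = 0 := by
        rw [Matrix.mul_apply]
        refine Finset.sum_eq_zero fun a _ => ?_
        rw [qwr_apply_zero hQ hR S⁻¹ j a (fun hc => hj hc.1), zero_mul]
      rw [Matrix.sub_mul, Matrix.sub_apply, hPX11, hQSR, sub_zero]
  have hX210 : X21 = 0 := by rw [hX21e, hX110, Matrix.mul_zero, Matrix.mul_zero, neg_zero]
  have hX120 : X12 = 0 := by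
    ext a b
    have : X (Sum.inl a) (Sum.inr b) = X (Sum.inr b) (Sum.inl a) :=
      (congrFun (congrFun hXsym (Sum.inl a)) (Sum.inr b)).symm
    have h0 : X21 b a = 0 := by rw [hX210]; rfl
    simp only [hX12, Matrix.of_apply]
    rw [this]
    exact h0
  have hX220 : X22 = 0 := by rw [hX22e, hX120, Matrix.mul_zero, Matrix.mul_zero, neg_zero]
  rw [hXb, hX110, hX210, hX120, hX220]
  ext x y; cases x <;> cases y <;> simp


/-- Core lemma: SNIP of the block matrix implies SNIP of the Schur complement. -/
lemma hasSNIP_schur_of_fromBlocks (hPsym : P.IsSymm) (hSsym : S.IsSymm) (hR : R = Qᵀ)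
    (hQ : ∀ j b, j ≠ i → Q j b = 0) (hS : IsUnit S.det)
    (h : HasSNIP (fromBlocks P Q R S) (Sum.inl i)) : HasSNIP (P - Q * S⁻¹ * R) i := by
  intro X11 hsym hhad hdiag hrows
  set Y := -(X11 * (Q * S⁻¹)) with hY
  have hXY : ∀ j b, Y j b = -(X11 j i * (Q * S⁻¹) i b) := by
    intro j b
    rw [hY, Matrix.neg_apply, Matrix.mul_apply]
    congr 1
    rw [Finset.sum_eq_single i]
    · intro a _ ha
      rw [qw_row_zero hQ S⁻¹ a b ha, mul_zero]
    · intro habs; exact absurd (Finset.mem_univ i) habs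
  have hYi : ∀ b, Y i b = 0 := by
    intro b; rw [hXY i b, hdiag i, zero_mul, neg_zero]
  have hYt : Yᵀ = -(S⁻¹ * (R * X11)) := by
    rw [hY, Matrix.transpose_neg, Matrix.transpose_mul, Matrix.transpose_mul,
      Matrix.transpose_nonsing_inv, hSsym.eq, hsym.eq, hR, Matrix.mul_assoc]
  have hProws : ∀ j k, j ≠ i → (P * X11) j k = 0 := by
    intro j k hj
    have hP' : P = (P - Q * S⁻¹ * R) + Q * S⁻¹ * R := by rw [sub_add_cancel]
    have h1 : ((P - Q * S⁻¹ * R) * X11) j k = 0 := hrows j k hj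
    have h2 : ((Q * S⁻¹ * R) * X11) j k = 0 := by
      rw [Matrix.mul_apply]
      refine Finset.sum_eq_zero fun a _ => ?_
      rw [qwr_apply_zero hQ hR S⁻¹ j a (fun hc => hj hc.1), zero_mul]
    calc (P * X11) j k = (((P - Q * S⁻¹ * R) + Q * S⁻¹ * R) * X11) j k := by rw [← hP']
    _ = ((P - Q * S⁻¹ * R) * X11) j k + ((Q * S⁻¹ * R) * X11) j k := by
        rw [Matrix.add_mul, Matrix.add_apply]
    _ = 0 := by rw [h1, h2, add_zero]
  set X := fromBlocks X11 Y Yᵀ (0 : Matrix p p ℝ) with hX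
  have hX0 : X = 0 := by
    apply h X
    · rw [Matrix.IsSymm, hX, Matrix.fromBlocks_transpose, hsym.eq, Matrix.transpose_transpose,
        Matrix.transpose_zero]
    · intro x y
      rcases x with j | a <;> rcases y with k | b
      · show (fromBlocks P Q R S) (Sum.inl j) (Sum.inl k) * X (Sum.inl j) (Sum.inl k) = 0
        rw [hX]
        simp only [Matrix.fromBlocks_apply₁₁]
        by_cases hjk : j = i ∧ k = i
        · rw [hjk.1, hjk.2, hdiag i, mul_zero]
        · have hz : (Q * S⁻¹ * R) j k = 0 := qwr_apply_zero hQ hR S⁻¹ j k hjk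
          have he : P j k = (P - Q * S⁻¹ * R) j k := by rw [Matrix.sub_apply, hz, sub_zero]
          rw [he]; exact hhad j k
      · show (fromBlocks P Q R S) (Sum.inl j) (Sum.inr b) * X (Sum.inl j) (Sum.inr b) = 0
        rw [hX]
        simp only [Matrix.fromBlocks_apply₁₂]
        by_cases hj : j = i
        · rw [hj, hYi b, mul_zero]
        · rw [hQ j b hj, zero_mul]
      · show (fromBlocks P Q R S) (Sum.inr a) (Sum.inl k) * X (Sum.inr a) (Sum.inl k) = 0
        rw [hX]
        simp only [Matrix.fromBlocks_apply₂₁, Matrix.transpose_apply]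
        by_cases hk : k = i
        · rw [hk, hYi a, mul_zero]
        · rw [hR, Matrix.transpose_apply, hQ k a hk, zero_mul]
      · show (fromBlocks P Q R S) (Sum.inr a) (Sum.inr b) * X (Sum.inr a) (Sum.inr b) = 0
        rw [hX]
        simp only [Matrix.fromBlocks_apply₂₂, Matrix.zero_apply, mul_zero]
    · intro x
      rcases x with j | a
      · exact hdiag j
      · rfl
    · intro x y hx
      have hMX : (fromBlocks P Q R S) * X = fromBlocks (P * X11 + Q * Yᵀ)
          (P * Y + Q * (0 : Matrix p p ℝ))
          (R * X11 + S * Yᵀ) (R * Y + S * (0 : Matrix p p ℝ)) := by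
        rw [hX, Matrix.fromBlocks_multiply]
      rw [hMX]
      have hSYt : S * Yᵀ = -(R * X11) := by
        rw [hYt, Matrix.mul_neg, ← Matrix.mul_assoc, Matrix.mul_nonsing_inv S hS,
          Matrix.one_mul]
      rcases x with j | a <;> rcases y with k | b
      · have hj : j ≠ i := fun hc => hx (by rw [hc])
        simp only [Matrix.fromBlocks_apply₁₁, Matrix.add_apply]
        have hQYt : (Q * Yᵀ) j k = 0 := by
          rw [Matrix.mul_apply]
          exact Finset.sum_eq_zero fun b _ => by rw [hQ j b hj, zero_mul]
        rw [hProws j k hj, hQYt, add_zero]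
      · have hj : j ≠ i := fun hc => hx (by rw [hc])
        simp only [Matrix.fromBlocks_apply₁₂, Matrix.add_apply]
        have hPY : (P * Y) j b = 0 := by
          rw [Matrix.mul_apply]
          have : ∀ a', P j a' * Y a' b = -(Q * S⁻¹) i b * (P j a' * X11 a' i) := by
            intro a'; rw [hXY a' b]; ring
          rw [Finset.sum_congr rfl fun a' _ => this a', ← Finset.mul_sum]
          have : ∑ a', P j a' * X11 a' i = (P * X11) j i := (Matrix.mul_apply).symm
          rw [this, hProws j i hj, mul_zero]
        rw [hPY, Matrix.mul_zero, Matrix.zero_apply, add_zero]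
      · simp only [Matrix.fromBlocks_apply₂₁, Matrix.add_apply]
        have := congrFun (congrFun hSYt a) k
        rw [Matrix.neg_apply] at this
        rw [this]
        ring
      · simp only [Matrix.fromBlocks_apply₂₂, Matrix.add_apply]
        have hRY : (R * Y) a b = 0 := by
          rw [Matrix.mul_apply]
          refine Finset.sum_eq_zero fun j _ => ?_
          by_cases hj : j = i
          · rw [hj, hYi b, mul_zero]
          · rw [hR, Matrix.transpose_apply, hQ j a hj, zero_mul]
        rw [hRY, Matrix.mul_zero, Matrix.zero_apply, add_zero]
  ext a b
  have := congrFun (congrFun hX0 (Sum.inl a)) (Sum.inl b)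
  rw [hX] at this
  simpa using this
lemma sum_extend_zero {m : Type*} [Fintype m] [DecidableEq m] (i : m) (g : m → ℝ)
    (hgi : g i = 0) : ∑ a, g a = ∑ a : {j : m // j ≠ i}, g a.1 := by
  have h1 : ∑ a, g a = g i + ∑ a ∈ Finset.univ.erase i, g a :=
    (Finset.add_sum_erase Finset.univ g (Finset.mem_univ i)).symm
  rw [h1, hgi, zero_add]
  exact Finset.sum_subtype (Finset.univ.erase i) (fun x => by simp [Finset.mem_erase]) g

/-- Core lemma: under SNIP, the two diagonal blocks cannot both be singular. -/
lemma isUnit_or_isUnit_of_hasSNIP (hR : R = Qᵀ) (hQ : ∀ j b, j ≠ i → Q j b = 0)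
    (h : HasSNIP (fromBlocks P Q R S) (Sum.inl i)) :
    IsUnit (delRC P i).det ∨ IsUnit S.det := by
  by_contra hc
  push_neg at hc
  obtain ⟨hB, hS⟩ := hc
  rw [isUnit_iff_ne_zero, not_not] at hB hS
  obtain ⟨u, hu, hBu⟩ := Matrix.exists_mulVec_eq_zero_iff.mpr hB
  obtain ⟨v, hv, hSv⟩ := Matrix.exists_mulVec_eq_zero_iff.mpr hS
  set u' : m → ℝ := fun j => if hj : j = i then 0 else u ⟨j, hj⟩ with hu'
  have hu'i : u' i = 0 := by rw [hu']; simp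
  have hu'ne : ∀ (j : m) (hj : j ≠ i), u' j = u ⟨j, hj⟩ := by
    intro j hj; rw [hu']; simp [hj]
  set X : Matrix (m ⊕ p) (m ⊕ p) ℝ := Matrix.of fun x y =>
    match x, y with
    | Sum.inl j, Sum.inr b => u' j * v b
    | Sum.inr b, Sum.inl j => u' j * v b
    | _, _ => 0 with hXdef
  have hPu' : ∀ j, j ≠ i → ∑ a, P j a * u' a = 0 := by
    intro j hj
    have hz : P j i * u' i = 0 := by rw [hu'i, mul_zero]
    rw [sum_extend_zero i _ hz]
    have : ∀ a : {x : m // x ≠ i}, P j a.1 * u' a.1 = delRC P i ⟨j, hj⟩ a * u a := by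
      intro a; rw [hu'ne a.1 a.2]; rfl
    rw [Finset.sum_congr rfl fun a _ => this a]
    exact congrFun hBu ⟨j, hj⟩
  have hX0 : X = 0 := by
    apply h X
    · ext x y
      rcases x with j | b <;> rcases y with k | c <;> simp [hXdef]
    · intro x y
      rcases x with j | b <;> rcases y with k | c
      · show (fromBlocks P Q R S) _ _ * (0 : ℝ) = 0
        rw [mul_zero]
      · show (fromBlocks P Q R S) (Sum.inl j) (Sum.inr c) * (u' j * v c) = 0
        simp only [Matrix.fromBlocks_apply₁₂]
        by_cases hj : j = i
        · rw [hj, hu'i, zero_mul, mul_zero]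
        · rw [hQ j c hj, zero_mul]
      · show (fromBlocks P Q R S) (Sum.inr b) (Sum.inl k) * (u' k * v b) = 0
        simp only [Matrix.fromBlocks_apply₂₁]
        by_cases hk : k = i
        · rw [hk, hu'i, zero_mul, mul_zero]
        · rw [hR, Matrix.transpose_apply, hQ k b hk, zero_mul]
      · show (fromBlocks P Q R S) _ _ * (0 : ℝ) = 0
        rw [mul_zero]
    · intro x; rcases x with j | b <;> rfl
    · intro x y hx
      rw [Matrix.mul_apply]
      rcases x with j | b <;> rcases y with k | c
      · refine Finset.sum_eq_zero fun z _ => ?_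
        rcases z with a | b'
        · show (fromBlocks P Q R S) (Sum.inl j) (Sum.inl a) * (0 : ℝ) = 0; rw [mul_zero]
        · have hj : j ≠ i := fun hc' => hx (by rw [hc'])
          show (fromBlocks P Q R S) (Sum.inl j) (Sum.inr b') * (u' k * v b') = 0
          simp only [Matrix.fromBlocks_apply₁₂]
          rw [hQ j b' hj, zero_mul]
      · have hj : j ≠ i := fun hc' => hx (by rw [hc'])
        rw [Fintype.sum_sum_type]
        have h1 : ∑ a : m, (fromBlocks P Q R S) (Sum.inl j) (Sum.inl a) * X (Sum.inl a) (Sum.inr c)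
            = ∑ a : m, (P j a * u' a) * v c := by
          refine Finset.sum_congr rfl fun a _ => ?_
          show P j a * (u' a * v c) = _
          ring
        have h2 : ∑ b' : p, (fromBlocks P Q R S) (Sum.inl j) (Sum.inr b') *
            X (Sum.inr b') (Sum.inr c) = 0 := by
          refine Finset.sum_eq_zero fun b' _ => ?_
          show (fromBlocks P Q R S) (Sum.inl j) (Sum.inr b') * (0 : ℝ) = 0
          rw [mul_zero]
        rw [h1, h2, ← Finset.sum_mul, hPu' j hj, zero_mul, add_zero]
      · rw [Fintype.sum_sum_type]
        have h1 : ∑ a : m, (fromBlocks P Q R S) (Sum.inr b) (Sum.inl a) * X (Sum.inl a) (Sum.inl k)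
            = 0 := by
          refine Finset.sum_eq_zero fun a _ => ?_
          show (fromBlocks P Q R S) (Sum.inr b) (Sum.inl a) * (0 : ℝ) = 0
          rw [mul_zero]
        have h2 : ∑ b' : p, (fromBlocks P Q R S) (Sum.inr b) (Sum.inr b') *
            X (Sum.inr b') (Sum.inl k) = (∑ b' : p, S b b' * v b') * u' k := by
          rw [Finset.sum_mul]
          refine Finset.sum_congr rfl fun b' _ => ?_
          show S b b' * (u' k * v b') = S b b' * v b' * u' k
          ring
        have h3 : ∑ b' : p, S b b' * v b' = 0 := congrFun hSv b
        rw [h1, h2, h3, zero_mul, zero_add]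
      · rw [Fintype.sum_sum_type]
        have h1 : ∑ a : m, (fromBlocks P Q R S) (Sum.inr b) (Sum.inl a) * X (Sum.inl a) (Sum.inr c)
            = (∑ a : m, Q a b * u' a) * v c := by
          rw [Finset.sum_mul]
          refine Finset.sum_congr rfl fun a _ => ?_
          show R b a * (u' a * v c) = Q a b * u' a * v c
          rw [hR, Matrix.transpose_apply]; ring
        have h2 : ∑ a : m, Q a b * u' a = 0 := by
          have hz : Q i b * u' i = 0 := by rw [hu'i, mul_zero]
          have : ∀ a, Q a b * u' a = 0 := by
            intro a
            by_cases ha : a = i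
            · rw [ha, hu'i, mul_zero]
            · rw [hQ a b ha, zero_mul]
          exact Finset.sum_eq_zero fun a _ => this a
        have h3 : ∑ b' : p, (fromBlocks P Q R S) (Sum.inr b) (Sum.inr b') *
            X (Sum.inr b') (Sum.inr c) = 0 := by
          refine Finset.sum_eq_zero fun b' _ => ?_
          show (fromBlocks P Q R S) (Sum.inr b) (Sum.inr b') * (0 : ℝ) = 0
          rw [mul_zero]
        rw [h1, h2, h3, zero_mul, add_zero]
  obtain ⟨a, ha⟩ := Function.ne_iff.mp hu
  obtain ⟨c, hc'⟩ := Function.ne_iff.mp hv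
  have : X (Sum.inl a.1) (Sum.inr c) = u' a.1 * v c := rfl
  rw [hX0] at this
  rw [hu'ne a.1 a.2] at this
  have : u ⟨a.1, a.2⟩ * v c = 0 := by
    rw [← this]; rfl
  rcases mul_eq_zero.mp this with h' | h'
  · exact ha (by simpa using h')
  · exact hc' h'
end Core
lemma hasSNIP_submatrix {m n : Type*} [Fintype m] [Fintype n] [DecidableEq m] [DecidableEq n]
    (A : Matrix n n ℝ) (e : m ≃ n) (i : n) (h : HasSNIP A i) :
    HasSNIP (A.submatrix e e) (e.symm i) := by
  intro X hsym hhad hdiag hrows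
  have key : X.submatrix e.symm e.symm = 0 := by
    apply h
    · rw [Matrix.IsSymm, Matrix.transpose_submatrix, hsym.eq]
    · intro j k
      have := hhad (e.symm j) (e.symm k)
      simp only [Matrix.submatrix_apply, Equiv.apply_symm_apply] at this ⊢
      exact this
    · intro j
      exact hdiag (e.symm j)
    · intro j k hj
      have hA : A = (A.submatrix e e).submatrix e.symm e.symm := by
        ext a b; simp
      rw [hA, Matrix.submatrix_mul_equiv]
      simp only [Matrix.submatrix_apply]
      exact hrows (e.symm j) (e.symm k) (fun hc => hj (by
        have := congrArg e hc
        simpa using this))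
  have : X = (X.submatrix e.symm e.symm).submatrix e e := by ext a b; simp
  rw [this, key]
  ext a b
  simp
section Glue


/-- The splitting of `V` into `V₁` and `V₂ \ {i}`. -/
def splitEquiv (V₁ V₂ : Finset V) (i : V) (hi1 : i ∈ V₁)
    (hunion : ∀ x, x ∈ V₁ ∨ x ∈ V₂) (hinter : V₁ ∩ V₂ = {i}) :
    V ≃ ({x // x ∈ V₁} ⊕ {x : V // x ∈ V₂ ∧ x ≠ i}) where
  toFun x := if h : x ∈ V₁ then Sum.inl ⟨x, h⟩ else
    Sum.inr ⟨x, (hunion x).resolve_left h, fun he => h (he ▸ hi1)⟩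
  invFun y := match y with
    | Sum.inl a => a.1
    | Sum.inr b => b.1
  left_inv x := by by_cases h : x ∈ V₁ <;> simp [h]
  right_inv y := by
    rcases y with a | b
    · simp [a.2]
    · have hb : b.1 ∉ V₁ := fun h => b.2.2 (by
        have : b.1 ∈ V₁ ∩ V₂ := Finset.mem_inter.mpr ⟨h, b.2.1⟩
        rw [hinter] at this
        exact Finset.mem_singleton.mp this)
      simp [hb]

/-- The splitting of `V \ {i}` into `V₁ \ {i}` and `V₂ \ {i}`. -/
def delEquiv (V₁ V₂ : Finset V) (i : V) (hi1 : i ∈ V₁)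
    (hunion : ∀ x, x ∈ V₁ ∨ x ∈ V₂) (hinter : V₁ ∩ V₂ = {i}) :
    {j : V // j ≠ i} ≃ ({j : {x // x ∈ V₁} // j ≠ ⟨i, hi1⟩} ⊕ {x : V // x ∈ V₂ ∧ x ≠ i}) where
  toFun x := if h : x.1 ∈ V₁ then
      Sum.inl ⟨⟨x.1, h⟩, fun hc => x.2 (congrArg Subtype.val hc)⟩
    else Sum.inr ⟨x.1, (hunion x.1).resolve_left h, x.2⟩
  invFun y := match y with
    | Sum.inl a => ⟨a.1.1, fun hc => a.2 (Subtype.ext hc)⟩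
    | Sum.inr b => ⟨b.1, b.2.2⟩
  left_inv x := by
    by_cases h : x.1 ∈ V₁ <;> simp [h]
  right_inv y := by
    rcases y with a | b
    · simp [a.1.2]
    · have hb : b.1 ∉ V₁ := fun h => b.2.2 (by
        have : b.1 ∈ V₁ ∩ V₂ := Finset.mem_inter.mpr ⟨h, b.2.1⟩
        rw [hinter] at this
        exact Finset.mem_singleton.mp this)
      simp [hb]

lemma mem_inter_eq_i {V₁ V₂ : Finset V} {i : V} (hinter : V₁ ∩ V₂ = {i}) {x : V}
    (h1 : x ∈ V₁) (h2 : x ∈ V₂) : x = i := by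
  have : x ∈ V₁ ∩ V₂ := Finset.mem_inter.mpr ⟨h1, h2⟩
  rw [hinter] at this
  exact Finset.mem_singleton.mp this

lemma cross_not_adj {G : SimpleGraph V} {V₁ V₂ : Finset V} {i : V}
    (hinter : V₁ ∩ V₂ = {i})
    (hedges : ∀ x y, G.Adj x y → (x ∈ V₁ ∧ y ∈ V₁) ∨ (x ∈ V₂ ∧ y ∈ V₂))
    {x y : V} (h1 : x ∈ V₁) (h2 : y ∈ V₂) (hx : x ≠ i) (hy : y ≠ i) : ¬ G.Adj x y := by
  intro hadj
  rcases hedges x y hadj with ⟨_, hy1⟩ | ⟨hx2, _⟩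
  · exact hy (mem_inter_eq_i hinter hy1 h2)
  · exact hx (mem_inter_eq_i hinter h1 hx2)

lemma cross_zero {G : SimpleGraph V} {A : Matrix V V ℝ} (hA : InS G A)
    {V₁ V₂ : Finset V} {i : V} (hinter : V₁ ∩ V₂ = {i})
    (hedges : ∀ x y, G.Adj x y → (x ∈ V₁ ∧ y ∈ V₁) ∨ (x ∈ V₂ ∧ y ∈ V₂))
    {x y : V} (h1 : x ∈ V₁) (h2 : y ∈ V₂) (hx : x ≠ i) (hy : y ≠ i) : A x y = 0 := by
  have hne : x ≠ y := fun he => hx (mem_inter_eq_i hinter h1 (he ▸ h2))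
  by_contra h0
  exact cross_not_adj hinter hedges h1 h2 hx hy ((hA.2 x y hne).mp h0)

/-- Every symmetric pattern has an invertible completion: shift the diagonal. -/
lemma exists_shift_det_ne_zero {p : Type*} [Fintype p] [DecidableEq p] (M : Matrix p p ℝ) :
    ∃ t : ℝ, (M + t • (1 : Matrix p p ℝ)).det ≠ 0 := by
  have hmono := Matrix.charpoly_monic (-M)
  have hne : (-M).charpoly ≠ 0 := hmono.ne_zero
  have hcard : ((-M).charpoly.natDegree : Cardinal) < Cardinal.mk ℝ :=
    lt_of_lt_of_le (Cardinal.nat_lt_aleph0 _) (Cardinal.aleph0_le_mk ℝ)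
  obtain ⟨t, ht⟩ := Polynomial.exists_eval_ne_zero_of_natDegree_lt_card _ hne hcard
  refine ⟨t, ?_⟩
  have key : (M + t • (1 : Matrix p p ℝ)).det = Polynomial.eval t (-M).charpoly := by
    rw [Matrix.charpoly, ← Polynomial.coe_evalRingHom, RingHom.map_det]
    congr 1
    ext a b
    by_cases hab : a = b
    · subst hab
      simp [Matrix.charmatrix_apply_eq]
      ring
    · simp [Matrix.charmatrix_apply_ne _ _ _ hab, Matrix.one_apply_ne hab]
  rw [key]
  exact ht

end Glue
section Assembly


lemma splitEquiv_apply_mem (V₁ V₂ : Finset V) (i : V) (hi1 : i ∈ V₁)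
    (hunion : ∀ x, x ∈ V₁ ∨ x ∈ V₂) (hinter : V₁ ∩ V₂ = {i}) (j : {x // x ∈ V₁}) :
    splitEquiv V₁ V₂ i hi1 hunion hinter j.1 = Sum.inl j := by
  simp [splitEquiv, j.2]

lemma splitEquiv_apply_not_mem (V₁ V₂ : Finset V) (i : V) (hi1 : i ∈ V₁)
    (hunion : ∀ x, x ∈ V₁ ∨ x ∈ V₂) (hinter : V₁ ∩ V₂ = {i}) (b : {x : V // x ∈ V₂ ∧ x ≠ i}) :
    splitEquiv V₁ V₂ i hi1 hunion hinter b.1 = Sum.inr b := by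
  have hb : b.1 ∉ V₁ := fun h => b.2.2 (mem_inter_eq_i hinter h b.2.1)
  simp [splitEquiv, hb]

lemma NPSet_subset_of_side (G : SimpleGraph V) (i : V) (V₁ V₂ : Finset V)
    (hi1 : i ∈ V₁)
    (hunion : ∀ x, x ∈ V₁ ∨ x ∈ V₂)
    (hinter : V₁ ∩ V₂ = {i})
    (hedges : ∀ x y, G.Adj x y → (x ∈ V₁ ∧ y ∈ V₁) ∨ (x ∈ V₂ ∧ y ∈ V₂)) :
    NPSet (G.comap (Subtype.val : {x // x ∈ V₁} → V)) ⟨i, hi1⟩ ⊆ NPSet G i := by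
  classical
  rintro s ⟨k, ℓ, hkl, rfl, A₁, hA₁, hsnip₁, hk, hℓ⟩
  set i₁ : {x // x ∈ V₁} := (⟨i, hi1⟩ : {x // x ∈ V₁}) with hi₁
  set e := splitEquiv V₁ V₂ i hi1 hunion hinter with he
  set Madj : Matrix {x : V // x ∈ V₂ ∧ x ≠ i} {x : V // x ∈ V₂ ∧ x ≠ i} ℝ := Matrix.of fun a b => if G.Adj a.1 b.1 then 1 else 0 with hMadj
  obtain ⟨t, hdet⟩ := exists_shift_det_ne_zero Madj
  set S : Matrix {x : V // x ∈ V₂ ∧ x ≠ i} {x : V // x ∈ V₂ ∧ x ≠ i} ℝ := Madj + t • 1 with hSdef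
  have hS : IsUnit S.det := isUnit_iff_ne_zero.mpr hdet
  have hSsym : S.IsSymm := by
    rw [Matrix.IsSymm, hSdef, Matrix.transpose_add, Matrix.transpose_smul, Matrix.transpose_one]
    congr 1
    ext a b
    simp only [Matrix.transpose_apply, hMadj, Matrix.of_apply]
    rw [SimpleGraph.adj_comm]
  set q : {x : V // x ∈ V₂ ∧ x ≠ i} → ℝ := fun b => if G.Adj i b.1 then 1 else 0 with hq
  set Q : Matrix {x // x ∈ V₁} {x : V // x ∈ V₂ ∧ x ≠ i} ℝ := Matrix.of fun j b => if j = i₁ then q b else 0 with hQdef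
  set R := Qᵀ with hRdef
  have hQ : ∀ (j : {x // x ∈ V₁}) (b : {x : V // x ∈ V₂ ∧ x ≠ i}), j ≠ i₁ → Q j b = 0 := by
    intro j b hj; simp [hQdef, hj]
  set csc : ℝ := (Q * S⁻¹ * R) i₁ i₁ with hcsc
  set D : Matrix {x // x ∈ V₁} {x // x ∈ V₁} ℝ := Matrix.of fun j k => if j = i₁ ∧ k = i₁ then csc else 0 with hD
  set P : Matrix {x // x ∈ V₁} {x // x ∈ V₁} ℝ := A₁ + D with hP
  have hQSR : Q * S⁻¹ * R = D := by
    ext j k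
    by_cases hjk : j = i₁ ∧ k = i₁
    · rw [hjk.1, hjk.2]
      simp [hD, hcsc]
    · rw [qwr_apply_zero hQ hRdef S⁻¹ j k hjk]
      simp [hD, hjk]
  have hSchur : P - Q * S⁻¹ * R = A₁ := by rw [hQSR, hP, add_sub_cancel_right]
  set M := fromBlocks P Q R S with hM
  have hMSNIP : HasSNIP M (Sum.inl i₁) := by
    refine hasSNIP_fromBlocks_of_schur hRdef hQ hS ?_
    rw [hSchur]; exact hsnip₁
  set A : Matrix V V ℝ := M.submatrix e e with hA
  have heL : ∀ (j : {x // x ∈ V₁}), e j.1 = Sum.inl j := splitEquiv_apply_mem V₁ V₂ i hi1 hunion hinter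
  have heR : ∀ (b : {x : V // x ∈ V₂ ∧ x ≠ i}), e b.1 = Sum.inr b := splitEquiv_apply_not_mem V₁ V₂ i hi1 hunion hinter
  have hDsymm : Dᵀ = D := by
    ext a b
    simp only [Matrix.transpose_apply, hD, Matrix.of_apply]
    by_cases h1 : a = i₁ ∧ b = i₁
    · rw [h1.1, h1.2]
    · have h2 : ¬(b = i₁ ∧ a = i₁) := fun hc => h1 ⟨hc.2, hc.1⟩
      rw [if_neg h2, if_neg h1]
  have hPt : Pᵀ = P := by rw [hP, Matrix.transpose_add, hA₁.1.eq, hDsymm]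
  have hRt : Rᵀ = Q := by rw [hRdef, Matrix.transpose_transpose]
  have hQt : Qᵀ = R := hRdef.symm
  have hMsym : Mᵀ = M := by
    ext x y
    rcases x with j | b <;> rcases y with k | c
    · exact congrFun (congrFun hPt j) k
    · exact congrFun (congrFun hRt j) c
    · exact congrFun (congrFun hQt b) k
    · exact congrFun (congrFun hSsym.eq b) c
  have hAsym : A.IsSymm := by
    rw [Matrix.IsSymm, hA, Matrix.transpose_submatrix, hMsym]
  have hDoff : ∀ (j k : {x // x ∈ V₁}), j ≠ k → D j k = A₁ j k + D j k - A₁ j k := by intro j k _; ring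
  have hPoff : ∀ (j k : {x // x ∈ V₁}), j ≠ k → P j k = A₁ j k := by
    intro j k hjk
    have : ¬(j = i₁ ∧ k = i₁) := fun hc => hjk (hc.1.trans hc.2.symm)
    rw [hP]
    simp [hD, this]
  have hInS : InS G A := by
    constructor
    · exact hAsym
    · intro x y hxy
      have hAxy : A x y = M (e x) (e y) := rfl
      rcases hx : e x with j | b <;> rcases hy : e y with k | c
      all_goals (
        have hx' : x = e.symm (e x) := (e.symm_apply_apply x).symm
        have hy' : y = e.symm (e y) := (e.symm_apply_apply y).symm
        rw [hx] at hx'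
        rw [hy] at hy')
      · -- both in V₁
        have hxv : x = j.1 := hx'
        have hyv : y = k.1 := hy'
        have hjk : j ≠ k := fun hc => hxy (by rw [hxv, hyv, hc])
        rw [hAxy, hx, hy]
        show P j k ≠ 0 ↔ G.Adj x y
        rw [hPoff j k hjk, hxv, hyv]
        have := hA₁.2 j k hjk
        simpa using this
      · -- x in V₁, y in V₂'
        have hxv : x = j.1 := hx'
        have hyv : y = c.1 := hy'
        rw [hAxy, hx, hy]
        show Q j c ≠ 0 ↔ G.Adj x y
        by_cases hj : j = i₁
        · have hxi : x = i := by rw [hxv, hj]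
          rw [hQdef]
          simp only [Matrix.of_apply, if_pos hj, hq, hxi, hyv]
          by_cases hadj : G.Adj i c.1 <;> simp [hadj]
        · have hxni : x ≠ i := fun hc => hj (by rw [hi₁]; exact Subtype.ext (hxv ▸ hc))
          rw [hQ j c hj]
          have hna : ¬ G.Adj x y := by
            rw [hxv, hyv]
            exact cross_not_adj hinter hedges j.2 c.2.1 (hxv ▸ hxni) c.2.2
          simp [hna]
      · -- x in V₂', y in V₁
        have hxv : x = b.1 := hx'
        have hyv : y = k.1 := hy'
        rw [hAxy, hx, hy]
        show R b k ≠ 0 ↔ G.Adj x y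
        rw [hRdef, Matrix.transpose_apply]
        by_cases hk : k = i₁
        · have hyi : y = i := by rw [hyv, hk]
          have hflip : G.Adj x y ↔ G.Adj i b.1 := by
            rw [hxv, hyi]; exact ⟨fun h => h.symm, fun h => h.symm⟩
          rw [hQdef]
          simp only [Matrix.of_apply, if_pos hk, hq, hflip]
          by_cases hadj : G.Adj i b.1 <;> simp [hadj]
        · have hyni : y ≠ i := fun hc => hk (by rw [hi₁]; exact Subtype.ext (hyv ▸ hc))
          rw [hQ k b hk]
          have hna : ¬ G.Adj y x := by
            rw [hxv, hyv]
            exact cross_not_adj hinter hedges k.2 b.2.1 (hyv ▸ hyni) b.2.2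
          rw [SimpleGraph.adj_comm] at hna
          simp [hna]
      · -- both in V₂'
        have hxv : x = b.1 := hx'
        have hyv : y = c.1 := hy'
        have hbc : b ≠ c := fun hc => hxy (by rw [hxv, hyv, hc])
        rw [hAxy, hx, hy]
        show S b c ≠ 0 ↔ G.Adj x y
        have hone : (1 : Matrix {x : V // x ∈ V₂ ∧ x ≠ i} {x : V // x ∈ V₂ ∧ x ≠ i} ℝ) b c = 0 := Matrix.one_apply_ne hbc
        rw [hSdef]
        simp only [Matrix.add_apply, Matrix.smul_apply, hone, smul_zero, add_zero, hMadj,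
          Matrix.of_apply, hxv, hyv]
        by_cases hadj : G.Adj b.1 c.1 <;> simp [hadj]
  have hsnipA : HasSNIP A i := by
    have h' := hasSNIP_submatrix M e (Sum.inl i₁) hMSNIP
    have : e.symm (Sum.inl i₁) = i := rfl
    rw [this] at h'
    exact h'
  have hnullA : nullity A = k := by
    rw [hA, nullity_submatrix_equiv, hM, nullity_fromBlocks_schur P Q R S hS, hSchur, hk]
  have hnullDel : nullity (delRC A i) = ℓ := by
    set eD := delEquiv V₁ V₂ i hi1 hunion hinter with heD
    have hblocks : (delRC A i).submatrix eD.symm eD.symm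
        = fromBlocks (delRC A₁ i₁) 0 0 S := by
      ext x y
      rcases x with a | b <;> rcases y with a' | b'
      · show A a.1.1 a'.1.1 = delRC A₁ i₁ a a'
        have h1 : A a.1.1 a'.1.1 = M (e a.1.1) (e a'.1.1) := rfl
        rw [h1, heL a.1, heL a'.1]
        show P a.1 a'.1 = A₁ a.1 a'.1
        have hane : a.1 ≠ i₁ := a.2
        have hneg : ¬((a.1 : {x // x ∈ V₁}) = i₁ ∧ (a'.1 : {x // x ∈ V₁}) = i₁) :=
          fun hc => hane hc.1
        rw [hP, Matrix.add_apply]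
        show A₁ a.1 a'.1 + (if (a.1 : {x // x ∈ V₁}) = i₁ ∧ (a'.1 : {x // x ∈ V₁}) = i₁
          then csc else 0) = A₁ a.1 a'.1
        rw [if_neg hneg, add_zero]
      · show A a.1.1 b'.1 = (0 : Matrix _ _ ℝ) a b'
        have h1 : A a.1.1 b'.1 = M (e a.1.1) (e b'.1) := rfl
        rw [h1, heL a.1, heR b']
        show Q a.1 b' = _
        rw [hQ a.1 b' a.2]
        rfl
      · show A b.1 a'.1.1 = (0 : Matrix _ _ ℝ) b a'
        have h1 : A b.1 a'.1.1 = M (e b.1) (e a'.1.1) := rfl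
        rw [h1, heR b, heL a'.1]
        show R b a'.1 = _
        rw [hRdef, Matrix.transpose_apply, hQ a'.1 b a'.2]
        rfl
      · show A b.1 b'.1 = S b b'
        have h1 : A b.1 b'.1 = M (e b.1) (e b'.1) := rfl
        rw [h1, heR b, heR b']
        rfl
    have h2 := nullity_submatrix_equiv (delRC A i) eD.symm
    rw [hblocks] at h2
    rw [← h2, nullity_fromBlocks_diag, hℓ, nullity_eq_zero_of_isUnit_det hS, add_zero]
  exact ⟨k, ℓ, hkl, rfl, A, hInS, hsnipA, hnullA, hnullDel⟩

end Assembly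
section Assembly2


lemma splitEquiv_apply_i (V₁ V₂ : Finset V) (i : V) (hi1 : i ∈ V₁)
    (hunion : ∀ x, x ∈ V₁ ∨ x ∈ V₂) (hinter : V₁ ∩ V₂ = {i}) :
    splitEquiv V₁ V₂ i hi1 hunion hinter i = Sum.inl ⟨i, hi1⟩ := by
  simp [splitEquiv, hi1]

/-- The equivalence between `{x // x ∈ V₁ ∧ x ≠ i}` and `{j : {x // x ∈ V₁} // j ≠ ⟨i,_⟩}`. -/
def sideEquiv (V₁ : Finset V) (i : V) (hi1 : i ∈ V₁) :
    {x : V // x ∈ V₁ ∧ x ≠ i} ≃ {j : {x // x ∈ V₁} // j ≠ ⟨i, hi1⟩} where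
  toFun x := ⟨⟨x.1, x.2.1⟩, fun hc => x.2.2 (congrArg Subtype.val hc)⟩
  invFun j := ⟨j.1.1, j.1.2, fun hc => j.2 (Subtype.ext hc)⟩
  left_inv x := rfl
  right_inv j := rfl

lemma main_le_aux (G : SimpleGraph V) (i : V) (V₁ V₂ : Finset V)
    (hi1 : i ∈ V₁)
    (hunion : ∀ x, x ∈ V₁ ∨ x ∈ V₂)
    (hinter : V₁ ∩ V₂ = {i})
    (hedges : ∀ x y, G.Adj x y → (x ∈ V₁ ∧ y ∈ V₁) ∨ (x ∈ V₂ ∧ y ∈ V₂))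
    (A : Matrix V V ℝ) (hA : InS G A) (hsnip : HasSNIP A i) :
    (IsUnit (Matrix.of fun a b : {x : V // x ∈ V₁ ∧ x ≠ i} => A a.1 b.1).det ∨
      IsUnit (Matrix.of fun a b : {x : V // x ∈ V₂ ∧ x ≠ i} => A a.1 b.1).det) ∧
    (IsUnit (Matrix.of fun a b : {x : V // x ∈ V₂ ∧ x ≠ i} => A a.1 b.1).det →
      ∃ A₁ : Matrix {x // x ∈ V₁} {x // x ∈ V₁} ℝ,
        InS (G.comap (Subtype.val : {x // x ∈ V₁} → V)) A₁ ∧ HasSNIP A₁ ⟨i, hi1⟩ ∧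
        nullity A₁ = nullity A ∧ nullity (delRC A₁ ⟨i, hi1⟩) = nullity (delRC A i)) := by
  classical
  set i₁ : {x // x ∈ V₁} := (⟨i, hi1⟩ : {x // x ∈ V₁}) with hi₁
  set e := splitEquiv V₁ V₂ i hi1 hunion hinter with he
  set P : Matrix {x // x ∈ V₁} {x // x ∈ V₁} ℝ := Matrix.of fun j k => A j.1 k.1 with hPdef
  set Q : Matrix {x // x ∈ V₁} {x : V // x ∈ V₂ ∧ x ≠ i} ℝ :=
    Matrix.of fun j b => A j.1 b.1 with hQdef
  set R : Matrix {x : V // x ∈ V₂ ∧ x ≠ i} {x // x ∈ V₁} ℝ :=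
    Matrix.of fun b k => A b.1 k.1 with hRdef2
  set S : Matrix {x : V // x ∈ V₂ ∧ x ≠ i} {x : V // x ∈ V₂ ∧ x ≠ i} ℝ :=
    Matrix.of fun a b => A a.1 b.1 with hSdef
  have hAsymm : ∀ x y : V, A x y = A y x := by
    intro x y
    have h := congrFun (congrFun hA.1.eq y) x
    rw [Matrix.transpose_apply] at h
    exact h
  have hR : R = Qᵀ := by
    ext b k'
    exact hAsymm b.1 k'.1
  have hQ : ∀ (j : {x // x ∈ V₁}) (b : {x : V // x ∈ V₂ ∧ x ≠ i}), j ≠ i₁ → Q j b = 0 := by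
    intro j b hj
    have hji : j.1 ≠ i := fun hc => hj (Subtype.ext hc)
    exact cross_zero hA hinter hedges j.2 b.2.1 hji b.2.2
  have hsub : A.submatrix e.symm e.symm = fromBlocks P Q R S := by
    ext x y
    rcases x with j | b <;> rcases y with k' | c <;> rfl
  have hMsnip : HasSNIP (fromBlocks P Q R S) (Sum.inl i₁) := by
    have h1 := hasSNIP_submatrix A e.symm i hsnip
    rw [hsub] at h1
    have h2 : e.symm.symm i = Sum.inl i₁ := by
      rw [Equiv.symm_symm]
      exact splitEquiv_apply_i V₁ V₂ i hi1 hunion hinter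
    rw [h2] at h1
    exact h1
  have hPsym : P.IsSymm := by
    rw [Matrix.IsSymm]
    ext a b
    exact hAsymm b.1 a.1
  have hSsym : S.IsSymm := by
    rw [Matrix.IsSymm]
    ext a b
    exact hAsymm b.1 a.1
  constructor
  · -- not both singular
    have hcore := isUnit_or_isUnit_of_hasSNIP hR hQ hMsnip
    rcases hcore with hB | hS
    · left
      set g := sideEquiv V₁ i hi1 with hg
      have hdet : (delRC P i₁).submatrix g g
          = (Matrix.of fun a b : {x : V // x ∈ V₁ ∧ x ≠ i} => A a.1 b.1) := by
        ext a b; rfl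
      rw [← hdet]
      rw [Matrix.det_submatrix_equiv_self]
      exact hB
    · right
      exact hS
  · -- extraction
    intro hS
    set W := Q * S⁻¹ * R with hW
    have hWzero : ∀ j k, ¬(j = i₁ ∧ k = i₁) → W j k = 0 := fun j k h =>
      qwr_apply_zero hQ hR S⁻¹ j k h
    set A₁ : Matrix {x // x ∈ V₁} {x // x ∈ V₁} ℝ := P - W with hA₁def
    have hA₁off : ∀ j k, ¬(j = i₁ ∧ k = i₁) → A₁ j k = A j.1 k.1 := by
      intro j k h
      rw [hA₁def, Matrix.sub_apply, hWzero j k h, sub_zero]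
      rfl
    refine ⟨A₁, ⟨?_, ?_⟩, ?_, ?_, ?_⟩
    · -- symmetric
      rw [Matrix.IsSymm]
      ext a b
      show A₁ b a = A₁ a b
      by_cases hab : a = i₁ ∧ b = i₁
      · rw [hab.1, hab.2]
      · have hba : ¬(b = i₁ ∧ a = i₁) := fun hc => hab ⟨hc.2, hc.1⟩
        rw [hA₁off b a hba, hA₁off a b hab]
        exact hAsymm b.1 a.1
    · -- pattern
      intro j k' hjk
      have hne : ¬(j = i₁ ∧ k' = i₁) := fun hc => hjk (hc.1.trans hc.2.symm)
      rw [hA₁off j k' hne]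
      have hv : j.1 ≠ k'.1 := fun hc => hjk (Subtype.ext hc)
      have := hA.2 j.1 k'.1 hv
      simpa using this
    · -- SNIP
      exact hasSNIP_schur_of_fromBlocks hPsym hSsym hR hQ hS hMsnip
    · -- nullity
      have h1 := nullity_submatrix_equiv A e.symm
      rw [hsub] at h1
      rw [hA₁def, hW, ← nullity_fromBlocks_schur P Q R S hS, h1]
    · -- nullity of deleted
      have hdelA₁ : delRC A₁ i₁ = delRC P i₁ := by
        ext a b
        show A₁ a.1 b.1 = P a.1 b.1
        rw [hA₁def, Matrix.sub_apply, hWzero a.1 b.1 (fun hc => a.2 hc.1), sub_zero]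
      set eD := delEquiv V₁ V₂ i hi1 hunion hinter with heD
      have hblocks : (delRC A i).submatrix eD.symm eD.symm
          = fromBlocks (delRC P i₁) 0 0 S := by
        ext x y
        rcases x with a | b <;> rcases y with a' | b'
        · rfl
        · show A a.1.1 b'.1 = (0 : Matrix _ _ ℝ) a b'
          have hai : a.1.1 ≠ i := fun hc => a.2 (Subtype.ext hc)
          rw [cross_zero hA hinter hedges a.1.2 b'.2.1 hai b'.2.2]
          rfl
        · show A b.1 a'.1.1 = (0 : Matrix _ _ ℝ) b a'
          have hai : a'.1.1 ≠ i := fun hc => a'.2 (Subtype.ext hc)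
          rw [hAsymm b.1 a'.1.1, cross_zero hA hinter hedges a'.1.2 b.2.1 hai b.2.2]
          rfl
        · rfl
      have h2 := nullity_submatrix_equiv (delRC A i) eD.symm
      rw [hblocks] at h2
      rw [hdelA₁, ← h2, nullity_fromBlocks_diag, nullity_eq_zero_of_isUnit_det hS, add_zero]

end Assembly2
section Final


lemma nullity_le_card {n : Type*} [Fintype n] [DecidableEq n] (A : Matrix n n ℝ) :
    nullity A ≤ Fintype.card n := by
  have := nullity_add_rank A
  omega

lemma NPSet_bddAbove (G : SimpleGraph V) (i : V) : BddAbove (NPSet G i) := by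
  refine ⟨2 * Fintype.card V, ?_⟩
  rintro s ⟨k, ℓ, hkl, rfl, A, hA, hsnip, hk, hℓ⟩
  have h1 : k ≤ Fintype.card V := hk ▸ nullity_le_card A
  have h2 : ℓ ≤ Fintype.card {j : V // j ≠ i} := hℓ ▸ nullity_le_card (delRC A i)
  have h3 : Fintype.card {j : V // j ≠ i} ≤ Fintype.card V := Fintype.card_subtype_le _
  omega

theorem stmt10 (G : SimpleGraph V) (i : V) (V₁ V₂ : Finset V)
    (hi1 : i ∈ V₁) (hi2 : i ∈ V₂)
    (hunion : ∀ x, x ∈ V₁ ∨ x ∈ V₂)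
    (hinter : V₁ ∩ V₂ = {i})
    (hedges : ∀ x y, G.Adj x y → (x ∈ V₁ ∧ y ∈ V₁) ∨ (x ∈ V₂ ∧ y ∈ V₂))
    (hconn1 : (G.comap (Subtype.val : {x // x ∈ V₁} → V)).Connected)
    (hconn2 : (G.comap (Subtype.val : {x // x ∈ V₂} → V)).Connected)
    (hcard1 : 2 ≤ V₁.card) (hcard2 : 2 ≤ V₂.card) :
    xixi G i = max (xixi (G.comap (Subtype.val : {x // x ∈ V₁} → V)) ⟨i, hi1⟩)
      (xixi (G.comap (Subtype.val : {x // x ∈ V₂} → V)) ⟨i, hi2⟩) := by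

  classical
  have hsub : ∀ x, x ∈ V₂ ∨ x ∈ V₁ := fun x => (hunion x).symm
  have hinter' : V₂ ∩ V₁ = {i} := by rw [Finset.inter_comm]; exact hinter
  have hedges' : ∀ x y, G.Adj x y → (x ∈ V₂ ∧ y ∈ V₂) ∨ (x ∈ V₁ ∧ y ∈ V₁) :=
    fun x y h => (hedges x y h).symm
  set S₁ := NPSet (G.comap (Subtype.val : {x // x ∈ V₁} → V)) ⟨i, hi1⟩ with hS₁
  set S₂ := NPSet (G.comap (Subtype.val : {x // x ∈ V₂} → V)) ⟨i, hi2⟩ with hS₂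
  have h1 : S₁ ⊆ NPSet G i := NPSet_subset_of_side G i V₁ V₂ hi1 hunion hinter hedges
  have h2 : S₂ ⊆ NPSet G i := NPSet_subset_of_side G i V₂ V₁ hi2 hsub hinter' hedges'
  have h3 : NPSet G i ⊆ S₁ ∪ S₂ := by
    rintro s ⟨k, ℓ, hkl, rfl, A, hA, hsnip, hk, hℓ⟩
    obtain ⟨hor, hext⟩ := main_le_aux G i V₁ V₂ hi1 hunion hinter hedges A hA hsnip
    rcases hor with hB1 | hB2
    · right
      obtain ⟨hor', hext'⟩ := main_le_aux G i V₂ V₁ hi2 hsub hinter' hedges' A hA hsnip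
      obtain ⟨A₂, hA₂, hsnip₂, hn, hd⟩ := hext' hB1
      exact ⟨k, ℓ, hkl, rfl, A₂, hA₂, hsnip₂, by rw [hn, hk], by rw [hd, hℓ]⟩
    · left
      obtain ⟨A₁, hA₁, hsnip₁, hn, hd⟩ := hext hB2
      exact ⟨k, ℓ, hkl, rfl, A₁, hA₁, hsnip₁, by rw [hn, hk], by rw [hd, hℓ]⟩
  have hset : NPSet G i = S₁ ∪ S₂ := Set.Subset.antisymm h3 (Set.union_subset h1 h2)
  rw [xixi_eq_sSup_SSet, xixi_eq_sSup_SSet, xixi_eq_sSup_SSet, ← hS₁, ← hS₂, hset]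
  rcases Set.eq_empty_or_nonempty S₁ with hE1 | hN1 <;>
    rcases Set.eq_empty_or_nonempty S₂ with hE2 | hN2
  · rw [hE1, hE2]
    simp [csSup_empty]
  · rw [hE1]
    simp only [Set.empty_union, csSup_empty]
    exact (bot_sup_eq _).symm
  · rw [hE2]
    simp only [Set.union_empty, csSup_empty]
    exact (sup_bot_eq _).symm
  · rw [csSup_union (NPSet_bddAbove _ _) hN1 (NPSet_bddAbove _ _) hN2]


end Final
end

section
/- Let (G,i) be a rooted graph on a finite vertex set V and let k ≥ 0. If (G,i) allows the nullity pair (k,k) with i-SNIP, then e(G) + 1 ≥ (k+2)(k+1)/2, where e(G) is the number of edges of G. -/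
set_option linter.unusedSectionVars false
set_option maxHeartbeats 1000000

open Matrix

variable {V : Type*} [Fintype V] [DecidableEq V]

/-! ### Auxiliary material -/

private def entryLM (a b : V) : Matrix V V ℝ →ₗ[ℝ] ℝ where
  toFun X := X a b
  map_add' := fun _ _ => rfl
  map_smul' := fun _ _ => rfl

private lemma exists_functional {W : Type*} [AddCommGroup W] [Module ℝ W]
    (p : Submodule ℝ W) (v : W) (hv : v ∉ p) :
    ∃ f : W →ₗ[ℝ] ℝ, (∀ x ∈ p, f x = 0) ∧ f v ≠ 0 := by
  have hq : p.mkQ v ≠ 0 := by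
    simpa [Submodule.mkQ_apply, Submodule.Quotient.mk_eq_zero] using hv
  obtain ⟨g, hg⟩ : ∃ g : Module.Dual ℝ (W ⧸ p), g (p.mkQ v) ≠ 0 := by
    by_contra hcon
    push_neg at hcon
    exact hq ((Module.forall_dual_apply_eq_zero_iff ℝ _).mp hcon)
  refine ⟨g ∘ₗ p.mkQ, fun x hx => ?_, hg⟩
  have : p.mkQ x = 0 := by simpa [Submodule.mkQ_apply, Submodule.Quotient.mk_eq_zero] using hx
  simp [LinearMap.comp_apply, this]

private lemma submodule_eq_top' {W : Type*} [AddCommGroup W] [Module ℝ W]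
    (p : Submodule ℝ W)
    (h : ∀ f : W →ₗ[ℝ] ℝ, (∀ x ∈ p, f x = 0) → f = 0) : p = ⊤ := by
  by_contra hp
  obtain ⟨v, hv⟩ : ∃ v, v ∉ p := by
    by_contra h2; push_neg at h2; exact hp (Submodule.eq_top_iff'.mpr h2)
  obtain ⟨f, hf0, hfv⟩ := exists_functional p v hv
  rw [h f hf0] at hfv
  exact hfv rfl

private lemma sum_ne_eq (i : V) (g : V → ℝ) :
    (∑ l : {j : V // j ≠ i}, g l.val) + g i = ∑ l : V, g l := by
  rw [← Finset.sum_subtype (Finset.univ.erase i) (fun x => by simp [Finset.mem_erase]) g]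
  exact Finset.sum_erase_add _ _ (Finset.mem_univ i)

private lemma mulVec_eq_sum (A : Matrix V V ℝ) (x : V → ℝ) (m : V) :
    A.mulVec x m = ∑ l : V, A m l * x l := rfl

private lemma delRC_mulVec_eq (A : Matrix V V ℝ) (i : V) (y : {j : V // j ≠ i} → ℝ)
    (m : {j : V // j ≠ i}) :
    (delRC A i).mulVec y m = ∑ l : {j : V // j ≠ i}, A m.val l.val * y l := rfl

private lemma mul_vecMulVec (A : Matrix V V ℝ) (x y : V → ℝ) :
    A * vecMulVec x y = vecMulVec (A.mulVec x) y := by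
  ext m p
  simp only [mul_apply, vecMulVec_apply, mulVec, dotProduct]
  rw [Finset.sum_mul]
  exact Finset.sum_congr rfl fun l _ => by ring

private lemma vecMulVec_mulVec' (x y z : V → ℝ) :
    (vecMulVec x y).mulVec z = (y ⬝ᵥ z) • x := by
  ext m
  simp only [mulVec, dotProduct, vecMulVec_apply, Pi.smul_apply, smul_eq_mul]
  rw [Finset.sum_mul]
  exact Finset.sum_congr rfl fun l _ => by ring

private lemma single_decomp {ι : Type*} [Fintype ι] [DecidableEq ι] (d : ι → ℝ) :
    ∑ j, d j • (Pi.single j (1:ℝ) : ι → ℝ) = d := by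
  funext q
  simp only [Finset.sum_apply, Pi.smul_apply, smul_eq_mul, Pi.single_apply,
    mul_ite, mul_one, mul_zero]
  rw [Finset.sum_ite_eq Finset.univ q (fun j => d j)]
  simp

private lemma exists_w (A : Matrix V V ℝ) (i : V) (k : ℕ) (hsym : A.IsSymm)
    (hk : nullity A = k) (hki : nullity (delRC A i) = k) :
    ∃ w : V → ℝ, A.mulVec w = Pi.single i 1 := by
  by_contra hne
  push_neg at hne
  have hnotmem : (Pi.single i 1 : V → ℝ) ∉ LinearMap.range A.mulVecLin := by
    rintro ⟨w, hw⟩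
    exact hne w (by simpa [Matrix.mulVecLin_apply] using hw)
  obtain ⟨f, hf0, hfi⟩ := exists_functional _ _ hnotmem
  set z : V → ℝ := fun j => f (Pi.single j 1) with hz
  have hAz : A.mulVec z = 0 := by
    funext m
    have h1 : A.mulVec z m = f (∑ l : V, A m l • (Pi.single l 1 : V → ℝ)) := by
      rw [map_sum, _root_.mulVec_eq_sum]
      refine Finset.sum_congr rfl fun l _ => ?_
      rw [LinearMap.map_smul, smul_eq_mul]
    have h2 : (∑ l : V, A m l • (Pi.single l 1 : V → ℝ)) = A.mulVec (Pi.single m 1) := by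
      funext p
      simp only [Finset.sum_apply, Pi.smul_apply, smul_eq_mul, _root_.mulVec_eq_sum, Pi.single_apply,
        mul_ite, mul_one, mul_zero]
      rw [Finset.sum_ite_eq Finset.univ p (fun l => A m l),
          Finset.sum_ite_eq' Finset.univ m (fun l => A p l)]
      simp [hsym.apply]
    rw [h1, h2, hf0 _ ⟨Pi.single m 1, by rw [Matrix.mulVecLin_apply]⟩]
    simp
  have hzi : z i ≠ 0 := hfi
  set K := LinearMap.ker A.mulVecLin with hK
  have hzK : z ∈ K := by simp [hK, LinearMap.mem_ker, Matrix.mulVecLin_apply, hAz]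
  set evalK : K →ₗ[ℝ] ℝ := (LinearMap.proj i : ((V → ℝ)) →ₗ[ℝ] ℝ).comp K.subtype with hevalK
  have hrange : LinearMap.range evalK = ⊤ := by
    rw [Submodule.eq_top_iff']
    intro x
    refine ⟨(x / z i) • ⟨z, hzK⟩, ?_⟩
    simp only [hevalK, LinearMap.comp_apply, LinearMap.proj_apply]
    show (x / z i) * z i = x
    field_simp
  have hkerC : ∀ x : V → ℝ, x ∈ K → x i = 0 →
      ∀ m : {j : V // j ≠ i}, (delRC A i).mulVec (fun l => x l.val) m = 0 := by
    intro x hx hxi m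
    rw [delRC_mulVec_eq]
    have h0 : (∑ l : {j : V // j ≠ i}, A m.val l.val * x l.val) + A m.val i * x i
        = ∑ l : V, A m.val l * x l := sum_ne_eq i (fun l => A m.val l * x l)
    have hx0 : A.mulVec x = 0 := by simpa [hK, LinearMap.mem_ker, Matrix.mulVecLin_apply] using hx
    have : (∑ l : V, A m.val l * x l) = 0 := by rw [← _root_.mulVec_eq_sum, hx0]; rfl
    rw [hxi, mul_zero, add_zero] at h0
    rw [h0, this]
  have hextend : ∀ y : {j : V // j ≠ i} → ℝ, (delRC A i).mulVec y = 0 →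
      A.mulVec (fun m => if h : m = i then 0 else y ⟨m, h⟩) = 0 := by
    intro y hy
    set yh : V → ℝ := fun m => if h : m = i then 0 else y ⟨m, h⟩ with hyh
    have hne' : ∀ m : V, m ≠ i → A.mulVec yh m = 0 := by
      intro m hm
      rw [_root_.mulVec_eq_sum]
      have h0 : (∑ l : {j : V // j ≠ i}, A m l.val * yh l.val) + A m i * yh i
          = ∑ l : V, A m l * yh l := sum_ne_eq i (fun l => A m l * yh l)
      have h1 : yh i = 0 := by simp [hyh]
      have h2 : (∑ l : {j : V // j ≠ i}, A m l.val * yh l.val)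
          = (delRC A i).mulVec y ⟨m, hm⟩ := by
        rw [delRC_mulVec_eq]
        exact Finset.sum_congr rfl fun l _ => by simp [hyh, l.2]
      rw [h1, mul_zero, add_zero, h2, hy] at h0
      rw [← h0]; rfl
    have hpair : (∑ m : V, z m * A.mulVec yh m) = ∑ l : V, A.mulVec z l * yh l := by
      simp only [_root_.mulVec_eq_sum, Finset.mul_sum, Finset.sum_mul]
      rw [Finset.sum_comm]
      exact Finset.sum_congr rfl fun l _ => Finset.sum_congr rfl fun m _ => by
        rw [hsym.apply l m]; ring
    have hR : (∑ l : V, A.mulVec z l * yh l) = 0 := by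
      rw [hAz]; simp
    have hL : (∑ m : V, z m * A.mulVec yh m) = z i * A.mulVec yh i := by
      rw [Finset.sum_eq_single i (fun m _ hm => by rw [hne' m hm, mul_zero])
        (fun h => absurd (Finset.mem_univ i) h)]
    have hzero : z i * A.mulVec yh i = 0 := by rw [← hL, hpair, hR]
    have hi0 : A.mulVec yh i = 0 := by
      rcases mul_eq_zero.mp hzero with h | h
      · exact absurd h hzi
      · exact h
    funext m
    by_cases hm : m = i
    · subst hm; exact hi0
    · exact hne' m hm
  have hfe : Module.finrank ℝ (LinearMap.ker evalK) = k := by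
    let e : LinearMap.ker evalK ≃ₗ[ℝ] LinearMap.ker (delRC A i).mulVecLin :=
      { toFun := fun x => ⟨fun l => ((x : K) : V → ℝ) l.val, by
          rw [LinearMap.mem_ker]
          have hxi : ((x : K) : V → ℝ) i = 0 := LinearMap.mem_ker.mp x.2
          funext m
          have := hkerC ((x : K) : V → ℝ) (x : K).2 hxi m
          simpa [Matrix.mulVecLin_apply] using this⟩
        map_add' := fun x y => rfl
        map_smul' := fun c x => rfl
        invFun := fun y => ⟨⟨fun m => if h : m = i then 0 else (y : {j : V // j ≠ i} → ℝ) ⟨m, h⟩, by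
            rw [hK, LinearMap.mem_ker, Matrix.mulVecLin_apply]
            exact hextend _ (by
              have hy2 := LinearMap.mem_ker.mp y.2
              rwa [Matrix.mulVecLin_apply] at hy2)⟩, by
          rw [LinearMap.mem_ker]
          show (if h : i = i then (0:ℝ) else (y : {j : V // j ≠ i} → ℝ) ⟨i, h⟩) = 0
          simp⟩
        left_inv := by
          intro x
          apply Subtype.ext; apply Subtype.ext
          funext m
          by_cases hm : m = i
          · subst hm
            have h0 : (0:ℝ) = ((x : K) : V → ℝ) m := (LinearMap.mem_ker.mp x.2).symm
            simpa using h0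
          · simp [hm]
        right_inv := by
          intro y
          apply Subtype.ext
          funext l
          simp [l.2] }
    rw [e.finrank_eq]
    exact hki
  have hrn := LinearMap.finrank_range_add_finrank_ker evalK
  rw [hrange, hfe] at hrn
  have h1 : Module.finrank ℝ (⊤ : Submodule ℝ ℝ) = 1 := by
    rw [finrank_top]; exact Module.finrank_self ℝ
  rw [h1] at hrn
  have : Module.finrank ℝ K = k := hk
  omega

section UU
variable (A : Matrix V V ℝ) (i : V)

private noncomputable def Usub : Submodule ℝ (V → ℝ) :=
  LinearMap.ker (LinearMap.pi fun m : {m : V // m ≠ i} =>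
    (LinearMap.proj m.val : ((V → ℝ)) →ₗ[ℝ] ℝ) ∘ₗ A.mulVecLin)

private lemma mem_Usub {x : V → ℝ} :
    x ∈ Usub A i ↔ ∀ m, m ≠ i → A.mulVec x m = 0 := by
  rw [Usub, LinearMap.mem_ker]
  constructor
  · intro h m hm
    have := congrFun h ⟨m, hm⟩
    simpa [Matrix.mulVecLin_apply] using this
  · intro h
    funext m
    simpa [Matrix.mulVecLin_apply] using h m.val m.2

private lemma finrank_Usub (k : ℕ) (hk : nullity A = k)
    (w : V → ℝ) (hw : A.mulVec w = Pi.single i 1) :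
    Module.finrank ℝ (Usub A i) = k + 1 := by
  set fU : Usub A i →ₗ[ℝ] ℝ :=
    ((LinearMap.proj i : ((V → ℝ)) →ₗ[ℝ] ℝ) ∘ₗ A.mulVecLin) ∘ₗ (Usub A i).subtype with hfU
  have hwU : w ∈ Usub A i := by
    rw [mem_Usub]
    intro m hm
    rw [hw]
    exact Pi.single_eq_of_ne hm 1
  have hfUw : fU ⟨w, hwU⟩ = 1 := by
    show A.mulVec w i = 1
    rw [hw]; simp
  have hrange : LinearMap.range fU = ⊤ := by
    rw [Submodule.eq_top_iff']
    intro x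
    refine ⟨x • ⟨w, hwU⟩, ?_⟩
    rw [LinearMap.map_smul, hfUw, smul_eq_mul, mul_one]
  have hker : Module.finrank ℝ (LinearMap.ker fU) = k := by
    let e : LinearMap.ker fU ≃ₗ[ℝ] LinearMap.ker A.mulVecLin :=
      { toFun := fun x => ⟨((x : Usub A i) : V → ℝ), by
          rw [LinearMap.mem_ker, Matrix.mulVecLin_apply]
          funext m
          by_cases hm : m = i
          · subst hm
            exact LinearMap.mem_ker.mp x.2
          · exact (mem_Usub A i).mp (x : Usub A i).2 m hm⟩
        map_add' := fun _ _ => rfl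
        map_smul' := fun _ _ => rfl
        invFun := fun x => ⟨⟨(x : V → ℝ), by
            rw [mem_Usub]
            intro m _
            rw [show A.mulVec (x : V → ℝ) = 0 by
              have := LinearMap.mem_ker.mp x.2; rwa [Matrix.mulVecLin_apply] at this]
            rfl⟩, by
          rw [LinearMap.mem_ker]
          show A.mulVec (x : V → ℝ) i = 0
          rw [show A.mulVec (x : V → ℝ) = 0 by
            have := LinearMap.mem_ker.mp x.2; rwa [Matrix.mulVecLin_apply] at this]
          rfl⟩
        left_inv := fun x => by apply Subtype.ext; apply Subtype.ext; rfl
        right_inv := fun x => by apply Subtype.ext; rfl }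
    rw [e.finrank_eq]
    exact hk
  have hrn := LinearMap.finrank_range_add_finrank_ker fU
  rw [hrange, hker] at hrn
  have h1 : Module.finrank ℝ (⊤ : Submodule ℝ ℝ) = 1 := by
    rw [finrank_top]; exact Module.finrank_self ℝ
  rw [h1] at hrn
  omega

end UU

private lemma exists_dual_family {m : ℕ} (u : Fin m → (V → ℝ))
    (hu : LinearIndependent ℝ u) :
    ∃ v : Fin m → (V → ℝ), ∀ p a, v p ⬝ᵥ u a = if p = a then 1 else 0 := by
  set jmap := Fintype.linearCombination ℝ u with hjmap
  have hker : LinearMap.ker jmap = ⊥ := by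
    rw [LinearMap.ker_eq_bot']
    intro c hc
    rw [hjmap, Fintype.linearCombination_apply] at hc
    have := linearIndependent_iff'.mp hu Finset.univ c (by simpa using hc)
    funext a
    exact this a (Finset.mem_univ a)
  obtain ⟨g, hg⟩ := jmap.exists_leftInverse_of_injective hker
  refine ⟨fun p => fun j => g (Pi.single j 1) p, fun p a => ?_⟩
  have h1 : g (u a) = Pi.single a 1 := by
    have h2 := LinearMap.congr_fun hg (Pi.single a 1)
    simp only [LinearMap.comp_apply, LinearMap.id_apply] at h2
    rwa [show jmap (Pi.single a 1) = u a from by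
      rw [hjmap, Fintype.linearCombination_apply_single, one_smul]] at h2
  have hdot : (fun j => g (Pi.single j 1) p) ⬝ᵥ u a
      = (∑ j : V, (u a j) • g (Pi.single j 1)) p := by
    simp only [dotProduct, Finset.sum_apply, Pi.smul_apply, smul_eq_mul]
    exact Finset.sum_congr rfl fun j _ => mul_comm _ _
  have h5 : g (u a) = ∑ j : V, u a j • g (Pi.single j 1) := by
    conv_lhs => rw [← single_decomp (u a)]
    rw [map_sum]
    exact Finset.sum_congr rfl fun j _ => LinearMap.map_smul g _ _
  rw [hdot, ← h5, h1, Pi.single_apply]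

private lemma sum_smul_entry {ι : Type*} [Fintype ι] (c : ι → ℝ)
    (f : ι → Matrix V V ℝ) (j l : V) :
    (∑ s, c s • f s) j l = ∑ s, c s * f s j l := by
  rw [Matrix.sum_apply]
  exact Finset.sum_congr rfl fun s _ => by rw [Matrix.smul_apply, smul_eq_mul]

theorem stmt14 (G : SimpleGraph V) (i : V) (k : ℕ)
    (h : ∃ A : Matrix V V ℝ, InS G A ∧ HasSNIP A i ∧
      nullity A = k ∧ nullity (delRC A i) = k) :
    (k + 2) * (k + 1) / 2 ≤ G.edgeSet.ncard + 1 := by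
  classical
  obtain ⟨A, hGA, hsnip, hk, hki⟩ := h
  obtain ⟨hsym, hadj⟩ := hGA
  obtain ⟨w, hw⟩ := exists_w A i k hsym hk hki
  have hUfin : Module.finrank ℝ (Usub A i) = k + 1 := finrank_Usub A i k hk w hw
  -- basis of U and dual family
  let b : Module.Basis (Fin (k+1)) ℝ (Usub A i) := Module.finBasisOfFinrankEq ℝ _ hUfin
  set u : Fin (k+1) → (V → ℝ) := fun a => ((b a : Usub A i) : V → ℝ) with hudef
  have humem : ∀ a, u a ∈ Usub A i := fun a => (b a).2
  have huU : ∀ a, ∀ mm, mm ≠ i → A.mulVec (u a) mm = 0 :=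
    fun a => (mem_Usub A i).mp (humem a)
  have huli : LinearIndependent ℝ u :=
    b.linearIndependent.map' (Usub A i).subtype (Submodule.ker_subtype _)
  obtain ⟨v, hv⟩ := exists_dual_family u huli
  -- the set Z of relevant zero-diagonal vertices
  set Zs : Set V := {j | j ≠ i ∧ A j j = 0 ∧ ∃ x ∈ Usub A i, x j ≠ 0} with hZsdef
  haveI : Fintype ↥Zs := (Set.toFinite Zs).fintype
  haveI : Fintype ↥G.edgeSet := (Set.toFinite G.edgeSet).fintype
  -- the family of symmetric rank-two matrices
  set Mm : Sym2 (Fin (k+1)) → Matrix V V ℝ :=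
    Sym2.lift ⟨fun a b' => vecMulVec (u a) (u b') + vecMulVec (u b') (u a),
      fun a b' => add_comm _ _⟩ with hMmdef
  set lin1 : (Sym2 (Fin (k+1)) → ℝ) →ₗ[ℝ] Matrix V V ℝ :=
    Fintype.linearCombination ℝ Mm with hlin1def
  have hlin1app : ∀ c, lin1 c = ∑ s, c s • Mm s := fun c => by
    rw [hlin1def, Fintype.linearCombination_apply]
  have hentry : ∀ c j l, lin1 c j l = ∑ s, c s * Mm s j l := by
    intro c j l
    rw [hlin1app, sum_smul_entry]
  have hMsymE : ∀ s (j l : V), Mm s j l = Mm s l j := by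
    intro s
    induction s using Sym2.ind with
    | _ a b' =>
      intro j l
      rw [hMmdef]
      simp only [Sym2.lift_mk, Matrix.add_apply, vecMulVec_apply]
      ring
  have hXsymE : ∀ c (j l : V), lin1 c j l = lin1 c l j := by
    intro c j l
    rw [hentry, hentry]
    exact Finset.sum_congr rfl fun s _ => by rw [hMsymE]
  have hXsymm : ∀ c, (lin1 c).IsSymm := by
    intro c
    ext j l
    rw [Matrix.transpose_apply]
    exact hXsymE c l j
  have hMU : ∀ s (p jm : V), jm ≠ i → (A * Mm s) jm p = 0 := by
    intro s
    induction s using Sym2.ind with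
    | _ a b' =>
      intro p jm hjm
      rw [hMmdef]
      simp only [Sym2.lift_mk]
      rw [Matrix.mul_add, _root_.mul_vecMulVec, _root_.mul_vecMulVec]
      simp only [Matrix.add_apply, vecMulVec_apply]
      rw [huU a jm hjm, huU b' jm hjm]
      ring
  have hXU : ∀ c (p jm : V), jm ≠ i → (A * lin1 c) jm p = 0 := by
    intro c p jm hjm
    rw [hlin1app, Matrix.mul_sum]
    rw [show (∑ s, A * (c s • Mm s)) = ∑ s, c s • (A * Mm s) from
      Finset.sum_congr rfl fun s _ => Matrix.mul_smul A (c s) (Mm s)]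
    rw [sum_smul_entry]
    exact Finset.sum_eq_zero fun s _ => by rw [hMU s p jm hjm, mul_zero]
  -- the edge evaluation map
  set edgeL : Matrix V V ℝ →ₗ[ℝ] (↥G.edgeSet → ℝ) :=
    LinearMap.pi (fun s => entryLM (Quot.out (s : Sym2 V)).1 (Quot.out (s : Sym2 V)).2)
    with hedgeLdef
  have hedgeapp : ∀ (X : Matrix V V ℝ), X.IsSymm → ∀ (a b' : V) (hab : s(a,b') ∈ G.edgeSet),
      edgeL X ⟨s(a,b'), hab⟩ = X a b' := by
    intro X hXs a b' hab
    have h0 : edgeL X ⟨s(a,b'), hab⟩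
        = X (Quot.out (s(a,b') : Sym2 V)).1 (Quot.out (s(a,b') : Sym2 V)).2 := rfl
    have h1 : s((Quot.out (s(a,b') : Sym2 V)).1, (Quot.out (s(a,b') : Sym2 V)).2) = s(a,b') := by
      show Quot.mk _ (Quot.out (s(a,b') : Sym2 V)) = _
      exact Quot.out_eq _
    rcases Sym2.eq_iff.mp h1 with ⟨h2, h3⟩ | ⟨h2, h3⟩
    · rw [h0, h2, h3]
    · rw [h0, h2, h3]
      exact hXs.apply a b'
  -- the map LZ
  set LZ : (↥G.edgeSet → ℝ) →ₗ[ℝ] (↥Zs → ℝ) :=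
    LinearMap.pi (fun j : ↥Zs => ∑ l : V,
      if hl : G.Adj j.val l then (A j.val l) •
        (LinearMap.proj (⟨s(j.val,l), G.mem_edgeSet.mpr hl⟩ : ↥G.edgeSet)
          : (↥G.edgeSet → ℝ) →ₗ[ℝ] ℝ)
      else 0) with hLZdef
  have hLZapp : ∀ (ρ : ↥G.edgeSet → ℝ) (j : ↥Zs), LZ ρ j = ∑ l : V,
      if hl : G.Adj j.val l then A j.val l * ρ ⟨s(j.val,l), G.mem_edgeSet.mpr hl⟩ else 0 := by
    intro ρ j
    rw [hLZdef]
    rw [LinearMap.pi_apply, LinearMap.sum_apply]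
    refine Finset.sum_congr rfl fun l _ => ?_
    by_cases hl : G.Adj j.val l
    · rw [dif_pos hl, dif_pos hl]
      rfl
    · rw [dif_neg hl, dif_neg hl]
      rfl
  have hA0 : ∀ (a b' : V), a ≠ b' → ¬ G.Adj a b' → A a b' = 0 := by
    intro a b' hne hnadj
    by_contra hAne
    exact hnadj ((hadj a b' hne).mp hAne)
  have hLZedge : ∀ c (j : ↥Zs), LZ (edgeL (lin1 c)) j = 0 := by
    intro c j
    obtain ⟨hji, hjd, -⟩ := j.2
    rw [hLZapp]
    have hstep : ∀ l : V, (if hl : G.Adj j.val l then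
        A j.val l * (edgeL (lin1 c)) ⟨s(j.val,l), G.mem_edgeSet.mpr hl⟩ else 0)
        = A j.val l * lin1 c j.val l := by
      intro l
      by_cases hl : G.Adj j.val l
      · rw [dif_pos hl, hedgeapp _ (hXsymm c)]
      · rw [dif_neg hl]
        by_cases hlj : j.val = l
        · rw [← hlj, hjd, zero_mul]
        · rw [hA0 j.val l hlj hl, zero_mul]
    rw [Finset.sum_congr rfl (fun l _ => hstep l)]
    rw [show (∑ l, A j.val l * lin1 c j.val l) = (A * lin1 c) j.val j.val from by
      rw [Matrix.mul_apply]
      exact Finset.sum_congr rfl fun l _ => by rw [hXsymE c j.val l]]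
    exact hXU c j.val j.val hji
  -- surjectivity of LZ
  have hsurj : LinearMap.range LZ = ⊤ := by
    apply submodule_eq_top'
    intro ψ hψ0
    set cz : ↥Zs → ℝ := fun j => ψ (Pi.single j 1) with hczdef
    have hψd : ∀ d : ↥Zs → ℝ, ψ d = ∑ j, d j * cz j := by
      intro d
      conv_lhs => rw [← single_decomp d]
      rw [map_sum]
      exact Finset.sum_congr rfl fun j _ => by
        rw [LinearMap.map_smul, smul_eq_mul]
    set ct : V → ℝ := fun a => if h : a ∈ Zs then cz ⟨a, h⟩ else 0 with hctdef
    have hctZ : ∀ a : V, ct a ≠ 0 → a ∈ Zs := by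
      intro a ha
      by_contra h
      exact ha (by rw [hctdef]; exact dif_neg h)
    have hrel : ∀ a b' : V, G.Adj a b' → ct a + ct b' = 0 := by
      intro a b' hab
      have hne' : a ≠ b' := hab.ne
      have hAab : A a b' ≠ 0 := (hadj a b' hne').mpr hab
      set ρ : ↥G.edgeSet → ℝ :=
        Pi.single (⟨s(a,b'), G.mem_edgeSet.mpr hab⟩ : ↥G.edgeSet) 1 with hρdef
      have h0 : ψ (LZ ρ) = 0 := hψ0 _ ⟨ρ, rfl⟩
      have hLZρ : ∀ j : ↥Zs, LZ ρ j
          = (if j.val = a then A a b' else 0) + (if j.val = b' then A b' a else 0) := by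
        intro j
        rw [hLZapp]
        have hterm : ∀ l : V, (if hl : G.Adj j.val l then
            A j.val l * ρ ⟨s(j.val,l), G.mem_edgeSet.mpr hl⟩ else 0)
            = (if j.val = a ∧ l = b' then A a b' else 0)
              + (if j.val = b' ∧ l = a then A b' a else 0) := by
          intro l
          by_cases hl : G.Adj j.val l
          · rw [dif_pos hl, hρdef, Pi.single_apply]
            by_cases h1 : (⟨s(j.val,l), G.mem_edgeSet.mpr hl⟩ : ↥G.edgeSet)
                = ⟨s(a,b'), G.mem_edgeSet.mpr hab⟩
            · rw [if_pos h1, mul_one]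
              rcases Sym2.eq_iff.mp (Subtype.ext_iff.mp h1) with ⟨h2, h3⟩ | ⟨h2, h3⟩
              · rw [if_pos ⟨h2, h3⟩, if_neg, add_zero, h2, h3]
                rintro ⟨h4, h5⟩
                exact hne' (h2.symm.trans h4)
              · rw [if_neg, if_pos ⟨h2, h3⟩, zero_add, h2, h3]
                rintro ⟨h4, h5⟩
                exact hne' (h4.symm.trans h2)
            · rw [if_neg h1, mul_zero]
              rw [if_neg, if_neg, add_zero]
              · rintro ⟨h4, h5⟩
                refine h1 (Subtype.ext ?_)
                show s(j.val, l) = s(a, b')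
                rw [h4, h5]
                exact Sym2.eq_swap
              · rintro ⟨h4, h5⟩
                refine h1 (Subtype.ext ?_)
                show s(j.val, l) = s(a, b')
                rw [h4, h5]
          · rw [dif_neg hl]
            rw [if_neg, if_neg, add_zero]
            · rintro ⟨h4, h5⟩
              rw [h4, h5] at hl
              exact hl hab.symm
            · rintro ⟨h4, h5⟩
              rw [h4, h5] at hl
              exact hl hab
        rw [Finset.sum_congr rfl (fun l _ => hterm l), Finset.sum_add_distrib]
        congr 1
        · by_cases hj : j.val = a
          · simp [hj]
          · simp [hj]
        · by_cases hj : j.val = b'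
          · simp [hj]
          · simp [hj]
      have hone : ∀ (a0 : V) (r : ℝ), (∑ j : ↥Zs, (if j.val = a0 then r else 0) * cz j)
          = r * ct a0 := by
        intro a0 r
        by_cases ha0 : a0 ∈ Zs
        · rw [Finset.sum_eq_single (⟨a0, ha0⟩ : ↥Zs)]
          · rw [if_pos rfl, hctdef]
            simp only [dif_pos ha0]
          · intro j _ hj
            rw [if_neg (fun hh => hj (Subtype.ext hh)), zero_mul]
          · intro habs
            exact absurd (Finset.mem_univ _) habs
        · rw [hctdef]
          simp only [dif_neg ha0, mul_zero]
          apply Finset.sum_eq_zero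
          intro j _
          rw [if_neg (fun hh => ha0 (by rw [← hh]; exact j.2)), zero_mul]
      have h5 : ψ (LZ ρ) = A a b' * ct a + A b' a * ct b' := by
        rw [hψd]
        rw [Finset.sum_congr rfl (fun j _ => by rw [hLZρ j, add_mul])]
        rw [Finset.sum_add_distrib, hone a (A a b'), hone b' (A b' a)]
      rw [h5] at h0
      rw [hsym.apply a b'] at h0
      have h6 : A a b' * (ct a + ct b') = 0 := by rw [mul_add]; linarith
      rcases mul_eq_zero.mp h6 with h7 | h7
      · exact absurd h7 hAab
      · exact h7
    -- conclude cz = 0 using SNIP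
    have hcz0 : ∀ j : ↥Zs, cz j = 0 := by
      by_contra hcne
      push_neg at hcne
      obtain ⟨j₀, hj₀⟩ := hcne
      set S : Set V := {a | ct a ≠ 0} with hSdef
      have hSsub : ∀ a ∈ S, a ∈ Zs := fun a ha => hctZ a ha
      have hj₀S : j₀.val ∈ S := by
        show ct j₀.val ≠ 0
        have hcteq : ct j₀.val = cz j₀ := by
          show (if h : j₀.val ∈ Zs then cz ⟨j₀.val, h⟩ else 0) = cz j₀
          rw [dif_pos j₀.2]
        rw [hcteq]
        exact hj₀
      have hclosed : ∀ a b' : V, a ∈ S → G.Adj a b' → b' ∈ S := by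
        intro a b' ha hab
        have := hrel a b' hab
        show ct b' ≠ 0
        intro h0
        rw [h0, add_zero] at this
        exact ha this
      have hiS : i ∉ S := fun hi => (hSsub i hi).1 rfl
      have htr : ∀ (x : V → ℝ), (∀ mm, mm ≠ i → A.mulVec x mm = 0) →
          A.mulVec (fun a => if a ∈ S then x a else 0) = 0 := by
        intro x hx
        funext mm
        rw [_root_.mulVec_eq_sum]
        by_cases hmm : mm ∈ S
        · have hterm : ∀ l : V, A mm l * (if l ∈ S then x l else 0) = A mm l * x l := by
            intro l
            by_cases hlS : l ∈ S
            · rw [if_pos hlS]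
            · rw [if_neg hlS, mul_zero]
              have hA00 : A mm l = 0 := by
                by_cases hml : mm = l
                · rw [← hml]
                  exact (hSsub mm hmm).2.1
                · by_contra hA
                  exact hlS (hclosed mm l hmm ((hadj mm l hml).mp hA))
              rw [hA00, zero_mul]
          rw [Finset.sum_congr rfl fun l _ => hterm l, ← _root_.mulVec_eq_sum]
          exact hx mm (fun hh => hiS (hh ▸ hmm))
        · apply Finset.sum_eq_zero
          intro l _
          by_cases hlS : l ∈ S
          · have hA00 : A mm l = 0 := by
              by_cases hml : mm = l
              · rw [hml] at hmm
                exact absurd hlS hmm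
              · by_contra hA
                exact hmm (hclosed l mm hlS ((hadj mm l hml).mp hA).symm)
            rw [hA00, zero_mul]
          · rw [if_neg hlS, mul_zero]
      obtain ⟨u₀, hu₀U, hu₀j⟩ := (hSsub j₀.val hj₀S).2.2
      set xS : V → ℝ := fun a => if a ∈ S then u₀ a else 0 with hxSdef
      have hAxS : A.mulVec xS = 0 := htr u₀ ((mem_Usub A i).mp hu₀U)
      set tS : V → ℝ := fun a => if a ∈ S then w a else 0 with htSdef
      have hAtS : A.mulVec tS = 0 := htr w (fun mm hmm => by
        rw [hw]; exact Pi.single_eq_of_ne hmm 1)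
      set wS : V → ℝ := w - tS with hwSdef
      have hAwS : A.mulVec wS = Pi.single i 1 := by
        rw [hwSdef, Matrix.mulVec_sub, hAtS, hw, sub_zero]
      have hwS0 : ∀ a ∈ S, wS a = 0 := by
        intro a ha
        rw [hwSdef]
        show w a - tS a = 0
        rw [htSdef]
        simp only [if_pos ha, sub_self]
      have hxS0 : ∀ (a : V), a ∉ S → xS a = 0 := by
        intro a ha
        rw [hxSdef]
        simp only [if_neg ha]
      set X : Matrix V V ℝ := vecMulVec xS wS + vecMulVec wS xS with hXdef
      have hXent : ∀ j l : V, X j l = xS j * wS l + wS j * xS l := by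
        intro j l
        rw [hXdef]
        simp [vecMulVec_apply]
      have hXzero : ∀ j l : V, (j ∈ S ∧ l ∈ S) ∨ (j ∉ S ∧ l ∉ S) → X j l = 0 := by
        rintro j l (⟨hj, hl⟩ | ⟨hj, hl⟩)
        · rw [hXent, hwS0 j hj, hwS0 l hl, mul_zero, zero_mul, add_zero]
        · rw [hXent, hxS0 j hj, hxS0 l hl, mul_zero, zero_mul, add_zero]
      have hXdiag : ∀ j, X j j = 0 := by
        intro j
        by_cases hj : j ∈ S
        · exact hXzero j j (Or.inl ⟨hj, hj⟩)
        · exact hXzero j j (Or.inr ⟨hj, hj⟩)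
      have hXsupp : ∀ j l : V, A j l * X j l = 0 := by
        intro j l
        by_cases hj : j ∈ S <;> by_cases hl : l ∈ S
        · rw [hXzero j l (Or.inl ⟨hj, hl⟩), mul_zero]
        · have hjl : j ≠ l := fun hh => hl (hh ▸ hj)
          have : ¬ G.Adj j l := fun hadj' => hl (hclosed j l hj hadj')
          rw [hA0 j l hjl this, zero_mul]
        · have hjl : j ≠ l := fun hh => hj (hh ▸ hl)
          have : ¬ G.Adj j l := fun hadj' => hj (hclosed l j hl hadj'.symm)
          rw [hA0 j l hjl this, zero_mul]
        · rw [hXzero j l (Or.inr ⟨hj, hl⟩), mul_zero]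
      have hXrows : ∀ j l : V, j ≠ i → (A * X) j l = 0 := by
        intro j l hj
        rw [hXdef, Matrix.mul_add, _root_.mul_vecMulVec, _root_.mul_vecMulVec]
        simp only [Matrix.add_apply, vecMulVec_apply]
        rw [hAxS, hAwS]
        simp [Pi.single_eq_of_ne hj]
      have hXsymm2 : X.IsSymm := by
        ext j l
        rw [Matrix.transpose_apply, hXent, hXent]
        ring
      have hX0 : X = 0 := hsnip X hXsymm2 hXsupp hXdiag hXrows
      have hwSne : wS ≠ 0 := by
        intro h0
        rw [h0] at hAwS
        have := congrFun hAwS i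
        rw [Matrix.mulVec_zero] at this
        simp at this
      obtain ⟨m₀, hm₀⟩ := Function.ne_iff.mp hwSne
      have hm₀S : m₀ ∉ S := fun hh => hm₀ (by rw [hwS0 m₀ hh]; rfl)
      have : X j₀.val m₀ = u₀ j₀.val * wS m₀ := by
        rw [hXent, hwS0 j₀.val hj₀S, hxS0 m₀ hm₀S, zero_mul, add_zero]
        have hxj : xS j₀.val = u₀ j₀.val := by
          show (if j₀.val ∈ S then u₀ j₀.val else 0) = u₀ j₀.val
          rw [if_pos hj₀S]
        rw [hxj]
      rw [hX0] at this
      have h9 : u₀ j₀.val * wS m₀ = 0 := by rw [← this]; rfl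
      rcases mul_eq_zero.mp h9 with h10 | h10
      · exact hu₀j h10
      · exact hm₀ (by rw [h10]; rfl)
    apply LinearMap.ext
    intro d
    rw [hψd]
    rw [LinearMap.zero_apply]
    exact Finset.sum_eq_zero fun j _ => by rw [hcz0 j, mul_zero]
  -- a right inverse of LZ
  obtain ⟨R, hR⟩ := LZ.exists_rightInverse_of_surjective hsurj
  set diagZ : Matrix V V ℝ →ₗ[ℝ] (↥Zs → ℝ) :=
    LinearMap.pi (fun j : ↥Zs => entryLM j.val j.val) with hdiagZdef
  set Φ : ((Sym2 (Fin (k+1)) → ℝ) × (↥Zs → ℝ)) →ₗ[ℝ]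
      ((↥G.edgeSet → ℝ) × ((↥Zs → ℝ) × ℝ)) :=
    LinearMap.prod
      ((edgeL ∘ₗ lin1 ∘ₗ LinearMap.fst ℝ _ _) + (R ∘ₗ LinearMap.snd ℝ _ _))
      (LinearMap.prod (diagZ ∘ₗ lin1 ∘ₗ LinearMap.fst ℝ _ _)
        ((entryLM i i) ∘ₗ lin1 ∘ₗ LinearMap.fst ℝ _ _)) with hΦdef
  have hinj : Function.Injective Φ := by
    rw [← LinearMap.ker_eq_bot]
    rw [Submodule.eq_bot_iff]
    rintro ⟨c, t⟩ hct
    rw [LinearMap.mem_ker, hΦdef] at hct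
    simp only [LinearMap.prod_apply, Function.prod, LinearMap.add_apply, LinearMap.comp_apply,
      LinearMap.fst_apply, LinearMap.snd_apply, Prod.mk_eq_zero] at hct
    obtain ⟨h1, h2, h3⟩ := hct
    have ht : t = 0 := by
      have h4 := congrArg LZ h1
      rw [map_add, map_zero] at h4
      have h5 : LZ (edgeL (lin1 c)) = 0 := funext (hLZedge c)
      have h6 : LZ (R t) = t := by
        have := LinearMap.congr_fun hR t
        simpa using this
      rw [h5, h6, zero_add] at h4
      exact h4
    have hedge0 : edgeL (lin1 c) = 0 := by
      rw [ht, map_zero, add_zero] at h1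
      exact h1
    have hXe : ∀ a b', G.Adj a b' → lin1 c a b' = 0 := by
      intro a b' hab
      have h7 := congrFun hedge0 ⟨s(a,b'), G.mem_edgeSet.mpr hab⟩
      rw [hedgeapp _ (hXsymm c) a b' _] at h7
      simpa using h7
    have hXd : ∀ j, lin1 c j j = 0 := by
      intro j
      by_cases hji : j = i
      · rw [hji]
        exact h3
      · by_cases hjd : A j j = 0
        · by_cases hjex : ∃ x ∈ Usub A i, x j ≠ 0
          · have hjZ : j ∈ Zs := ⟨hji, hjd, hjex⟩
            have h8 := congrFun h2 ⟨j, hjZ⟩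
            exact h8
          · push_neg at hjex
            have hcol : (fun p => lin1 c p j) ∈ Usub A i := by
              rw [mem_Usub]
              intro mm hmm
              have h9 : A.mulVec (fun p => lin1 c p j) mm = (A * lin1 c) mm j := by
                rw [_root_.mulVec_eq_sum, Matrix.mul_apply]
              rw [h9]
              exact hXU c j mm hmm
            exact hjex (fun p => lin1 c p j) hcol
        · have h7 : (A * lin1 c) j j = 0 := hXU c j j hji
          rw [Matrix.mul_apply] at h7
          have h8 : ∀ l ∈ Finset.univ, l ≠ j → A j l * lin1 c l j = 0 := by
            intro l _ hlj
            by_cases hadj' : G.Adj j l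
            · rw [show lin1 c l j = lin1 c j l from hXsymE c l j, hXe j l hadj', mul_zero]
            · rw [hA0 j l (fun hh => hlj hh.symm) hadj', zero_mul]
          rw [Finset.sum_eq_single j h8 (fun habs => absurd (Finset.mem_univ j) habs)] at h7
          exact (mul_eq_zero.mp h7).resolve_left hjd
    have hAXc : ∀ a b', A a b' * lin1 c a b' = 0 := by
      intro a b'
      by_cases hab' : a = b'
      · rw [hab', hXd b', mul_zero]
      · by_cases hadj' : G.Adj a b'
        · rw [hXe a b' hadj', mul_zero]
        · rw [hA0 a b' hab' hadj', zero_mul]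
    have hlc0 : lin1 c = 0 :=
      hsnip (lin1 c) (hXsymm c) hAXc hXd (fun j l hj => hXU c l j hj)
    have hc0 : c = 0 := by
      funext s
      induction s using Sym2.ind with
      | _ p q =>
      show c s(p,q) = 0
      set Bf : Matrix V V ℝ →ₗ[ℝ] ℝ :=
        { toFun := fun X => v p ⬝ᵥ X.mulVec (v q)
          map_add' := fun X Y => by
            simp only [Matrix.add_mulVec, dotProduct_add]
          map_smul' := fun r X => by
            simp only [Matrix.smul_mulVec, dotProduct_smul, RingHom.id_apply,
              smul_eq_mul] } with hBfdef
    -- value of Bf on the basic matrices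
      have hMval : ∀ a b' : Fin (k+1), Bf (Mm s(a,b'))
          = (if q = b' then 1 else 0) * (if p = a then 1 else 0)
            + (if q = a then 1 else 0) * (if p = b' then 1 else 0) := by
        intro a b'
        show v p ⬝ᵥ (Mm s(a,b')).mulVec (v q)
          = (if q = b' then 1 else 0) * (if p = a then 1 else 0)
            + (if q = a then 1 else 0) * (if p = b' then 1 else 0)
        rw [hMmdef]
        simp only [Sym2.lift_mk]
        rw [Matrix.add_mulVec, vecMulVec_mulVec', vecMulVec_mulVec', dotProduct_add,
          dotProduct_smul, dotProduct_smul, smul_eq_mul, smul_eq_mul,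
          dotProduct_comm (u b') (v q), dotProduct_comm (u a) (v q), hv q b', hv q a,
          hv p a, hv p b']
      have hBsum : (0:ℝ) = ∑ s', c s' * Bf (Mm s') := by
        have h9 : Bf (lin1 c) = 0 := by
          rw [hlc0]
          show v p ⬝ᵥ (0 : Matrix V V ℝ).mulVec (v q) = 0
          rw [Matrix.zero_mulVec, dotProduct_zero]
        rw [← h9, hlin1app, map_sum]
        exact Finset.sum_congr rfl fun s' _ => by rw [LinearMap.map_smul, smul_eq_mul]
      have hother : ∀ s' : Sym2 (Fin (k+1)), s' ≠ s(p,q) → c s' * Bf (Mm s') = 0 := by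
        intro s'
        induction s' using Sym2.ind with
        | _ a b'' =>
        intro hne''
        have hBf0 : Bf (Mm s(a,b'')) = 0 := by
          rw [hMval a b'']
          by_cases hpa : p = a
          · by_cases hqb : q = b''
            · exact absurd (by rw [← hpa, ← hqb]) hne''
            · by_cases hqa : q = a
              · by_cases hpb : p = b''
                · exact absurd (hqa.trans (hpa.symm.trans hpb)) hqb
                · rw [if_neg hqb, if_neg hpb]; ring
              · rw [if_neg hqb, if_neg hqa]; ring
          · by_cases hqa : q = a
            · by_cases hpb : p = b''
              · exact absurd (by rw [← hqa, ← hpb]; exact Sym2.eq_swap) hne''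
              · rw [if_neg hpa, if_neg hpb]; ring
            · rw [if_neg hpa, if_neg hqa]; ring
        rw [hBf0, mul_zero]
      rw [Finset.sum_eq_single s(p,q) (fun s' _ hs' => hother s' hs')
        (fun habs => absurd (Finset.mem_univ _) habs)] at hBsum
      have hval2 : Bf (Mm s(p,q)) = 1 + (if p = q then 1 else 0) := by
        rw [hMval p q]
        by_cases hpq : p = q
        · rw [if_pos rfl, if_pos rfl, if_pos hpq.symm, if_pos hpq]
          ring
        · rw [if_pos rfl, if_pos rfl, if_neg (Ne.symm hpq), if_neg hpq]
          ring
      rw [hval2] at hBsum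
      by_cases hpq : p = q
      · rw [if_pos hpq] at hBsum
        linarith
      · rw [if_neg hpq] at hBsum
        linarith
    rw [Prod.mk_eq_zero]
    exact ⟨hc0, ht⟩
  -- dimension count
  have hcard := LinearMap.finrank_le_finrank_of_injective hinj
  have hdom : Module.finrank ℝ ((Sym2 (Fin (k+1)) → ℝ) × (↥Zs → ℝ))
      = Fintype.card (Sym2 (Fin (k+1))) + Fintype.card ↥Zs := by
    rw [Module.finrank_prod, Module.finrank_pi, Module.finrank_pi]
  have hcod : Module.finrank ℝ ((↥G.edgeSet → ℝ) × ((↥Zs → ℝ) × ℝ))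
      = Fintype.card ↥G.edgeSet + (Fintype.card ↥Zs + 1) := by
    rw [Module.finrank_prod, Module.finrank_prod, Module.finrank_pi, Module.finrank_pi,
      Module.finrank_self]
  rw [hdom, hcod] at hcard
  have hsym2 : Fintype.card (Sym2 (Fin (k+1))) = (k+2) * (k+1) / 2 := by
    rw [Sym2.card, Fintype.card_fin, Nat.choose_two_right]
    norm_num
  have hecard : Fintype.card ↥G.edgeSet = G.edgeSet.ncard := by
    rw [← Nat.card_eq_fintype_card, Nat.card_coe_set_eq]
  rw [hsym2, hecard] at hcard
  omega
end
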